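/- arXiv:1712.04425 — 5 statements merged into one kernel-verified Lean document; each statement's English description precedes it below -/
import Mathlib

section
/- Let {a_n} be a sequence of positive real numbers such that the logarithmic differences Δ log a_n = log a_{n+1} - log a_n satisfy Δ log a_n → ∞ as n → ∞ and Δ log a_{n+1} = Δ log a_n + O(1/n) as n → ∞. Then for every integer k ≥ 2, the sequence {a_n} is not locally Benford distributed of order k. -/
open Filter

/-- `x` has leading digit `d` in base 10: `d·10^k ≤ x < (d+1)·10^k` for some integer `k`. -/
def HasLeadingDigit (x : ℝ) (d : ℕ) : Prop :=
  ∃ k : ℤ, (d : ℝ) * 10 ^ k ≤ x ∧ x < ((d : ℝ) + 1) * 10 ^ k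

/-- The Benford frequency `P(d) = log₁₀ (1 + 1/d)` of digit `d`. -/
noncomputable def benfordP (d : ℕ) : ℝ := Real.logb 10 (1 + 1 / (d : ℝ))

/-- A sequence is Benford distributed if for each digit `d ∈ {1,…,9}` the density of
indices `n` with `D(a_n) = d` equals `P(d)`. -/
def BenfordDistributed (a : ℕ → ℝ) : Prop :=
  ∀ d : ℕ, 1 ≤ d → d ≤ 9 →
    Tendsto
      (fun N : ℕ =>
        (Nat.card {n : ℕ | 1 ≤ n ∧ n ≤ N ∧ HasLeadingDigit (a n) d} : ℝ) / N)
      atTop (nhds (benfordP d))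

/-- A sequence is locally Benford distributed of order `k` if every `k`-tuple of digits
in `{1,…,9}` occurs among leading digits of `k` consecutive terms with density
`P(d₀)⋯P(d_{k-1})`. -/
def LocallyBenfordDistributed (a : ℕ → ℝ) (k : ℕ) : Prop :=
  ∀ d : Fin k → ℕ, (∀ i, 1 ≤ d i ∧ d i ≤ 9) →
    Tendsto
      (fun N : ℕ =>
        (Nat.card {n : ℕ | 1 ≤ n ∧ n ≤ N ∧
            ∀ i : Fin k, HasLeadingDigit (a (n + (i : ℕ))) (d i)} : ℝ) / N)
      atTop (nhds (∏ i : Fin k, benfordP (d i)))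

/-- `waitingTime a d i` is the waiting time `w_i(d) = n_{i+1}^{(d)} - n_i^{(d)}`, where
`n_1^{(d)} < n_2^{(d)} < ⋯` enumerates `{n ∈ ℕ, n ≥ 1 : D(a_n) = d}`
(the `j`-th element of this set, 1-indexed, being `Nat.nth · (j-1)`). -/
noncomputable def waitingTime (a : ℕ → ℝ) (d : ℕ) (i : ℕ) : ℕ :=
  Nat.nth (fun n => 1 ≤ n ∧ HasLeadingDigit (a n) d) i -
    Nat.nth (fun n => 1 ≤ n ∧ HasLeadingDigit (a n) d) (i - 1)

/-- A sequence has Benford distributed waiting times if for each digit `d ∈ {1,…,9}`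
the waiting times between occurrences of leading digit `d` take value `k` with density
`P(d)(1-P(d))^{k-1}`. -/
def BenfordWaitingTimes (a : ℕ → ℝ) : Prop :=
  ∀ d : ℕ, 1 ≤ d → d ≤ 9 → ∀ k : ℕ, 1 ≤ k →
    Tendsto
      (fun N : ℕ =>
        (Nat.card {i : ℕ | 1 ≤ i ∧ i ≤ N ∧ waitingTime a d i = k} : ℝ) / N)
      atTop (nhds (benfordP d * (1 - benfordP d) ^ (k - 1)))

/-- A sequence `u` of real numbers is uniformly distributed modulo 1. -/
def UniformlyDistributedMod1 (u : ℕ → ℝ) : Prop :=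
  ∀ t : ℝ, 0 ≤ t → t ≤ 1 →
    Tendsto
      (fun N : ℕ =>
        (Nat.card {n : ℕ | 1 ≤ n ∧ n ≤ N ∧ Int.fract (u n) ≤ t} : ℝ) / N)
      atTop (nhds t)

/-- `nthPrime n` is the `n`-th prime (1-indexed): `nthPrime 1 = 2`, `nthPrime 2 = 3`, … -/
noncomputable def nthPrime (n : ℕ) : ℕ := Nat.nth Nat.Prime (n - 1)

/- ----------------------------------------------------------------
   Auxiliary lemmas
----------------------------------------------------------------- -/

lemma logb_two_pos : (0:ℝ) < Real.logb 10 2 := Real.logb_pos (by norm_num) (by norm_num)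

lemma logb_two_lt_third : Real.logb 10 2 < 1/3 := by
  have h10 : (0:ℝ) < Real.log 10 := Real.log_pos (by norm_num)
  have h8 : Real.log 8 < Real.log 10 := Real.log_lt_log (by norm_num) (by norm_num)
  have h83 : Real.log 8 = 3 * Real.log 2 := by
    rw [show (8:ℝ) = 2^(3:ℕ) by norm_num, Real.log_pow]; push_cast; ring
  rw [Real.logb, div_lt_iff₀ h10]
  linarith

/-- From the leading digit of a positive real we get the position of the fractional part
of its base-10 logarithm. -/
lemma fract_logb_of_hasLeadingDigit {x : ℝ} (hx : 0 < x) {d : ℕ} (hd1 : 1 ≤ d) (hd9 : d ≤ 9)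
    (h : HasLeadingDigit x d) :
    Real.logb 10 d ≤ Int.fract (Real.logb 10 x) ∧
      Int.fract (Real.logb 10 x) < Real.logb 10 ((d:ℝ) + 1) := by
  obtain ⟨K, h1, h2⟩ := h
  have h10 : (0:ℝ) < (10:ℝ)^K := zpow_pos (by norm_num) K
  have hdpos : (0:ℝ) < (d:ℝ) := by exact_mod_cast Nat.pos_of_ne_zero (by omega)
  have hzp : Real.logb 10 ((10:ℝ)^K) = K := by
    rw [← Real.rpow_intCast, Real.logb_rpow (by norm_num) (by norm_num)]
  have hlow : Real.logb 10 d + K ≤ Real.logb 10 x := by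
    calc Real.logb 10 d + (K:ℝ) = Real.logb 10 ((d:ℝ) * 10^K) := by
          rw [Real.logb_mul hdpos.ne' h10.ne', hzp]
      _ ≤ Real.logb 10 x := Real.logb_le_logb_of_le (by norm_num) (by positivity) h1
  have hup : Real.logb 10 x < Real.logb 10 ((d:ℝ)+1) + K := by
    calc Real.logb 10 x < Real.logb 10 (((d:ℝ)+1) * 10^K) :=
          Real.logb_lt_logb (by norm_num) hx h2
      _ = Real.logb 10 ((d:ℝ)+1) + K := by
          rw [Real.logb_mul (by positivity) h10.ne', hzp]
  have hd0 : 0 ≤ Real.logb 10 (d:ℝ) := Real.logb_nonneg (by norm_num) (by exact_mod_cast hd1)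
  have hd10 : Real.logb 10 ((d:ℝ)+1) ≤ 1 := by
    have hle : ((d:ℝ)+1) ≤ 10 := by
      have : (d:ℝ) ≤ 9 := by exact_mod_cast hd9
      linarith
    calc Real.logb 10 ((d:ℝ)+1) ≤ Real.logb 10 10 :=
          Real.logb_le_logb_of_le (by norm_num) (by positivity) hle
      _ = 1 := Real.logb_self_eq_one (by norm_num)
  have hfl : ⌊Real.logb 10 x⌋ = K := by
    rw [Int.floor_eq_iff]
    constructor <;> push_cast <;> linarith
  rw [Int.fract, hfl]
  constructor <;> linarith

/-- Geometric core lemma: given an (approximate) shift `β`, there is a digit `f` such that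
no point of `[0, log 2)` lands in the digit-`f` interval after shifting by anything
close to `β` (mod 1). -/
lemma geom_digit (β : ℝ) (hβ0 : 0 ≤ β) :
    ∃ f : ℕ, 1 ≤ f ∧ f ≤ 9 ∧ ∀ γ x : ℝ,
      |γ - β| ≤ (1 - 3 * Real.logb 10 2) / 4 → 0 ≤ x → x < Real.logb 10 2 →
      ¬(Real.logb 10 f ≤ Int.fract (x + γ) ∧
          Int.fract (x + γ) < Real.logb 10 ((f:ℝ) + 1)) := by
  have hc0 := logb_two_pos
  have hc3 := logb_two_lt_third
  set c := Real.logb 10 2 with hcdef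
  set t : ℕ → ℝ := fun d => Real.logb 10 d with htdef
  have ht1 : t 1 = 0 := by simp [t]
  have ht10 : t 10 = 1 := by
    show Real.logb 10 ((10:ℕ):ℝ) = 1
    norm_num
  have ht2 : t 2 = c := by
    show Real.logb 10 ((2:ℕ):ℝ) = c
    norm_num
    exact hcdef.symm
  set T : ℕ → ℝ := fun j => ((j / 9 : ℕ) : ℝ) + t (j % 9 + 1) with hTdef
  have hT1 : ∀ j : ℕ, T (j + 1) = ((j / 9 : ℕ) : ℝ) + t (j % 9 + 2) := by
    intro j
    rcases Nat.lt_or_ge (j % 9) 8 with hr | hr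
    · have e1 : (j+1)/9 = j/9 := by omega
      have e2 : (j+1)%9 = j%9 + 1 := by omega
      simp only [T, e1, e2]
    · have hr8 : j % 9 = 8 := by omega
      have e1 : (j+1)/9 = j/9 + 1 := by omega
      have e2 : (j+1)%9 = 0 := by omega
      simp only [T, e1, e2, hr8]
      rw [show (0+1) = 1 from rfl, ht1, show (8+2) = 10 from rfl, ht10]
      push_cast
      ring
  have hgaplb : ∀ r : ℕ, t (r+1) ≤ t (r+2) := by
    intro r
    have h1 : (0:ℝ) < ((r:ℝ)+1) := by positivity
    show Real.logb 10 ((r+1:ℕ):ℝ) ≤ Real.logb 10 ((r+2:ℕ):ℝ)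
    push_cast
    exact Real.logb_le_logb_of_le (by norm_num) h1 (by linarith)
  have hgapub : ∀ r : ℕ, t (r + 2) ≤ t (r + 1) + c := by
    intro r
    have h1 : (0:ℝ) < ((r:ℝ)+1) := by positivity
    have key : Real.logb 10 ((r:ℝ)+2) ≤ Real.logb 10 (2 * ((r:ℝ)+1)) :=
      Real.logb_le_logb_of_le (by norm_num) (by positivity) (by linarith)
    have hm : Real.logb 10 (2 * ((r:ℝ)+1)) = c + Real.logb 10 ((r:ℝ)+1) := by
      rw [Real.logb_mul (by norm_num) h1.ne']
    show Real.logb 10 ((r+2:ℕ):ℝ) ≤ Real.logb 10 ((r+1:ℕ):ℝ) + c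
    push_cast
    linarith
  have hgap : ∀ j : ℕ, T j ≤ T (j+1) ∧ T (j+1) ≤ T j + c := by
    intro j
    rw [hT1 j]
    constructor
    · have := hgaplb (j % 9); simp only [T]; linarith
    · have := hgapub (j % 9); simp only [T]; linarith
  set u := β + c + (1 - 3*c)/4 with hudef
  have hu0 : 0 < u := by simp only [u]; linarith
  have hex : ∃ j : ℕ, u ≤ T (j+1) := by
    refine ⟨9 * (⌈u⌉₊ + 1) - 1, ?_⟩
    have e : 9 * (⌈u⌉₊ + 1) - 1 + 1 = 9 * (⌈u⌉₊+1) := by omega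
    rw [e]
    have e1 : (9 * (⌈u⌉₊+1))/9 = ⌈u⌉₊ + 1 := by omega
    have e2 : (9 * (⌈u⌉₊+1))%9 = 0 := by omega
    simp only [T, e1, e2, show (0+1)=1 from rfl, ht1]
    have := Nat.le_ceil u
    push_cast
    linarith
  set j := Nat.find hex with hjdef
  have hj : u ≤ T (j+1) := Nat.find_spec hex
  have hj2 : T (j+1) ≤ u + c := by
    rcases Nat.eq_zero_or_pos j with h0 | hposj
    · rw [h0]
      have hT1v : T 1 = c := by
        simp only [T, show (1:ℕ)/9 = 0 from rfl, show (1:ℕ)%9 = 1 from rfl, ht2]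
        norm_num
      rw [hT1v]; linarith
    · have hmin := Nat.find_min hex (show j - 1 < j by omega)
      push_neg at hmin
      have e : j - 1 + 1 = j := by omega
      rw [e] at hmin
      have := (hgap j).2
      linarith
  set q := (j+1)/9 with hqdef
  set f := (j+1) % 9 + 1 with hfdef
  have hf1 : 1 ≤ f := by omega
  have hf9 : f ≤ 9 := by
    have := Nat.mod_lt (j+1) (show 0 < 9 by norm_num)
    omega
  have hTf : T (j+1) = (q:ℝ) + t f := rfl
  have hTf2 : T (j+2) = (q:ℝ) + t (f+1) := hT1 (j+1)
  refine ⟨f, hf1, hf9, ?_⟩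
  rintro γ x hγ hx0 hxc ⟨hy1, hy2⟩
  obtain ⟨hγl, hγr⟩ := abs_le.mp hγ
  set y := Int.fract (x + γ) with hydef
  have hyfl : y = (x + γ) - (⌊x + γ⌋ : ℝ) := rfl
  have hy1' : t f ≤ y := hy1
  have hy2' : y < t (f+1) := by
    have : t (f+1) = Real.logb 10 ((f:ℝ)+1) := by
      show Real.logb 10 ((f+1:ℕ):ℝ) = _
      push_cast
      ring_nf
    rw [this]; exact hy2
  have htub : T (j+2) ≤ u + c + c := by
    have := (hgap (j+1)).2; linarith
  rcases le_or_gt (q:ℤ) ⌊x + γ⌋ with hq | hq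
  · have hqr : (q:ℝ) ≤ (⌊x+γ⌋:ℝ) := by exact_mod_cast hq
    have h1 : u ≤ (q:ℝ) + t f := by rw [← hTf]; exact hj
    simp only [u] at h1
    linarith
  · have hqr : (⌊x+γ⌋:ℝ) ≤ (q:ℝ) - 1 := by
      have : ⌊x+γ⌋ + 1 ≤ (q:ℤ) := hq
      have : ((⌊x+γ⌋ + 1 : ℤ):ℝ) ≤ ((q:ℤ):ℝ) := by exact_mod_cast this
      push_cast at this
      linarith
    have h2 : (q:ℝ) + t (f+1) ≤ u + c + c := by rw [← hTf2]; exact htub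
    simp only [u] at h2
    linarith

/- ----------------------------------------------------------------
   Main theorem
----------------------------------------------------------------- -/

lemma tele_aux (g : ℕ → ℝ) (C' : ℝ) (hC' : 0 ≤ C')
    (hstep : ∀ n : ℕ, 1 ≤ n → |g (n+1) - g n| ≤ C' / n) :
    ∀ b : ℕ, 1 ≤ b → ∀ s : ℕ, |g (b + s) - g b| ≤ s * C' / b := by
  intro b hb s
  induction s with
  | zero => simp
  | succ s ih =>
    have hb' : 1 ≤ b + s := by omega
    have h1 := hstep (b + s) hb'
    have hbpos : (0:ℝ) < b := by exact_mod_cast hb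
    have hbs : (b:ℝ) ≤ (b:ℝ) + s := le_add_of_nonneg_right (Nat.cast_nonneg s)
    have hcast : ((b + s : ℕ):ℝ) = (b:ℝ) + s := by push_cast; ring
    rw [hcast] at h1
    have h2 : C' / ((b:ℝ) + s) ≤ C' / b := div_le_div_of_nonneg_left hC' hbpos hbs
    have h3 : |g (b + (s+1)) - g b| ≤ |g (b + s + 1) - g (b + s)| + |g (b + s) - g b| := by
      have e : b + (s+1) = b + s + 1 := by omega
      rw [e]
      exact abs_sub_le _ _ _
    have he : ((s+1 : ℕ):ℝ) * C' / b = C' / b + (s:ℝ) * C' / b := by push_cast; ring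
    rw [he]
    linarith

/-- If `Δ log a_n → ∞` and `Δ log a_{n+1} = Δ log a_n + O(1/n)`, then `{a_n}` is not
locally Benford distributed of any order `k ≥ 2`. -/
theorem not_locallyBenford_of_smooth (a : ℕ → ℝ)
    (hpos : ∀ n : ℕ, 1 ≤ n → 0 < a n)
    (hgrow : Tendsto (fun n : ℕ => Real.log (a (n + 1)) - Real.log (a n)) atTop atTop)
    (hreg : ∃ C : ℝ, 0 < C ∧ ∀ n : ℕ, 1 ≤ n →
      |(Real.log (a (n + 2)) - Real.log (a (n + 1))) -
        (Real.log (a (n + 1)) - Real.log (a n))| ≤ C / n) :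
    ∀ k : ℕ, 2 ≤ k → ¬ LocallyBenfordDistributed a k := by
  obtain ⟨C, hCpos, hC⟩ := hreg
  intro k hk hLB
  have hc0 := logb_two_pos
  have hc3 := logb_two_lt_third
  have hlog10 : (0:ℝ) < Real.log 10 := Real.log_pos (by norm_num)
  set C' : ℝ := C / Real.log 10 with hC'def
  have hC'pos : 0 < C' := div_pos hCpos hlog10
  set mh : ℝ := (1 - 3 * Real.logb 10 2) / 4 with hmhdef
  have hmh : 0 < mh := by rw [hmhdef]; linarith
  set ε : ℝ := mh / C' with hεdef
  have hε : 0 < ε := div_pos hmh hC'pos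
  set M : ℕ → ℕ := fun N => ⌊ε * N⌋₊ with hMdef
  -- base-10 log increments
  set δ : ℕ → ℝ := fun n => Real.logb 10 (a (n+1)) - Real.logb 10 (a n) with hδdef
  have hδstep : ∀ n : ℕ, 1 ≤ n → |δ (n+1) - δ n| ≤ C' / n := by
    intro n hn
    have hb := hC n hn
    have hnpos : (0:ℝ) < n := by exact_mod_cast hn
    have heq : δ (n+1) - δ n =
        ((Real.log (a (n+2)) - Real.log (a (n+1))) -
          (Real.log (a (n+1)) - Real.log (a n))) / Real.log 10 := by
      simp only [hδdef, Real.logb]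
      ring
    have h3 : (C / n) / Real.log 10 = C' / n := by
      rw [hC'def, div_div, mul_comm, ← div_div]
    rw [heq, abs_div, abs_of_pos hlog10, ← h3]
    gcongr
  have tele := tele_aux δ C' hC'pos.le hδstep
  -- per-N digit selection
  have perN : ∀ N : ℕ, ∃ f : ℕ, 1 ≤ f ∧ f ≤ 9 ∧ ∀ n : ℕ, N < n → n ≤ N + M N →
      ¬(HasLeadingDigit (a n) 1 ∧ HasLeadingDigit (a (n+1)) f) := by
    intro N
    obtain ⟨f, hf1, hf9, hprop⟩ := geom_digit (Int.fract (δ (N+1))) (Int.fract_nonneg _)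
    refine ⟨f, hf1, hf9, ?_⟩
    rintro n hn1 hn2 ⟨hd1, hdf⟩
    have hn : 1 ≤ n := by omega
    have hx := fract_logb_of_hasLeadingDigit (hpos n hn) le_rfl (by norm_num) hd1
    have hxf := fract_logb_of_hasLeadingDigit (hpos (n+1) (by omega)) hf1 hf9 hdf
    set x := Int.fract (Real.logb 10 (a n)) with hxdef
    set γ := δ n - (⌊δ (N+1)⌋ : ℝ) with hγdef
    have hfr : Int.fract (Real.logb 10 (a (n+1))) = Int.fract (x + γ) := by
      have hrepr : Real.logb 10 (a (n+1)) =
          (x + γ) + ((⌊Real.logb 10 (a n)⌋ + ⌊δ (N+1)⌋ : ℤ) : ℝ) := by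
        rw [hxdef, hγdef]
        simp only [hδdef, Int.fract]
        push_cast
        ring
      rw [hrepr, Int.fract_add_intCast]
    have hclose : |γ - Int.fract (δ (N+1))| ≤ mh := by
      have he : γ - Int.fract (δ (N+1)) = δ n - δ (N+1) := by
        rw [hγdef]
        simp only [Int.fract]
        ring
      rw [he]
      have hns : n = (N+1) + (n - (N+1)) := by omega
      have ht := tele (N+1) (by omega) (n - (N+1))
      rw [← hns] at ht
      have hsle : ((n - (N+1) : ℕ):ℝ) ≤ ε * N := by
        have h1 : n - (N+1) ≤ M N := by omega
        have h2 : (M N : ℝ) ≤ ε * N := Nat.floor_le (by positivity)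
        have h4 := (Nat.cast_le (α := ℝ)).mpr h1
        linarith
      have hN1 : (0:ℝ) < ((N:ℝ)+1) := by positivity
      have hfin : ((n - (N+1) : ℕ):ℝ) * C' / ((N+1:ℕ):ℝ) ≤ mh := by
        have hcast : ((N+1:ℕ):ℝ) = (N:ℝ)+1 := by push_cast; ring
        rw [hcast, div_le_iff₀ hN1]
        have hεC : ε * C' = mh := by rw [hεdef]; field_simp
        have hN0 : (0:ℝ) ≤ (N:ℝ) := Nat.cast_nonneg N
        nlinarith [hC'pos.le, hε.le]
      linarith
    have hx1 : 0 ≤ x := by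
      have h := hx.1
      simpa using h
    have hx2 : x < Real.logb 10 2 := by
      have h := hx.2
      norm_num at h
      exact h
    rw [hfr] at hxf
    exact hprop γ x hclose hx1 hx2 hxf
  -- pigeonhole over the finitely many digits
  have key : ∃ f ∈ Finset.Icc 1 9, ∃ᶠ N in atTop,
      ∀ n : ℕ, N < n → n ≤ N + M N →
        ¬(HasLeadingDigit (a n) 1 ∧ HasLeadingDigit (a (n+1)) f) := by
    by_contra hcon
    have hall : ∀ f ∈ Finset.Icc 1 9, ∀ᶠ N in atTop,
        ¬ (∀ n : ℕ, N < n → n ≤ N + M N →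
          ¬(HasLeadingDigit (a n) 1 ∧ HasLeadingDigit (a (n+1)) f)) := by
      intro f hf
      rw [← Filter.not_frequently]
      intro hfreq
      exact hcon ⟨f, hf, hfreq⟩
    have hev := (Filter.eventually_all_finset (Finset.Icc 1 9)).mpr hall
    obtain ⟨N, hN⟩ := hev.exists
    obtain ⟨f, hf1, hf9, hfp⟩ := perN N
    exact hN f (Finset.mem_Icc.mpr ⟨hf1, hf9⟩) hfp
  obtain ⟨f, hfmem, hfreq⟩ := key
  obtain ⟨hf1, hf9⟩ := Finset.mem_Icc.mp hfmem
  have hfreq2 : ∃ᶠ N in atTop,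
      ((∀ n : ℕ, N < n → n ≤ N + M N →
        ¬(HasLeadingDigit (a n) 1 ∧ HasLeadingDigit (a (n+1)) f)) ∧ 1 ≤ N) :=
    hfreq.and_eventually (eventually_ge_atTop 1)
  obtain ⟨φ, hφmono, hφP⟩ := Filter.extraction_of_frequently_atTop hfreq2
  -- the digit tuple
  set dgt : Fin k → ℕ := fun i => if (i:ℕ) = 1 then f else 1 with hdgtdef
  have hdgtb : ∀ i, 1 ≤ dgt i ∧ dgt i ≤ 9 := by
    intro i
    rw [hdgtdef]
    dsimp only
    split <;> omega
  have hg := hLB dgt hdgtb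
  set ρ := ∏ i : Fin k, benfordP (dgt i) with hρdef
  have hρpos : 0 < ρ := by
    rw [hρdef]
    apply Finset.prod_pos
    intro i _
    apply Real.logb_pos (by norm_num)
    have h1 : (1:ℝ) ≤ (dgt i : ℝ) := by exact_mod_cast (hdgtb i).1
    have h2 : 0 < 1 / (dgt i : ℝ) := by positivity
    linarith
  set S : ℕ → Set ℕ := fun N => {n : ℕ | 1 ≤ n ∧ n ≤ N ∧
      ∀ i : Fin k, HasLeadingDigit (a (n + (i : ℕ))) (dgt i)} with hSdef
  have hSeq : ∀ jj : ℕ, S (φ jj + M (φ jj)) = S (φ jj) := by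
    intro jj
    obtain ⟨hPf, hφ1⟩ := hφP jj
    ext n
    simp only [hSdef, Set.mem_setOf_eq]
    constructor
    · rintro ⟨h1, h2, h3⟩
      refine ⟨h1, ?_, h3⟩
      by_contra hgt
      push_neg at hgt
      have hd0 : HasLeadingDigit (a n) 1 := by
        have h := h3 ⟨0, by omega⟩
        simpa [hdgtdef] using h
      have hd1 : HasLeadingDigit (a (n+1)) f := by
        have h := h3 ⟨1, by omega⟩
        simpa [hdgtdef] using h
      exact hPf n hgt h2 ⟨hd0, hd1⟩
    · rintro ⟨h1, h2, h3⟩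
      exact ⟨h1, by omega, h3⟩
  have hφtop : Tendsto φ atTop atTop := hφmono.tendsto_atTop
  have hψtop : Tendsto (fun jj => φ jj + M (φ jj)) atTop atTop :=
    tendsto_atTop_mono (fun jj => Nat.le_add_right _ _) hφtop
  have hMlim : Tendsto (fun N : ℕ => (M N : ℝ) / N) atTop (nhds ε) := by
    have hlow : Tendsto (fun N : ℕ => ε - 1/(N:ℝ)) atTop (nhds ε) := by
      have h := tendsto_const_nhds (x := ε) (f := atTop (α := ℕ)) |>.sub
        tendsto_one_div_atTop_nhds_zero_nat
      simpa using h
    apply tendsto_of_tendsto_of_tendsto_of_le_of_le' hlow tendsto_const_nhds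
    · filter_upwards [eventually_ge_atTop 1] with N hN
      have hNpos : (0:ℝ) < N := by exact_mod_cast hN
      rw [le_div_iff₀ hNpos]
      have h1 : ε * N < (M N : ℝ) + 1 := Nat.lt_floor_add_one _
      have h2 : (ε - 1/N) * N = ε * N - 1 := by field_simp
      rw [h2]
      linarith
    · filter_upwards [eventually_ge_atTop 1] with N hN
      have hNpos : (0:ℝ) < N := by exact_mod_cast hN
      rw [div_le_iff₀ hNpos]
      exact Nat.floor_le (by positivity)
  have hratio : Tendsto (fun jj => ((φ jj + M (φ jj) : ℕ) : ℝ) / (φ jj : ℝ)) atTop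
      (nhds (1 + ε)) := by
    have h0 : Tendsto (fun jj => 1 + (M (φ jj) : ℝ) / (φ jj)) atTop (nhds (1 + ε)) :=
      tendsto_const_nhds.add (hMlim.comp hφtop)
    apply h0.congr
    intro jj
    have hφ1 : 1 ≤ φ jj := (hφP jj).2
    have hφpos : (0:ℝ) < φ jj := by exact_mod_cast hφ1
    push_cast
    field_simp
  have hA : Tendsto (fun jj => (Nat.card (S (φ jj)) : ℝ) / (φ jj : ℝ)) atTop (nhds ρ) :=
    hg.comp hφtop
  have hB : Tendsto (fun jj => (Nat.card (S (φ jj + M (φ jj))) : ℝ) /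
      ((φ jj + M (φ jj) : ℕ) : ℝ)) atTop (nhds ρ) := hg.comp hψtop
  have hcomb := hB.mul hratio
  have hEq : ∀ jj : ℕ, (Nat.card (S (φ jj + M (φ jj))) : ℝ) / ((φ jj + M (φ jj) : ℕ) : ℝ) *
      (((φ jj + M (φ jj) : ℕ) : ℝ) / (φ jj : ℝ)) = (Nat.card (S (φ jj)) : ℝ) / (φ jj : ℝ) := by
    intro jj
    rw [hSeq jj]
    have hφ1 : 1 ≤ φ jj := (hφP jj).2
    have h1 : ((φ jj + M (φ jj) : ℕ) : ℝ) ≠ 0 :=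
      Nat.cast_ne_zero.mpr (by omega)
    field_simp
  have hfinal := tendsto_nhds_unique (hcomb.congr hEq) hA
  nlinarith [hρpos, hε, hfinal]
end

section
/- Let {a_n} be a sequence of positive real numbers such that the logarithmic differences Δ log a_n = log a_{n+1} - log a_n satisfy Δ log a_n → ∞ as n → ∞ and Δ log a_{n+1} = Δ log a_n + O(1/n) as n → ∞. Then {a_n} does not have Benford distributed waiting times. -/
open Filter

lemma exists_digit (x : ℝ) (hx : 0 < x) : ∃ d : ℕ, 1 ≤ d ∧ d ≤ 9 ∧ HasLeadingDigit x d := by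
  have h10 : (0:ℝ) < 10 := by norm_num
  have hlog10 : (0:ℝ) < Real.log 10 := Real.log_pos (by norm_num)
  set k : ℤ := ⌊Real.logb 10 x⌋ with hk
  have hx1 : (10:ℝ) ^ k ≤ x := by
    rw [Real.zpow_le_iff_le_log h10 hx]
    have := Int.floor_le (Real.logb 10 x)
    calc (k:ℝ) * Real.log 10 ≤ Real.logb 10 x * Real.log 10 := by
          exact mul_le_mul_of_nonneg_right this hlog10.le
      _ = Real.log x := by
          rw [Real.logb, div_mul_cancel₀ _ hlog10.ne']
  have hx2 : x < (10:ℝ) ^ (k + 1) := by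
    apply Real.lt_zpow_of_log_lt h10
    have := Int.lt_floor_add_one (Real.logb 10 x)
    have h' : Real.log x = Real.logb 10 x * Real.log 10 := by
      rw [Real.logb, div_mul_cancel₀ _ hlog10.ne']
    rw [h']
    push_cast
    exact mul_lt_mul_of_pos_right this hlog10
  have hkpos : (0:ℝ) < (10:ℝ) ^ k := zpow_pos h10 k
  set u : ℝ := x / 10 ^ k with hu
  have hu1 : 1 ≤ u := (one_le_div hkpos).2 hx1
  have hu10 : u < 10 := by
    rw [div_lt_iff₀ hkpos]
    calc x < (10:ℝ) ^ (k+1) := hx2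
      _ = 10 * 10 ^ k := by rw [zpow_add₀ (by norm_num : (10:ℝ) ≠ 0)]; ring
  have hm1 : 1 ≤ ⌊u⌋ := by exact_mod_cast Int.le_floor.2 (by exact_mod_cast hu1)
  have hm9 : ⌊u⌋ ≤ 9 := by
    have : ⌊u⌋ < 10 := Int.floor_lt.2 (by exact_mod_cast hu10)
    omega
  refine ⟨⌊u⌋.toNat, by omega, by omega, k, ?_, ?_⟩
  · have hcast : ((⌊u⌋.toNat : ℕ) : ℝ) = (⌊u⌋ : ℝ) := by
      exact_mod_cast Int.toNat_of_nonneg (by omega)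
    rw [hcast]
    have := Int.floor_le u
    calc (⌊u⌋:ℝ) * 10 ^ k ≤ u * 10 ^ k := mul_le_mul_of_nonneg_right this hkpos.le
      _ = x := div_mul_cancel₀ _ hkpos.ne'
  · have hcast : ((⌊u⌋.toNat : ℕ) : ℝ) = (⌊u⌋ : ℝ) := by
      exact_mod_cast Int.toNat_of_nonneg (by omega)
    rw [hcast]
    have := Int.lt_floor_add_one u
    have : u * 10 ^ k < ((⌊u⌋:ℝ) + 1) * 10 ^ k := mul_lt_mul_of_pos_right this hkpos
    calc x = u * 10 ^ k := (div_mul_cancel₀ _ hkpos.ne').symm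
      _ < ((⌊u⌋:ℝ) + 1) * 10 ^ k := this

lemma log_close_of_same_digit {x y : ℝ} (hx : 0 < x) (hy : 0 < y) {d : ℕ} (hd : 1 ≤ d)
    (h1 : HasLeadingDigit x d) (h2 : HasLeadingDigit y d) :
    ∃ j : ℤ, |Real.log y - Real.log x - j * Real.log 10| < Real.log 2 := by
  obtain ⟨k, hk1, hk2⟩ := h1
  obtain ⟨k', hk1', hk2'⟩ := h2
  have hdpos : (0:ℝ) < d := by exact_mod_cast hd
  have h10 : (0:ℝ) < 10 := by norm_num
  have hkpos : (0:ℝ) < (10:ℝ) ^ k := zpow_pos h10 k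
  have hkpos' : (0:ℝ) < (10:ℝ) ^ k' := zpow_pos h10 k'
  refine ⟨k' - k, abs_lt.2 ⟨?_, ?_⟩⟩
  · -- lower bound: log y - log x > (k'-k) log 10 - log 2
    have hylb : Real.log y ≥ Real.log d + k' * Real.log 10 := by
      calc Real.log y ≥ Real.log ((d:ℝ) * 10 ^ k') := Real.log_le_log (by positivity) hk1'
        _ = Real.log d + k' * Real.log 10 := by
            rw [Real.log_mul hdpos.ne' hkpos'.ne', Real.log_zpow]
    have hxub : Real.log x < Real.log ((d:ℝ)+1) + k * Real.log 10 := by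
      calc Real.log x < Real.log (((d:ℝ)+1) * 10 ^ k) := Real.log_lt_log hx hk2
        _ = Real.log ((d:ℝ)+1) + k * Real.log 10 := by
            rw [Real.log_mul (by positivity) hkpos.ne', Real.log_zpow]
    have hratio : Real.log ((d:ℝ)+1) - Real.log d ≤ Real.log 2 := by
      rw [← Real.log_div (by positivity) hdpos.ne']
      apply Real.log_le_log (by positivity)
      rw [div_le_iff₀ hdpos]
      have : (1:ℝ) ≤ d := by exact_mod_cast hd
      linarith
    push_cast
    nlinarith [hylb, hxub, hratio]
  · have hyub : Real.log y < Real.log ((d:ℝ)+1) + k' * Real.log 10 := by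
      calc Real.log y < Real.log (((d:ℝ)+1) * 10 ^ k') := Real.log_lt_log hy hk2'
        _ = Real.log ((d:ℝ)+1) + k' * Real.log 10 := by
            rw [Real.log_mul (by positivity) hkpos'.ne', Real.log_zpow]
    have hxlb : Real.log x ≥ Real.log d + k * Real.log 10 := by
      calc Real.log x ≥ Real.log ((d:ℝ) * 10 ^ k) := Real.log_le_log (by positivity) hk1
        _ = Real.log d + k * Real.log 10 := by
            rw [Real.log_mul hdpos.ne' hkpos.ne', Real.log_zpow]
    have hratio : Real.log ((d:ℝ)+1) - Real.log d ≤ Real.log 2 := by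
      rw [← Real.log_div (by positivity) hdpos.ne']
      apply Real.log_le_log (by positivity)
      rw [div_le_iff₀ hdpos]
      have : (1:ℝ) ≤ d := by exact_mod_cast hd
      linarith
    push_cast
    nlinarith [hyub, hxlb, hratio]

lemma telescope {g : ℕ → ℝ} {C : ℝ} (hC : 0 ≤ C) (h : ∀ n, 1 ≤ n → g (n+1) - g n ≤ C / n) :
    ∀ s, 2 ≤ s → ∀ t, s ≤ t → g t - g s ≤ C * (Real.log ((t:ℝ)-1) - Real.log ((s:ℝ)-1)) := by
  intro s hs t ht
  induction t, ht using Nat.le_induction with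
  | base => simp
  | succ t ht ih =>
    have ht2 : 2 ≤ t := le_trans hs ht
    have ht1 : (1:ℝ) ≤ (t:ℝ) - 1 := by
      have : (2:ℝ) ≤ t := by exact_mod_cast ht2
      linarith
    have hstep : g (t+1) - g t ≤ C / t := h t (by omega)
    have hlog : C / t ≤ C * (Real.log t - Real.log ((t:ℝ)-1)) := by
      have htpos : (0:ℝ) < t := by positivity
      have h1 : Real.log (((t:ℝ)-1)/t) ≤ ((t:ℝ)-1)/t - 1 :=
        Real.log_le_sub_one_of_pos (by positivity)
      rw [Real.log_div (by linarith) htpos.ne'] at h1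
      have h2 : ((t:ℝ)-1)/t - 1 = -(1/t) := by field_simp; ring
      rw [h2] at h1
      have h3 : 1/(t:ℝ) ≤ Real.log t - Real.log ((t:ℝ)-1) := by linarith
      calc C / t = C * (1/t) := by ring
        _ ≤ C * (Real.log t - Real.log ((t:ℝ)-1)) := mul_le_mul_of_nonneg_left h3 hC
    have : Real.log ((t:ℝ)+1-1) = Real.log t := by norm_num
    push_cast
    rw [this]
    have := ih
    linarith [ih]

set_option maxHeartbeats 1000000 in
/-- If `Δ log a_n → ∞` and `Δ log a_{n+1} = Δ log a_n + O(1/n)`, then `{a_n}` does not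
have Benford distributed waiting times. -/
theorem not_benfordWaitingTimes_of_smooth (a : ℕ → ℝ)
    (hpos : ∀ n : ℕ, 1 ≤ n → 0 < a n)
    (hgrow : Tendsto (fun n : ℕ => Real.log (a (n + 1)) - Real.log (a n)) atTop atTop)
    (hreg : ∃ C : ℝ, 0 < C ∧ ∀ n : ℕ, 1 ≤ n →
      |(Real.log (a (n + 2)) - Real.log (a (n + 1))) -
        (Real.log (a (n + 1)) - Real.log (a n))| ≤ C / n) :
    ¬ BenfordWaitingTimes a := by
  classical
  intro hB
  obtain ⟨C, hC0, hreg'⟩ := hreg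
  set g : ℕ → ℝ := fun n => Real.log (a (n + 1)) - Real.log (a n) with hg_def
  have hstep : ∀ n, 1 ≤ n → |g (n+1) - g n| ≤ C / n := by
    intro n hn
    simpa [hg_def] using hreg' n hn
  clear_value g
  set p : ℕ → ℕ → Prop := fun d n => 1 ≤ n ∧ HasLeadingDigit (a n) d with hp_def
  set F : ℕ → ℕ → ℕ := fun d N => Nat.card {i : ℕ | 1 ≤ i ∧ i ≤ N ∧ waitingTime a d i = 1}
    with hF_def
  have hwt : ∀ d i, waitingTime a d i = Nat.nth (p d) i - Nat.nth (p d) (i-1) :=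
    fun _ _ => rfl
  -- basic facts
  have hPpos : ∀ d : ℕ, 1 ≤ d → 0 < benfordP d := by
    intro d hd
    have : (0:ℝ) < 1 / (d:ℝ) := by positivity
    exact Real.logb_pos (by norm_num) (by linarith)
  have htend : ∀ d : ℕ, 1 ≤ d → d ≤ 9 →
      Tendsto (fun N : ℕ => (F d N : ℝ) / N) atTop (nhds (benfordP d)) := by
    intro d h1 h9
    simpa [hF_def] using hB d h1 h9 1 le_rfl
  have hFle : ∀ d N, F d N ≤ N := by
    intro d N
    have hsub : {i : ℕ | 1 ≤ i ∧ i ≤ N ∧ waitingTime a d i = 1} ⊆ Set.Icc 1 N :=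
      fun i hi => ⟨hi.1, hi.2.1⟩
    calc F d N = Set.ncard {i : ℕ | 1 ≤ i ∧ i ≤ N ∧ waitingTime a d i = 1} :=
          Nat.card_coe_set_eq _
      _ ≤ (Set.Icc 1 N).ncard := Set.ncard_le_ncard hsub (Set.finite_Icc 1 N)
      _ ≤ N := by
          rw [Set.ncard_eq_toFinset_card' , Set.toFinset_Icc, Nat.card_Icc]
          omega
  -- every digit set is infinite
  have hinf : ∀ d : ℕ, 1 ≤ d → d ≤ 9 → (setOf (p d)).Infinite := by
    intro d h1 h9
    by_contra hfin
    rw [Set.not_infinite] at hfin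
    set K := hfin.toFinset.card with hK_def
    have hzero : ∀ i, K ≤ i → Nat.nth (p d) i = 0 := fun i hi => Nat.nth_of_card_le hfin hi
    have hwz : ∀ i, K + 1 ≤ i → waitingTime a d i = 0 := by
      intro i hi
      have : waitingTime a d i = Nat.nth (p d) i - Nat.nth (p d) (i-1) := rfl
      rw [this, hzero i (by omega), hzero (i-1) (by omega)]
    have hsub : ∀ N, {i : ℕ | 1 ≤ i ∧ i ≤ N ∧ waitingTime a d i = 1} ⊆ Set.Icc 1 K := by
      intro N i hi
      refine ⟨hi.1, ?_⟩
      by_contra hiK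
      push_neg at hiK
      have h0 := hwz i (by omega)
      have h3 := hi.2.2
      rw [h0] at h3
      exact absurd h3 (by norm_num)
    have hFK : ∀ N, (F d N : ℝ) ≤ K := by
      intro N
      have : F d N ≤ K := by
        calc F d N = Set.ncard {i : ℕ | 1 ≤ i ∧ i ≤ N ∧ waitingTime a d i = 1} :=
              Nat.card_coe_set_eq _
          _ ≤ (Set.Icc 1 K).ncard := Set.ncard_le_ncard (hsub N) (Set.finite_Icc 1 K)
          _ ≤ K := by
              rw [Set.ncard_eq_toFinset_card', Set.toFinset_Icc, Nat.card_Icc]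
              omega
      exact_mod_cast this
    have hlim0 : Tendsto (fun N : ℕ => (F d N : ℝ) / N) atTop (nhds 0) := by
      refine squeeze_zero (fun N => by positivity) (g := fun N : ℕ => (K:ℝ)/N) (fun N => ?_)
        (tendsto_const_div_atTop_nhds_zero_nat (K:ℝ))
      rcases Nat.eq_zero_or_pos N with h | h
      · simp [h]
      · have hNpos : (0:ℝ) < N := by exact_mod_cast h
        exact (div_le_div_iff_of_pos_right hNpos).2 (hFK N)
    have := tendsto_nhds_unique (htend d h1 h9) hlim0
    exact absurd this (ne_of_gt (hPpos d h1))
  -- epsilon extraction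
  have hext : ∀ d : ℕ, 1 ≤ d → d ≤ 9 → ∀ ε : ℝ, 0 < ε → ∃ N0 : ℕ, 1 ≤ N0 ∧
      ∀ N, N0 ≤ N → |(F d N : ℝ) - benfordP d * N| ≤ ε * N := by
    intro d h1 h9 ε hε
    have h := htend d h1 h9
    rw [Metric.tendsto_atTop] at h
    obtain ⟨N0, hN0⟩ := h ε hε
    refine ⟨max N0 1, le_max_right _ _, fun N hN => ?_⟩
    have hN1 : 1 ≤ N := le_trans (le_max_right _ _) hN
    have hd := hN0 N (le_trans (le_max_left _ _) hN)
    rw [Real.dist_eq] at hd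
    have hNpos : (0:ℝ) < N := by exact_mod_cast hN1
    have heq : (F d N : ℝ) - benfordP d * N = ((F d N : ℝ)/N - benfordP d) * N := by
      field_simp
    rw [heq, abs_mul, abs_of_pos hNpos]
    exact mul_le_mul_of_nonneg_right hd.le hNpos.le
  clear_value p F
  -- constants
  set q : ℝ := Real.log (5/2) / (2*C) with hq_def
  have hq : 0 < q := div_pos (Real.log_pos (by norm_num)) (by linarith)
  set r : ℝ := Real.exp (-q) with hr_def
  have hr0 : 0 < r := Real.exp_pos _
  have hr1 : r < 1 := by
    rw [hr_def, ← Real.exp_zero]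
    exact Real.exp_lt_exp.2 (by linarith)
  set κ : ℝ := (1 - r) / 18 with hκ_def
  have hκ : 0 < κ := by rw [hκ_def]; linarith
  have hκ1 : κ ≤ 1/18 := by rw [hκ_def]; linarith
  -- per-digit thresholds
  have hskolem : ∀ d : ℕ, ∃ N0 : ℕ, 1 ≤ N0 ∧ (1 ≤ d → d ≤ 9 →
      ∀ N, N0 ≤ N → |(F d N : ℝ) - benfordP d * N| ≤ (benfordP d * κ / 4) * N) := by
    intro d
    by_cases hd : 1 ≤ d ∧ d ≤ 9
    · obtain ⟨N0, hN01, hN0⟩ := hext d hd.1 hd.2 (benfordP d * κ / 4)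
        (by have := hPpos d hd.1; positivity)
      exact ⟨N0, hN01, fun _ _ => hN0⟩
    · exact ⟨1, le_rfl, fun h1 h9 => absurd ⟨h1, h9⟩ hd⟩
  choose N0f hN0f1 hN0f2 using hskolem
  set X : ℝ := ∑ d ∈ Finset.Icc 1 9, ((N0f d : ℝ) + 2 * N0f d / benfordP d) with hX_def
  have hXnn : ∀ d ∈ Finset.Icc 1 9, (0:ℝ) ≤ (N0f d : ℝ) + 2 * N0f d / benfordP d := by
    intro d hd
    rw [Finset.mem_Icc] at hd
    have := hPpos d hd.1
    positivity
  have hXge : ∀ d ∈ Finset.Icc 1 9,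
      (N0f d : ℝ) ≤ X ∧ 2 * N0f d / benfordP d ≤ X := by
    intro d hd
    have hsingle := Finset.single_le_sum hXnn hd
    rw [Finset.mem_Icc] at hd
    have hP := hPpos d hd.1
    constructor
    · have : (0:ℝ) ≤ 2 * N0f d / benfordP d := by positivity
      linarith [hsingle]
    · have : (0:ℝ) ≤ (N0f d : ℝ) := by positivity
      linarith [hsingle]
  -- the global threshold M
  set M : ℕ := 2 + ⌈2*C/Real.log (5/2)⌉₊ + ⌈(18*(X+1)+2)/(1-r)⌉₊ with hM_def
  have hM2 : 2 ≤ M := by omega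
  have hMC : 2*C/Real.log (5/2) ≤ (M:ℝ) := by
    have h1 := Nat.le_ceil (2*C/Real.log (5/2))
    have h2 : (⌈2*C/Real.log (5/2)⌉₊ : ℝ) ≤ M := by
      have : ⌈2*C/Real.log (5/2)⌉₊ ≤ M := by omega
      exact_mod_cast this
    linarith
  have hMX : 18*(X+1)+2 ≤ (M:ℝ)*(1-r) := by
    have h1 := Nat.le_ceil ((18*(X+1)+2)/(1-r))
    have h2 : (⌈(18*(X+1)+2)/(1-r)⌉₊ : ℝ) ≤ M := by
      have : ⌈(18*(X+1)+2)/(1-r)⌉₊ ≤ M := by omega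
      exact_mod_cast this
    have h3 : (18*(X+1)+2)/(1-r) ≤ (M:ℝ) := le_trans h1 h2
    rw [div_le_iff₀ (by linarith : (0:ℝ) < 1 - r)] at h3
    linarith
  clear_value q r κ X M
  -- window construction
  obtain ⟨m, B, hB_def, hgMB, s, t, hMs, hst, hsB, hwin, htB, hsr⟩ :
      ∃ (m : ℤ) (B : ℝ), B = m * Real.log 10 + Real.log 2 ∧ True ∧
        ∃ s t : ℕ, M ≤ s ∧ s < t ∧ g s ≤ B ∧
          (∀ n, s < n → n < t → B < g n ∧ g n < B + Real.log (5/2)) ∧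
          B + Real.log (5/2) ≤ g t ∧ (s:ℝ) ≤ ((t:ℝ) - 1) * r := by
    have hlog10 : (0:ℝ) < Real.log 10 := Real.log_pos (by norm_num)
    have hl25 : (0:ℝ) < Real.log (5/2) := Real.log_pos (by norm_num)
    set m : ℤ := ⌈(g M - Real.log 2)/Real.log 10⌉ with hm_def
    set B : ℝ := m * Real.log 10 + Real.log 2 with hB_def
    have hgMB : g M ≤ B := by
      have h := Int.le_ceil ((g M - Real.log 2)/Real.log 10)
      rw [← hm_def, div_le_iff₀ hlog10] at h
      rw [hB_def]
      linarith
    obtain ⟨N1, hN1⟩ := eventually_atTop.1 (hgrow.eventually_gt_atTop B)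
    set Nb := max N1 M with hNb_def
    set s := Nat.findGreatest (fun n => g n ≤ B) Nb with hs_def
    have hMs : M ≤ s := Nat.le_findGreatest (le_max_right _ _) hgMB
    have hsB : g s ≤ B := by
      have h := Nat.findGreatest_spec (P := fun n => g n ≤ B) (le_max_right N1 M) hgMB
      simpa using h
    have hshigh : ∀ n, s < n → B < g n := by
      intro n hn
      rcases le_or_gt n Nb with h | h
      · exact lt_of_not_ge (Nat.findGreatest_is_greatest hn h)
      · exact hN1 n (le_trans (le_max_left _ _) h.le)
    have hex : ∃ n, s < n ∧ B + Real.log (5/2) ≤ g n := by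
      obtain ⟨N2, hN2⟩ := eventually_atTop.1 (hgrow.eventually_ge_atTop (B + Real.log (5/2)))
      exact ⟨max (s+1) N2, lt_of_lt_of_le (Nat.lt_succ_self s) (le_max_left _ _),
        hN2 _ (le_max_right _ _)⟩
    set t := Nat.find hex with ht_def
    obtain ⟨hst, htB⟩ := Nat.find_spec hex
    rw [← ht_def] at hst htB
    have hwin : ∀ n, s < n → n < t → B < g n ∧ g n < B + Real.log (5/2) := by
      intro n hn1 hn2
      refine ⟨hshigh n hn1, ?_⟩
      rw [ht_def] at hn2
      have h := Nat.find_min hex hn2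
      push_neg at h
      exact lt_of_not_ge (fun hc => absurd hc (not_le.2 (h hn1)))
    clear_value t s Nb B m
    have hs1 : 1 ≤ s := le_trans (by omega) hMs
    have hspos : (0:ℝ) < s := by exact_mod_cast hs1
    have hgs1 : g (s+1) ≤ B + C/s := by
      have h := (abs_le.1 (hstep s hs1)).2
      calc g (s+1) = g s + (g (s+1) - g s) := by ring
        _ ≤ B + C/(s:ℝ) := add_le_add hsB h
    have htel : g t - g (s+1) ≤ C * (Real.log ((t:ℝ)-1) - Real.log (s:ℝ)) := by
      have h := telescope hC0.le (fun n hn => (abs_le.1 (hstep n hn)).2) (s+1) (by omega) t hst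
      have hcast : ((s+1:ℕ):ℝ) - 1 = (s:ℝ) := by push_cast; ring
      rwa [hcast] at h
    have hCs : C / s ≤ Real.log (5/2) / 2 := by
      have hsR : 2*C/Real.log (5/2) ≤ (s:ℝ) := le_trans hMC (by exact_mod_cast hMs)
      rw [div_le_iff₀ hl25] at hsR
      rw [div_le_div_iff₀ hspos (by norm_num : (0:ℝ) < 2)]
      linarith
    have hlogts : q ≤ Real.log ((t:ℝ)-1) - Real.log s := by
      have h1 : Real.log (5/2) - C/s ≤ C * (Real.log ((t:ℝ)-1) - Real.log s) := by
        linarith only [htel, hgs1, htB]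
      have hq2 : 2*C*q = Real.log (5/2) := by rw [hq_def]; field_simp
      have h2 : 2*C*q ≤ 2*C*(Real.log ((t:ℝ)-1) - Real.log s) := by
        rw [hq2]; linarith only [h1, hCs]
      exact le_of_mul_le_mul_left h2 (by linarith)
    have ht1 : (0:ℝ) < (t:ℝ) - 1 := by
      have h : s + 1 ≤ t := hst
      have h' : (s:ℝ) + 1 ≤ t := by exact_mod_cast h
      linarith
    have htlb : (s:ℝ) * Real.exp q ≤ (t:ℝ) - 1 := by
      have h := Real.exp_le_exp.2 (by linarith : Real.log s + q ≤ Real.log ((t:ℝ)-1))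
      rwa [Real.exp_add, Real.exp_log hspos, Real.exp_log ht1] at h
    have hsr : (s:ℝ) ≤ ((t:ℝ)-1) * r := by
      rw [hr_def]
      have h := mul_le_mul_of_nonneg_right htlb (Real.exp_pos (-q)).le
      rw [mul_assoc, ← Real.exp_add] at h
      simpa using h
    exact ⟨m, B, hB_def, trivial, s, t, hMs, hst, hsB, hwin, htB, hsr⟩
  -- pigeonhole: a digit with many occurrences in the window
  obtain ⟨d, hd1, hd9, h9c⟩ :
      ∃ d : ℕ, 1 ≤ d ∧ d ≤ 9 ∧
        t - s - 1 ≤ 9 * ((Finset.Ico (s+1) t).filter (p d)).card := by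
    have hcover : Finset.Ico (s+1) t ⊆ (Finset.Icc 1 9).biUnion
        (fun d => (Finset.Ico (s+1) t).filter (p d)) := by
      intro n hn
      have hn' := Finset.mem_Ico.1 hn
      have hn1 : 1 ≤ n := by omega
      obtain ⟨d, hdd1, hdd9, hld⟩ := exists_digit (a n) (hpos n hn1)
      refine Finset.mem_biUnion.2 ⟨d, Finset.mem_Icc.2 ⟨hdd1, hdd9⟩,
        Finset.mem_filter.2 ⟨hn, ?_⟩⟩
      rw [hp_def]
      exact ⟨hn1, hld⟩
    have hcard : t - (s+1) ≤ ∑ e ∈ Finset.Icc 1 9, ((Finset.Ico (s+1) t).filter (p e)).card := by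
      calc t - (s+1) = (Finset.Ico (s+1) t).card := (Nat.card_Ico _ _).symm
        _ ≤ ((Finset.Icc 1 9).biUnion (fun d => (Finset.Ico (s+1) t).filter (p d))).card :=
            Finset.card_le_card hcover
        _ ≤ ∑ e ∈ Finset.Icc 1 9, ((Finset.Ico (s+1) t).filter (p e)).card :=
            Finset.card_biUnion_le
    have hsum : ∑ _e ∈ Finset.Icc 1 9, (t - (s+1)) ≤
        ∑ e ∈ Finset.Icc 1 9, 9 * ((Finset.Ico (s+1) t).filter (p e)).card := by
      rw [Finset.sum_const, ← Finset.mul_sum]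
      have h9 : (Finset.Icc 1 9).card = 9 := by rw [Nat.card_Icc]
      rw [h9, smul_eq_mul]
      exact Nat.mul_le_mul_left 9 hcard
    obtain ⟨e, he, hle⟩ := Finset.exists_le_of_sum_le ⟨1, by decide⟩ hsum
    rw [Finset.mem_Icc] at he
    refine ⟨e, he.1, he.2, ?_⟩
    have heq : t - s - 1 = t - (s+1) := by omega
    rw [heq]
    exact hle
  set c : ℕ := ((Finset.Ico (s+1) t).filter (p d)).card with hc_def
  set A : ℕ := Nat.count (p d) (s+1) with hA_def
  set Bn : ℕ := Nat.count (p d) t with hBn_def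
  have hsplit : Bn = A + c := by
    rw [hBn_def, hA_def, hc_def, Nat.count_eq_card_filter_range, Nat.count_eq_card_filter_range]
    have hun : Finset.range t = Finset.range (s+1) ∪ Finset.Ico (s+1) t := by
      ext x
      simp only [Finset.mem_range, Finset.mem_union, Finset.mem_Ico]
      omega
    rw [hun, Finset.filter_union, Finset.card_union_of_disjoint]
    exact Finset.disjoint_filter_filter
      (by rw [Finset.range_eq_Ico]; exact Finset.Ico_disjoint_Ico_consecutive 0 (s+1) t)
  clear_value c A Bn
  have hBnt : Bn ≤ t := by rw [hBn_def]; exact Nat.count_le _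
  -- no waiting time equal to 1 with index in (A, Bn]
  have hinfd := hinf d hd1 hd9
  have hset : {i : ℕ | 1 ≤ i ∧ i ≤ Bn ∧ waitingTime a d i = 1} =
      {i : ℕ | 1 ≤ i ∧ i ≤ A ∧ waitingTime a d i = 1} := by
    ext i
    simp only [Set.mem_setOf_eq]
    constructor
    · rintro ⟨hi1, hiB, hiw⟩
      refine ⟨hi1, ?_, hiw⟩
      by_contra hiA
      push_neg at hiA
      have hge : s + 1 ≤ Nat.nth (p d) (i-1) := by
        have h' : A ≤ i - 1 := by omega
        rw [hA_def] at h'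
        exact (Nat.count_le_iff_le_nth hinfd).1 h'
      have hlt : Nat.nth (p d) (i-1) < t := by
        have h' : i - 1 < Bn := by omega
        rw [hBn_def] at h'
        exact (Nat.lt_nth_iff_count_lt hinfd).1 h'
      have hmem : p d (Nat.nth (p d) (i-1)) := Nat.nth_mem_of_infinite hinfd _
      have hlt2 : Nat.nth (p d) (i-1) < Nat.nth (p d) i := (Nat.nth_lt_nth hinfd).2 (by omega)
      have hsucc : Nat.nth (p d) i = Nat.nth (p d) (i-1) + 1 := by
        have hwti := hwt d i
        omega
      have hmem2 : p d (Nat.nth (p d) (i-1) + 1) := hsucc ▸ Nat.nth_mem_of_infinite hinfd i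
      set n := Nat.nth (p d) (i-1) with hn_def
      rw [hp_def] at hmem hmem2
      obtain ⟨j, hj⟩ := log_close_of_same_digit (hpos n hmem.1) (hpos (n+1) (by omega)) hd1
        hmem.2 hmem2.2
      have hgn : g n = Real.log (a (n+1)) - Real.log (a n) := by rw [hg_def]
      obtain ⟨hw1, hw2⟩ := hwin n (by omega) hlt
      rw [hB_def] at hw1 hw2
      rw [← hgn] at hj
      have hlog10 : Real.log 10 = Real.log 2 + Real.log 5 := by
        rw [show (10:ℝ) = 2*5 by norm_num, Real.log_mul (by norm_num) (by norm_num)]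
      have hl52 : Real.log (5/2) = Real.log 5 - Real.log 2 :=
        Real.log_div (by norm_num) (by norm_num)
      have habs := abs_lt.1 hj
      have hlog10pos : (0:ℝ) < Real.log 10 := Real.log_pos (by norm_num)
      rcases le_or_gt j m with hjm | hjm
      · have hmul : (j:ℝ) * Real.log 10 ≤ (m:ℝ) * Real.log 10 :=
          mul_le_mul_of_nonneg_right (by exact_mod_cast hjm) hlog10pos.le
        linarith [habs.2]
      · have hj1 : (m:ℝ) + 1 ≤ (j:ℝ) := by exact_mod_cast hjm
        have hmul : ((m:ℝ)+1) * Real.log 10 ≤ (j:ℝ) * Real.log 10 :=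
          mul_le_mul_of_nonneg_right hj1 hlog10pos.le
        linarith [habs.1]
    · rintro ⟨hi1, hiA, hiw⟩
      exact ⟨hi1, by omega, hiw⟩
  have hFeq : F d Bn = F d A := by
    rw [hF_def]
    simp only
    rw [hset]
  -- final numeric contradiction
  clear hset hwt hinf hinfd hext htend hB hgrow hreg' hstep hwin hpos
  have hPd : 0 < benfordP d := hPpos d hd1
  have spec := hN0f2 d hd1 hd9
  have hN01 := hN0f1 d
  have hXd := hXge d (Finset.mem_Icc.2 ⟨hd1, hd9⟩)
  have hX0 : (0:ℝ) ≤ X := by rw [hX_def]; exact Finset.sum_nonneg hXnn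
  have htreal : (s:ℝ) + 1 ≤ (t:ℝ) := by exact_mod_cast hst
  have hMsr : (M:ℝ) ≤ (s:ℝ) := by exact_mod_cast hMs
  have hM2r : (2:ℝ) ≤ (M:ℝ) := by exact_mod_cast hM2
  have h9cr : (t:ℝ) - (s:ℝ) - 1 ≤ 9 * (c:ℝ) := by
    have heq : t - s - 1 = t - (s+1) := by omega
    rw [heq] at h9c
    have h' : ((t - (s+1) : ℕ):ℝ) ≤ ((9*c : ℕ):ℝ) := Nat.cast_le.2 h9c
    rw [Nat.cast_sub hst] at h'
    push_cast at h'
    linarith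
  have hc1 : ((t:ℝ)-1)*(1-r) ≤ 9*(c:ℝ) := by linarith only [h9cr, hsr]
  have hBnc : (c:ℝ) ≤ (Bn:ℝ) := by
    have : c ≤ Bn := by omega
    exact_mod_cast this
  have hBnr : (Bn:ℝ) ≤ (t:ℝ) := by exact_mod_cast hBnt
  have hMt : (M:ℝ) ≤ (t:ℝ) - 1 := by linarith
  have hMtr : (M:ℝ)*(1-r) ≤ ((t:ℝ)-1)*(1-r) :=
    mul_le_mul_of_nonneg_right hMt (by linarith)
  have hcX : 2*(X+1) ≤ (c:ℝ) := by linarith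
  have hN0X : (N0f d : ℝ) ≤ X := hXd.1
  have hN0Bn : N0f d ≤ Bn := by
    have h' : ((N0f d):ℝ) ≤ (Bn:ℝ) := by linarith
    exact_mod_cast h'
  have hBn1 : (1:ℝ) ≤ (Bn:ℝ) := by
    have : 1 ≤ Bn := le_trans hN01 hN0Bn
    exact_mod_cast this
  have specB := spec Bn hN0Bn
  have hFABn : (F d A : ℝ) = (F d Bn : ℝ) := by exact_mod_cast hFeq.symm
  have hFB1 : benfordP d * Bn - (benfordP d * κ/4)*Bn ≤ (F d Bn : ℝ) := by
    have h' := abs_le.1 specB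
    linarith only [h'.1]
  -- kappa bound : κ * Bn ≤ c
  have ht2 : (2:ℝ) ≤ (t:ℝ) := by linarith only [htreal, hMsr, hM2r]
  have hcκ : κ * (Bn:ℝ) ≤ (c:ℝ) := by
    have hA1 : (1-r)*(t:ℝ) ≤ (1-r)*(2*(t:ℝ)-2) :=
      mul_le_mul_of_nonneg_left (by linarith only [ht2]) (by linarith only [hr1])
    have hA2 : (1-r)*(2*(t:ℝ)-2) = 2*(((t:ℝ)-1)*(1-r)) := by ring
    have hA3 : (1-r)*(t:ℝ) ≤ 18*(c:ℝ) := by rw [hA2] at hA1; linarith only [hA1, hc1]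
    have hk1 : κ*(Bn:ℝ) ≤ κ*(t:ℝ) := mul_le_mul_of_nonneg_left hBnr hκ.le
    have hk2 : κ*(t:ℝ) = (1-r)*(t:ℝ)/18 := by rw [hκ_def]; ring
    linarith only [hk1, hk2, hA3]
  rcases le_or_gt (N0f d) A with hAc | hAc
  · have specA := spec A hAc
    have e1 : (F d A : ℝ) ≤ benfordP d * A + (benfordP d * κ/4)*A := by
      have h' := abs_le.1 specA
      linarith only [h'.2]
    have hAeq : (A:ℝ) = (Bn:ℝ) - (c:ℝ) := by
      have h' : ((A:ℕ):ℝ) + c = Bn := by exact_mod_cast hsplit.symm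
      linarith only [h']
    have e3 : benfordP d * c + (benfordP d * κ/4)*c ≤ (benfordP d * κ/2)*Bn := by
      rw [hAeq] at e1
      have hthis := hFB1
      rw [← hFABn] at hthis
      nlinarith [e1, hthis]
    have m1 : benfordP d * (κ * Bn) ≤ benfordP d * c :=
      mul_le_mul_of_nonneg_left hcκ hPd.le
    have nn : (0:ℝ) ≤ benfordP d * κ * c :=
      mul_nonneg (mul_nonneg hPd.le hκ.le) (Nat.cast_nonneg c)
    have posb : (0:ℝ) < benfordP d * κ * (Bn:ℝ) := by
      apply mul_pos (mul_pos hPd hκ)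
      linarith only [hBn1]
    linarith only [e3, m1, nn, posb]
  · have hFA_le : (F d A : ℝ) ≤ (A:ℝ) := by exact_mod_cast hFle d A
    have hAN0 : (A:ℝ) < (N0f d : ℝ) := by exact_mod_cast hAc
    have hX2 : 2*(N0f d : ℝ) ≤ X * benfordP d := by
      have h' := hXd.2
      rw [div_le_iff₀ hPd] at h'
      linarith
    have hPBn : (0:ℝ) ≤ benfordP d * Bn := mul_nonneg hPd.le (by linarith only [hBn1])
    have hκ72 : (benfordP d * κ/4)*(Bn:ℝ) ≤ (benfordP d/72)*(Bn:ℝ) := by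
      have h' : κ/4 ≤ 1/72 := by linarith only [hκ1]
      have h2 := mul_le_mul_of_nonneg_right h' hPBn
      linarith only [h2]
    have u1 : (benfordP d/2)*(Bn:ℝ) < (N0f d : ℝ) := by
      linarith only [hFB1, hFABn, hFA_le, hAN0, hκ72, hPBn]
    have u3 : benfordP d * (2*(X+1)) ≤ benfordP d * (Bn:ℝ) :=
      mul_le_mul_of_nonneg_left (by linarith only [hcX, hBnc]) hPd.le
    have hPX : (0:ℝ) ≤ benfordP d * X := mul_nonneg hPd.le hX0
    linarith only [u1, u3, hX2, hPX, hPd]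
end

section
/- The sequence of factorials {n!} is not locally Benford distributed of order 2 and does not have Benford distributed waiting times. -/
open Filter

section FactorialBenfordAux

/-- Nat version of leading digit. -/
def LD (d x : ℕ) : Prop := ∃ K : ℕ, d * 10 ^ K ≤ x ∧ x < (d + 1) * 10 ^ K

lemma hasLeadingDigit_nat {m d : ℕ} (hm : 1 ≤ m) (hd9 : d ≤ 9) :
    HasLeadingDigit (m : ℝ) d ↔ LD d m := by
  constructor
  · rintro ⟨k, h1, h2⟩
    have hk : 0 ≤ k := by
      by_contra hneg
      push_neg at hneg
      have hk1 : k + 1 ≤ 0 := by omega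
      have hle : (10:ℝ) ^ (k+1) ≤ (10:ℝ) ^ (0:ℤ) := zpow_le_zpow_right₀ (by norm_num) hk1
      have hzp : (0:ℝ) < (10:ℝ) ^ k := zpow_pos (by norm_num) k
      have hd10 : ((d:ℝ) + 1) ≤ 10 := by
        have : (d:ℝ) ≤ 9 := by exact_mod_cast hd9
        linarith
      have h3 : (m:ℝ) < 10 * 10 ^ k := lt_of_lt_of_le h2 (by nlinarith)
      rw [show (10:ℝ) * 10 ^ k = 10 ^ (k+1) by rw [zpow_add_one₀ (by norm_num : (10:ℝ) ≠ 0)]; ring] at h3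
      have : (m:ℝ) < 1 := by
        calc (m:ℝ) < 10 ^ (k+1) := h3
        _ ≤ 10 ^ (0:ℤ) := hle
        _ = 1 := by norm_num
      have : (1:ℝ) ≤ (m:ℝ) := by exact_mod_cast hm
      linarith
    refine ⟨k.toNat, ?_, ?_⟩
    · have : ((d * 10 ^ k.toNat : ℕ) : ℝ) ≤ (m : ℝ) := by
        push_cast
        rw [show ((10:ℝ) ^ k.toNat) = (10:ℝ) ^ k by rw [← zpow_natCast]; congr 1; omega]
        exact h1
      exact_mod_cast this
    · have : (m : ℝ) < (((d + 1) * 10 ^ k.toNat : ℕ) : ℝ) := by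
        push_cast
        rw [show ((10:ℝ) ^ k.toNat) = (10:ℝ) ^ k by rw [← zpow_natCast]; congr 1; omega]
        exact h2
      exact_mod_cast this
  · rintro ⟨K, h1, h2⟩
    refine ⟨(K : ℤ), ?_, ?_⟩
    · rw [zpow_natCast]
      exact_mod_cast h1
    · rw [zpow_natCast]
      exact_mod_cast h2

/-- From `d₀·10^Q ≤ x < 10^(Q+1)` with `1 ≤ d ≤ d₀`, digit of `x` is not `< d₀` style
exclusion: if `2·10^Q ≤ x < 10^(Q+1)` then `x` does not have leading digit 1. -/
lemma not_LD_one {x Q : ℕ} (h1 : 2 * 10 ^ Q ≤ x) (h2 : x < 10 ^ (Q + 1)) : ¬ LD 1 x := by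
  rintro ⟨K, hK1, hK2⟩
  rcases lt_or_ge K (Q+1) with h | h
  · have : K ≤ Q := by omega
    have : (2:ℕ) * 10 ^ K ≤ 2 * 10 ^ Q := by
      have := Nat.pow_le_pow_right (by norm_num : 1 ≤ 10) this
      omega
    omega
  · have : (10:ℕ) ^ (Q+1) ≤ 10 ^ K := Nat.pow_le_pow_right (by norm_num) h
    omega

lemma not_LD_nine {x Q : ℕ} (h1 : 10 ^ Q ≤ x) (h2 : x < 9 * 10 ^ Q) : ¬ LD 9 x := by
  rintro ⟨K, hK1, hK2⟩
  rcases lt_or_ge K Q with h | h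
  · have hKQ : K + 1 ≤ Q := by omega
    have : (10:ℕ) ^ (K+1) ≤ 10 ^ Q := Nat.pow_le_pow_right (by norm_num) hKQ
    have : x < 10 * 10 ^ K := by omega
    have : (10:ℕ) * 10 ^ K = 10 ^ (K+1) := by ring
    omega
  · have : (9:ℕ) * 10 ^ Q ≤ 9 * 10 ^ K := by
      have := Nat.pow_le_pow_right (by norm_num : 1 ≤ 10) h
      omega
    omega

/-- Part 1 key: in the window `10^j ≤ n ≤ 4·10^j` (j ≥ 1), if `n!` has digit 1 then
`(n+1)!` does not have digit 9. -/
lemma key1 {j n : ℕ} (hj : 1 ≤ j) (h1 : 10 ^ j ≤ n) (h2 : n ≤ 4 * 10 ^ j)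
    (hd : LD 1 (n.factorial)) : ¬ LD 9 ((n+1).factorial) := by
  obtain ⟨K, hK1, hK2⟩ := hd
  rw [Nat.factorial_succ]
  have h10j : (2:ℕ) ≤ 10 ^ j := by
    calc (2:ℕ) ≤ 10 ^ 1 := by norm_num
    _ ≤ 10 ^ j := Nat.pow_le_pow_right (by norm_num) hj
  apply not_LD_nine (Q := j + K)
  · calc (10:ℕ) ^ (j + K) = 10 ^ j * 10 ^ K := by ring
    _ ≤ (n+1) * (1 * 10 ^ K) := by
        have : 10 ^ j ≤ n + 1 := by omega
        calc 10 ^ j * 10 ^ K ≤ (n+1) * 10 ^ K := Nat.mul_le_mul_right _ this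
        _ = (n+1) * (1 * 10 ^ K) := by ring
    _ ≤ (n+1) * n.factorial := Nat.mul_le_mul_left _ hK1
  · calc (n+1) * n.factorial < (n+1) * (2 * 10 ^ K) :=
        mul_lt_mul_of_pos_left (by omega) (by omega)
    _ ≤ 9 * 10 ^ (j + K) := by
        have : (n+1) * (2 * 10 ^ K) = (2 * (n+1)) * 10 ^ K := by ring
        rw [this]
        have h9 : 2 * (n+1) ≤ 9 * 10 ^ j := by omega
        calc (2 * (n+1)) * 10 ^ K ≤ (9 * 10 ^ j) * 10 ^ K := Nat.mul_le_mul_right _ h9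
        _ = 9 * 10 ^ (j + K) := by ring

/-- Part 2 key: in the window `10^(i+2) ≤ n`, `n+2 ≤ 102·10^i`, digit-1 occurrences
cannot be two apart without the middle one. -/
lemma key2 {i n : ℕ} (h1 : 10 ^ (i+2) ≤ n) (h2 : n + 2 ≤ 102 * 10 ^ i)
    (ha : LD 1 n.factorial) (hc : LD 1 (n+2).factorial) : LD 1 (n+1).factorial := by
  obtain ⟨K, hK1, hK2⟩ := ha
  by_cases hb : (n+1).factorial < 2 * 10 ^ (K + (i+2))
  · refine ⟨K + (i+2), ?_, by omega⟩
    rw [Nat.factorial_succ]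
    calc (1:ℕ) * 10 ^ (K + (i+2)) = 10 ^ (i+2) * (1 * 10 ^ K) := by ring
    _ ≤ (n+1) * (1 * 10 ^ K) := Nat.mul_le_mul_right _ (by omega)
    _ ≤ (n+1) * n.factorial := Nat.mul_le_mul_left _ hK1
  · exfalso
    push_neg at hb
    apply not_LD_one (Q := K + 2*i + 4) _ _ hc
    · calc (2:ℕ) * 10 ^ (K + 2*i + 4) = 10 ^ (i+2) * (2 * 10 ^ (K + (i+2))) := by ring
      _ ≤ (n+2) * (2 * 10 ^ (K + (i+2))) := Nat.mul_le_mul_right _ (by omega)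
      _ ≤ (n+2) * (n+1).factorial := Nat.mul_le_mul_left _ hb
      _ = (n+2).factorial := (Nat.factorial_succ _).symm
    · have hfs : (n+2).factorial = (n+2) * ((n+1) * n.factorial) := by
        rw [Nat.factorial_succ, Nat.factorial_succ]
      rw [hfs]
      have hn2 : n + 2 ≤ 102 * 10 ^ i := h2
      have hn1 : n + 1 ≤ 102 * 10 ^ i := by omega
      calc (n+2) * ((n+1) * n.factorial)
          ≤ (102 * 10 ^ i) * ((102 * 10 ^ i) * n.factorial) := by
            apply Nat.mul_le_mul hn2 (Nat.mul_le_mul_right _ hn1)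
      _ < (102 * 10 ^ i) * ((102 * 10 ^ i) * (2 * 10 ^ K)) := by
            apply mul_lt_mul_of_pos_left _ (by positivity)
            apply mul_lt_mul_of_pos_left _ (by positivity)
            omega
      _ = 20808 * 10 ^ (K + 2*i) := by ring
      _ < 10 ^ (K + 2*i + 4 + 1) := by
            have : (10:ℕ) ^ (K + 2*i + 4 + 1) = 100000 * 10 ^ (K + 2*i) := by ring
            rw [this]
            have : (0:ℕ) < 10 ^ (K + 2*i) := by positivity
            nlinarith

noncomputable def fE (n : ℕ) : ℕ := Nat.log 10 n.factorial

lemma fE_le (n : ℕ) : 10 ^ (fE n) ≤ n.factorial :=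
  Nat.pow_log_le_self 10 n.factorial_ne_zero

lemma lt_fE (n : ℕ) : n.factorial < 10 ^ (fE n + 1) :=
  Nat.lt_pow_succ_log_self (by norm_num) _

lemma fE_mono_fact {a b : ℕ} (h : 10 ^ a ≤ b.factorial) : a ≤ fE b :=
  (Nat.le_log_iff_pow_le (by norm_num) b.factorial_ne_zero).2 h

lemma fact_lt_fE {a b : ℕ} (h : b.factorial < 10 ^ a) : fE b < a :=
  (Nat.log_lt_iff_lt_pow (by norm_num) b.factorial_ne_zero).2 h

/-- In the window, the exponent increases by at most `i+3` per step. -/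
lemma stepE_b {i n : ℕ} (h1 : 10 ^ (i+2) ≤ n) (h2 : n + 1 ≤ 102 * 10 ^ i) :
    fE (n+1) ≤ fE n + (i + 3) := by
  have : (n+1).factorial < 10 ^ (fE n + (i + 3) + 1) := by
    rw [Nat.factorial_succ]
    calc (n+1) * n.factorial ≤ (102 * 10 ^ i) * n.factorial := Nat.mul_le_mul_right _ h2
    _ < (102 * 10 ^ i) * 10 ^ (fE n + 1) := by
        exact mul_lt_mul_of_pos_left (lt_fE n) (by positivity)
    _ ≤ 10 ^ (fE n + (i + 3) + 1) := by
        have e : (10:ℕ) ^ (fE n + (i + 3) + 1) = 1000 * 10 ^ i * 10 ^ (fE n + 1) := by ring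
        rw [e]
        exact Nat.mul_le_mul_right _ (by nlinarith [pow_pos (by norm_num : (0:ℕ) < 10) i])
  have := fact_lt_fE this
  omega

/-- If the exponent jumps by `i+3` (a wrap), the new factorial has leading digit 1. -/
lemma stepE_c {i n : ℕ} (h1 : 10 ^ (i+2) ≤ n) (h2 : n + 1 ≤ 102 * 10 ^ i)
    (hw : fE n + (i + 3) ≤ fE (n+1)) : LD 1 ((n+1).factorial) := by
  refine ⟨fE (n+1), by simpa using fE_le (n+1), ?_⟩
  have : (n+1).factorial < 2 * 10 ^ (fE n + (i+3)) := by
    rw [Nat.factorial_succ]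
    calc (n+1) * n.factorial ≤ (102 * 10 ^ i) * n.factorial := Nat.mul_le_mul_right _ h2
    _ < (102 * 10 ^ i) * 10 ^ (fE n + 1) := mul_lt_mul_of_pos_left (lt_fE n) (by positivity)
    _ ≤ 2 * 10 ^ (fE n + (i+3)) := by
        have e : (2:ℕ) * 10 ^ (fE n + (i + 3)) = 200 * 10 ^ i * 10 ^ (fE n + 1) := by ring
        rw [e]
        exact Nat.mul_le_mul_right _ (by nlinarith [pow_pos (by norm_num : (0:ℕ) < 10) i])
  have hb : fE (n+1) ≤ fE n + (i+3) := stepE_b h1 h2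
  have he : fE (n+1) = fE n + (i+3) := le_antisymm hb hw
  rw [he]
  omega

lemma fact_mul_pow_le (a b : ℕ) (hb : b ≤ a + 1) : ∀ k, a.factorial * b ^ k ≤ (a + k).factorial := by
  intro k
  induction k with
  | zero => simp
  | succ k ih =>
      have : a + (k+1) = (a + k) + 1 := by ring
      rw [this, Nat.factorial_succ, pow_succ]
      calc a.factorial * (b ^ k * b) = (a.factorial * b ^ k) * b := by ring
      _ ≤ (a+k).factorial * b := Nat.mul_le_mul_right _ ih
      _ ≤ (a+k).factorial * (a + k + 1) := Nat.mul_le_mul_left _ (by omega)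
      _ = (a + k + 1) * (a+k).factorial := by ring

lemma pow101 (T : ℕ) : 10 ^ (T / 233) * 100 ^ T ≤ 101 ^ T := by
  have base : 10 * 100 ^ 233 ≤ 101 ^ 233 := by norm_num
  obtain ⟨q, r, hr, hT⟩ : ∃ q r, r < 233 ∧ T = 233 * q + r :=
    ⟨T / 233, T % 233, Nat.mod_lt _ (by norm_num), by omega⟩
  have hq : T / 233 = q := by omega
  subst hT
  rw [hq]
  calc 10 ^ q * 100 ^ (233 * q + r) = (10 * 100 ^ 233) ^ q * 100 ^ r := by
        rw [pow_add, mul_pow, ← pow_mul]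
        ring
  _ ≤ (101 ^ 233) ^ q * 101 ^ r := by
      exact Nat.mul_le_mul (Nat.pow_le_pow_left base q) (Nat.pow_le_pow_left (by norm_num) r)
  _ = 101 ^ (233 * q + r) := by rw [← pow_mul, ← pow_add]

/-- Exponent gain over the window `[10^(i+2), 102·10^i]` exceeds the trivial
`(i+2)` per step by at least `10^i/233`. -/
lemma E_window_lb (i : ℕ) :
    fE (10 ^ (i+2)) + (i+2) * (2 * 10 ^ i) + 10 ^ i / 233 ≤ fE (102 * 10 ^ i) := by
  set T := 10 ^ i with hT
  have hs : (10:ℕ) ^ (i+2) = 100 * T := by rw [hT, pow_add]; ring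
  have h1 : (10 ^ (i+2)).factorial * (10 ^ (i+2)) ^ T ≤ (101 * T).factorial := by
    have := fact_mul_pow_le (10 ^ (i+2)) (10 ^ (i+2)) (by omega) T
    have e : 10 ^ (i+2) + T = 101 * T := by rw [hs]; ring
    rwa [e] at this
  have h2 : (101 * T).factorial * (101 * T) ^ T ≤ (102 * T).factorial := by
    have := fact_mul_pow_le (101 * T) (101 * T) (by omega) T
    have e : 101 * T + T = 102 * T := by ring
    rwa [e] at this
  have key : 10 ^ (fE (10 ^ (i+2)) + (i+2) * (2*T) + T / 233) ≤ (102 * T).factorial := by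
    have hTpos : 0 < T := by positivity
    calc 10 ^ (fE (10 ^ (i+2)) + (i+2) * (2*T) + T / 233)
        = 10 ^ (fE (10 ^ (i+2))) * ((10 ^ (i+2)) ^ T * (10 ^ (T / 233) * 100 ^ T * 10 ^ (i*T))) := by
          have e100 : (100:ℕ) = 10 ^ 2 := by norm_num
          rw [e100]
          simp only [← pow_mul, ← pow_add]
          congr 1
          ring
    _ ≤ (10 ^ (i+2)).factorial * ((10 ^ (i+2)) ^ T * (101 ^ T * 10 ^ (i*T))) := by
          apply Nat.mul_le_mul (fE_le _)
          apply Nat.mul_le_mul_left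
          exact Nat.mul_le_mul_right _ (pow101 T)
    _ = ((10 ^ (i+2)).factorial * (10 ^ (i+2)) ^ T) * (101 * T) ^ T := by
          rw [hT, mul_pow, ← pow_mul]
          ring
    _ ≤ (101 * T).factorial * (101 * T) ^ T := Nat.mul_le_mul_right _ h1
    _ ≤ (102 * T).factorial := h2
  have := fE_mono_fact key
  omega

open scoped Classical

/-- The occurrence predicate for digit 1 of factorials. -/
def fq (n : ℕ) : Prop := 1 ≤ n ∧ HasLeadingDigit ((n.factorial : ℝ)) 1

lemma fq_iff {n : ℕ} (hn : 1 ≤ n) : fq n ↔ LD 1 n.factorial := by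
  unfold fq
  rw [and_iff_right hn, hasLeadingDigit_nat n.factorial_pos (by norm_num)]

lemma window_count (i : ℕ) : ∀ k, 10 ^ (i+2) + k ≤ 102 * 10 ^ i →
    fE (10 ^ (i+2) + k) + Nat.count fq (10 ^ (i+2) + 1)
      ≤ fE (10 ^ (i+2)) + (i+2) * k + Nat.count fq (10 ^ (i+2) + k + 1) := by
  intro k
  induction k with
  | zero => intro _; simp
  | succ k ih =>
      intro hk
      have hp2 : (1:ℕ) ≤ 10 ^ (i+2) := Nat.one_le_pow _ _ (by norm_num)
      have hpi : (1:ℕ) ≤ 10 ^ i := Nat.one_le_pow _ _ (by norm_num)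
      have hcond1 : 10 ^ (i+2) ≤ 10 ^ (i+2) + k := by omega
      have hcond2 : (10 ^ (i+2) + k) + 1 ≤ 102 * 10 ^ i := by omega
      have hstep : fE (10 ^ (i+2) + k + 1) ≤ fE (10 ^ (i+2) + k) + (i+3) := stepE_b hcond1 hcond2
      have ihh := ih (by omega)
      have hcs : Nat.count fq (10 ^ (i+2) + k + 1 + 1) = Nat.count fq (10 ^ (i+2) + k + 1) + if fq (10 ^ (i+2) + k + 1) then 1 else 0 :=
        Nat.count_succ _ _
      simp only [← Nat.add_assoc, Nat.mul_succ]
      by_cases hf : fq (10 ^ (i+2) + k + 1)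
      · rw [hcs, if_pos hf]
        omega
      · have hnw : fE (10 ^ (i+2) + k + 1) ≤ fE (10 ^ (i+2) + k) + (i+2) := by
          rcases Nat.lt_or_ge (fE (10 ^ (i+2) + k + 1)) (fE (10 ^ (i+2) + k) + (i+3)) with h | h
          · omega
          · exfalso
            have h1n : (1:ℕ) ≤ 10 ^ (i+2) + k + 1 := by omega
            exact hf ((fq_iff h1n).mpr (stepE_c hcond1 hcond2 h))
        rw [hcs, if_neg hf]
        omega

lemma occ_lb (i : ℕ) :
    Nat.count fq (10 ^ (i+2) + 1) + 10 ^ i / 233 ≤ Nat.count fq (102 * 10 ^ i + 1) := by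
  have hwin := window_count i (2 * 10 ^ i) (by rw [pow_add]; ring_nf; omega)
  have hE := E_window_lb i
  have e : 10 ^ (i+2) + 2 * 10 ^ i = 102 * 10 ^ i := by rw [pow_add]; ring
  rw [e] at hwin
  have hpi : (1:ℕ) ≤ 10 ^ i := Nat.one_le_pow _ _ (by norm_num)
  omega

lemma count_stable {p : ℕ → Prop} [DecidablePred p] {a : ℕ} :
    ∀ b, a ≤ b → (∀ m, a ≤ m → m < b → ¬ p m) → Nat.count p b ≤ Nat.count p a := by
  intro b
  induction b with
  | zero => intro h _; simp_all
  | succ b ih =>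
      intro hab h
      rcases Nat.lt_or_ge a (b+1) with hlt | hge
      · have hab' : a ≤ b := by omega
        have hnb : ¬ p b := h b hab' (by omega)
        rw [Nat.count_succ, if_neg hnb]
        simpa using ih hab' (fun m hm hmb => h m hm (by omega))
      · have : a = b + 1 := by omega
        simp [this]

lemma exists_fq_between {a b : ℕ} (h : Nat.count fq a < Nat.count fq b) :
    ∃ m, a ≤ m ∧ m < b ∧ fq m := by
  by_contra hc
  push_neg at hc
  rcases Nat.lt_or_ge b a with hba | hab
  · exact absurd (Nat.count_monotone fq (le_of_lt hba)) (by omega)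
  · exact absurd (count_stable b hab hc) (by omega)

lemma fq_infinite : (setOf fq).Infinite := by
  apply Set.infinite_of_forall_exists_gt
  intro a
  have h := occ_lb (a + 3)
  have h233 : (1:ℕ) ≤ 10 ^ (a+3) / 233 := by
    have h1 : (233:ℕ) ≤ 10 ^ (a+3) :=
      le_trans (by norm_num : (233:ℕ) ≤ 10 ^ 3) (Nat.pow_le_pow_right (by norm_num) (by omega))
    exact (Nat.one_le_div_iff (by norm_num)).2 h1
  have hlt : Nat.count fq (10 ^ (a+3+2) + 1) < Nat.count fq (102 * 10 ^ (a+3) + 1) := by omega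
  obtain ⟨m, hm1, hm2, hm3⟩ := exists_fq_between hlt
  refine ⟨m, hm3, ?_⟩
  have ha : a < 10 ^ (a+3+2) := lt_of_lt_of_le (Nat.lt_pow_self (n := a) (by norm_num))
    (Nat.pow_le_pow_right (by norm_num) (by omega))
  omega

lemma fq_one : fq 1 := by
  refine ⟨le_refl 1, ⟨0, ?_, ?_⟩⟩ <;> norm_num [Nat.factorial]

lemma count_fq_le (M : ℕ) : Nat.count fq (M + 1) ≤ M := by
  have h0 : ¬ fq 0 := by simp [fq]
  rw [Nat.count_succ']
  rw [if_neg h0]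
  simpa using (Nat.count_le (p := fun k => fq (k + 1)) (n := M))

lemma one_le_count_fq {M : ℕ} (hM : 2 ≤ M) : 1 ≤ Nat.count fq M := by
  have : Nat.count fq 2 ≤ Nat.count fq M := Nat.count_monotone fq hM
  have h2 : Nat.count fq 2 = Nat.count fq 1 + 1 := by
    rw [Nat.count_succ, if_pos fq_one]
  omega

lemma no_two_gap {i m : ℕ}
    (hm1 : Nat.count fq (10 ^ (i+2) + 1) + 1 ≤ m)
    (hm2 : m + 1 ≤ Nat.count fq (102 * 10 ^ i + 1)) :
    waitingTime (fun n : ℕ => (n.factorial : ℝ)) 1 m ≠ 2 := by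
  intro hw
  have hp2 : (1:ℕ) ≤ 10 ^ (i+2) := Nat.one_le_pow _ _ (by norm_num)
  have hpi : (1:ℕ) ≤ 10 ^ i := Nat.one_le_pow _ _ (by norm_num)
  have hinf : (setOf fq).Infinite := fq_infinite
  have hwx : Nat.nth fq m - Nat.nth fq (m-1) = 2 := hw
  have hm0 : 1 ≤ m := by omega
  have hxy : Nat.nth fq (m-1) < Nat.nth fq m := (Nat.nth_lt_nth hinf).2 (by omega)
  set x := Nat.nth fq (m-1) with hxdef
  have hy : Nat.nth fq m = x + 2 := by omega
  have hx_lb : 10 ^ (i+2) + 1 ≤ x := (Nat.count_le_iff_le_nth hinf).1 (by omega)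
  have hy_ub : Nat.nth fq m < 102 * 10 ^ i + 1 := (Nat.lt_nth_iff_count_lt hinf).1 (by omega)
  have hfx : fq x := Nat.nth_mem_of_infinite hinf _
  have hfy : fq (x + 2) := hy ▸ Nat.nth_mem_of_infinite hinf m
  have hmid : fq (x + 1) := by
    have hLD := key2 (i := i) (n := x) (by omega) (by omega)
      ((fq_iff (by omega : (1:ℕ) ≤ x)).mp hfx) ((fq_iff (by omega : (1:ℕ) ≤ x + 2)).mp hfy)
    exact (fq_iff (by omega : (1:ℕ) ≤ x + 1)).mpr hLD
  have hcx : Nat.count fq (x + 1) = m := by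
    have h1 : Nat.count fq (x + 1) = (m-1) + 1 := Nat.count_nth_succ_of_infinite hinf (m-1)
    omega
  have hcx2 : Nat.count fq (x + 1 + 1) = m + 1 := by
    rw [Nat.count_succ, if_pos hmid, hcx]
  have : Nat.nth fq m < x + 1 + 1 := (Nat.lt_nth_iff_count_lt hinf).1 (by omega)
  omega

lemma part1 : ¬ LocallyBenfordDistributed (fun n : ℕ => (n.factorial : ℝ)) 2 := by
  intro h
  have hL := h ![1, 9] (by intro i; fin_cases i <;> norm_num)
  set L := ∏ i : Fin 2, benfordP (![1, 9] i) with hLdef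
  have hLval : L = benfordP 1 * benfordP 9 := by
    rw [hLdef, Fin.prod_univ_two]
    simp
  have hLpos : 0 < L := by
    rw [hLval]
    have h1 : 0 < benfordP 1 := Real.logb_pos (by norm_num) (by norm_num)
    have h9 : 0 < benfordP 9 := Real.logb_pos (by norm_num) (by norm_num [benfordP])
    exact mul_pos h1 h9
  set D : ℕ → ℕ := fun N => Nat.card {n : ℕ | 1 ≤ n ∧ n ≤ N ∧
      ∀ i : Fin 2, HasLeadingDigit ((fun n : ℕ => (n.factorial : ℝ)) (n + (i : ℕ))) (![1, 9] i)}
    with hDdef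
  -- set stabilization
  have hset : ∀ j : ℕ, 1 ≤ j → D (4 * 10 ^ j) = D (10 ^ j) := by
    intro j hj
    have : {n : ℕ | 1 ≤ n ∧ n ≤ 4 * 10 ^ j ∧
        ∀ i : Fin 2, HasLeadingDigit ((fun n : ℕ => (n.factorial : ℝ)) (n + (i : ℕ))) (![1, 9] i)}
        = {n : ℕ | 1 ≤ n ∧ n ≤ 10 ^ j ∧
        ∀ i : Fin 2, HasLeadingDigit ((fun n : ℕ => (n.factorial : ℝ)) (n + (i : ℕ))) (![1, 9] i)} := by
      ext n
      simp only [Set.mem_setOf_eq]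
      constructor
      · rintro ⟨h1, h2, h3⟩
        refine ⟨h1, ?_, h3⟩
        by_contra hgt
        push_neg at hgt
        have hd0 := h3 0
        have hd1 := h3 1
        simp only [Matrix.cons_val_zero, Matrix.cons_val_one, Matrix.head_cons,
          Fin.val_zero, Fin.val_one, Nat.add_zero] at hd0 hd1
        have hLD0 : LD 1 n.factorial :=
          (hasLeadingDigit_nat n.factorial_pos (by norm_num)).1 hd0
        have hLD1 : LD 9 (n+1).factorial :=
          (hasLeadingDigit_nat (n+1).factorial_pos (by norm_num)).1 hd1
        exact key1 hj (by omega) h2 hLD0 hLD1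
      · rintro ⟨h1, h2, h3⟩
        have hpow : (1:ℕ) ≤ 10 ^ j := Nat.one_le_pow _ _ (by norm_num)
        exact ⟨h1, by omega, h3⟩
    rw [hDdef]
    simp only
    rw [this]
  -- limits
  have hApow : Tendsto (fun j : ℕ => 10 ^ j) atTop atTop :=
    tendsto_pow_atTop_atTop_of_one_lt (by norm_num)
  have hBpow : Tendsto (fun j : ℕ => 4 * 10 ^ j) atTop atTop :=
    hApow.const_mul_atTop' (by norm_num)
  have hA : Tendsto (fun j : ℕ => (D (10 ^ j) : ℝ) / ((10 ^ j : ℕ) : ℝ)) atTop (nhds L) :=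
    hL.comp hApow
  have hB : Tendsto (fun j : ℕ => (D (4 * 10 ^ j) : ℝ) / ((4 * 10 ^ j : ℕ) : ℝ)) atTop (nhds L) :=
    hL.comp hBpow
  have hcongr : (fun j : ℕ => (D (4 * 10 ^ j) : ℝ) / ((4 * 10 ^ j : ℕ) : ℝ))
      =ᶠ[atTop] (fun j : ℕ => ((D (10 ^ j) : ℝ) / ((10 ^ j : ℕ) : ℝ)) / 4) := by
    filter_upwards [eventually_ge_atTop 1] with j hj
    rw [hset j hj]
    have hp : ((10 ^ j : ℕ) : ℝ) ≠ 0 := by positivity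
    push_cast
    rw [div_div]
    congr 1
    ring
  have hB4 : Tendsto (fun j : ℕ => (D (4 * 10 ^ j) : ℝ) / ((4 * 10 ^ j : ℕ) : ℝ)) atTop
      (nhds (L / 4)) := (hA.div_const 4).congr' hcongr.symm
  have : L = L / 4 := tendsto_nhds_unique hB hB4
  nlinarith

lemma part2 : ¬ BenfordWaitingTimes (fun n : ℕ => (n.factorial : ℝ)) := by
  intro h
  have hL := h 1 le_rfl (by norm_num) 2 (by norm_num)
  set L := benfordP 1 * (1 - benfordP 1) ^ (2 - 1) with hLdef
  have hP1 : benfordP 1 = Real.logb 10 2 := by norm_num [benfordP]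
  have hppos : 0 < benfordP 1 := by
    rw [hP1]; exact Real.logb_pos (by norm_num) (by norm_num)
  have hplt : benfordP 1 < 1 := by
    rw [hP1]
    calc Real.logb 10 2 < Real.logb 10 10 :=
        Real.logb_lt_logb (by norm_num) (by norm_num) (by norm_num)
    _ = 1 := Real.logb_self_eq_one (by norm_num)
  have hLpos : 0 < L := by
    rw [hLdef]
    norm_num
    nlinarith
  set C : ℕ → ℕ := fun N => Nat.card {i : ℕ | 1 ≤ i ∧ i ≤ N ∧
      waitingTime (fun n : ℕ => (n.factorial : ℝ)) 1 i = 2} with hCdef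
  set u : ℕ → ℕ := fun i => Nat.count fq (10 ^ (i+2) + 1) with hudef
  set w : ℕ → ℕ := fun i => Nat.count fq (102 * 10 ^ i + 1) with hwdef
  have hwu : ∀ i, u i + 10 ^ i / 233 ≤ w i := fun i => occ_lb i
  have hu1 : ∀ i, 1 ≤ u i := by
    intro i
    have : (2:ℕ) ≤ 10 ^ (i+2) + 1 := by
      have : (1:ℕ) ≤ 10 ^ (i+2) := Nat.one_le_pow _ _ (by norm_num)
      omega
    exact one_le_count_fq this
  have hule : ∀ i, u i ≤ 10 ^ (i+2) := fun i => count_fq_le _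
  have humono : Monotone u := by
    intro a b hab
    exact Nat.count_monotone fq (by
      have := Nat.pow_le_pow_right (by norm_num : 1 ≤ 10) (by omega : a + 2 ≤ b + 2)
      omega)
  have hu_next : ∀ i, 3 ≤ i → u i + 1 ≤ u (i+1) := by
    intro i hi
    have h1 : w i ≤ u (i+1) := by
      apply Nat.count_monotone fq
      have e3 : (10:ℕ) ^ (i+1+2) = 1000 * 10 ^ i := by ring
      have hle : (1:ℕ) ≤ 10 ^ i := Nat.one_le_pow _ _ (by norm_num)
      omega
    have h233 : (1:ℕ) ≤ 10 ^ i / 233 := by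
      have hp : (233:ℕ) ≤ 10 ^ i :=
        le_trans (by norm_num : (233:ℕ) ≤ 10 ^ 3) (Nat.pow_le_pow_right (by norm_num) hi)
      exact (Nat.one_le_div_iff (by norm_num)).2 hp
    have := hwu i
    omega
  have hu_unb : ∀ t : ℕ, t ≤ u (t + 3) := by
    intro t
    induction t with
    | zero => omega
    | succ t ih =>
        have := hu_next (t+3) (by omega)
        have he : t + 1 + 3 = (t + 3) + 1 := by omega
        rw [he]
        omega
  have hu_top : Tendsto u atTop atTop := by
    apply tendsto_atTop_atTop.2
    intro b
    exact ⟨b + 3, fun n hn => le_trans (hu_unb b) (humono hn)⟩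
  set v : ℕ → ℕ := fun i => w i - 1 with hvdef
  have hvi : ∀ i, v i = w i - 1 := fun _ => rfl
  have hw_ge_u : ∀ i, u i ≤ w i := by
    intro i
    apply Nat.count_monotone fq
    have e2 : (10:ℕ) ^ (i+2) = 100 * 10 ^ i := by ring
    have hle : (1:ℕ) ≤ 10 ^ i := Nat.one_le_pow _ _ (by norm_num)
    omega
  have hD1 : ∀ i, 3 ≤ i → 1 ≤ 10 ^ i / 233 := by
    intro i hi
    have hp : (233:ℕ) ≤ 10 ^ i :=
      le_trans (by norm_num : (233:ℕ) ≤ 10 ^ 3) (Nat.pow_le_pow_right (by norm_num) hi)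
    exact (Nat.one_le_div_iff (by norm_num)).2 hp
  have hv_ge : ∀ i, 3 ≤ i → u i ≤ v i := by
    intro i hi
    have := hwu i
    have := hD1 i hi
    have := hvi i
    omega
  have hv_top : Tendsto v atTop atTop :=
    tendsto_atTop_mono' atTop (by filter_upwards [eventually_ge_atTop 3] with i hi; exact hv_ge i hi) hu_top
  -- key counting inequality
  have hCle : ∀ i, C (v i) ≤ C (u i) := by
    intro i
    rw [hCdef]
    simp only
    apply Nat.card_mono
    · exact (Set.finite_Icc 1 (u i)).subset (by
        intro m hm
        simp only [Set.mem_setOf_eq] at hm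
        exact Set.mem_Icc.2 ⟨hm.1, hm.2.1⟩)
    · intro m hm
      simp only [Set.mem_setOf_eq] at hm ⊢
      refine ⟨hm.1, ?_, hm.2.2⟩
      by_contra hgt
      push_neg at hgt
      have hm1 : u i + 1 ≤ m := hgt
      have hm2 : m + 1 ≤ w i := by
        have hmv : m ≤ v i := hm.2.1
        have h1w : 1 ≤ w i := le_trans (hu1 i) (hw_ge_u i)
        have := hvi i
        omega
      exact no_two_gap hm1 hm2 hm.2.2
  -- quantitative gap
  have hgap : ∀ i, 3 ≤ i → u i ≤ 93200 * (v i - u i) := by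
    intro i hi
    have hD : (4:ℕ) ≤ 10 ^ i / 233 := by
      have hp : (233 * 4 :ℕ) ≤ 10 ^ i :=
        le_trans (by norm_num) (Nat.pow_le_pow_right (by norm_num : 1 ≤ 10) hi)
      exact (Nat.le_div_iff_mul_le (by norm_num)).2 (by omega)
    have hDv : 10 ^ i / 233 - 1 ≤ v i - u i := by
      have := hwu i
      have := hw_ge_u i
      have := hvi i
      omega
    have hui : u i ≤ 100 * 10 ^ i := by
      have : (10:ℕ) ^ (i+2) = 100 * 10 ^ i := by rw [pow_add]; ring
      have := hule i
      omega
    omega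
  -- real-valued comparison
  have hvu_real : ∀ i, 3 ≤ i → ((u i : ℝ)) * (1 + 1/93200) ≤ (v i : ℝ) := by
    intro i hi
    have h1 : (u i : ℝ) ≤ 93200 * ((v i : ℝ) - u i) := by
      have := hgap i hi
      have hvge := hv_ge i hi
      have h2 : (u i : ℝ) ≤ 93200 * ((v i - u i : ℕ) : ℝ) := by exact_mod_cast this
      rwa [Nat.cast_sub hvge] at h2
    linarith
  have hCu : Tendsto (fun i => (C (u i) : ℝ) / (u i : ℝ)) atTop (nhds L) := hL.comp hu_top
  have hCv : Tendsto (fun i => (C (v i) : ℝ) / (v i : ℝ)) atTop (nhds L) := hL.comp hv_top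
  have hcomp : ∀ᶠ i in atTop, (C (v i) : ℝ) / (v i : ℝ)
      ≤ ((C (u i) : ℝ) / (u i : ℝ)) * (93200 / 93201) := by
    filter_upwards [eventually_ge_atTop 3] with i hi
    have hupos : (0:ℝ) < (u i : ℝ) := by exact_mod_cast hu1 i
    have hvpos : (0:ℝ) < (v i : ℝ) := lt_of_lt_of_le hupos (by exact_mod_cast hv_ge i hi)
    have hCvu : (C (v i) : ℝ) ≤ (C (u i) : ℝ) := by exact_mod_cast hCle i
    have hkey := hvu_real i hi
    have hCnn : (0:ℝ) ≤ (C (v i) : ℝ) := by positivity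
    have hdpos : (0:ℝ) < (u i : ℝ) * (1 + 1/93200) := by positivity
    calc (C (v i) : ℝ) / (v i : ℝ) ≤ (C (u i) : ℝ) / ((u i : ℝ) * (1 + 1/93200)) :=
          div_le_div₀ (by positivity) hCvu hdpos hkey
    _ = ((C (u i) : ℝ) / (u i : ℝ)) * (93200 / 93201) := by
          have he : (u i:ℝ) * (1 + 1/93200) = (u i : ℝ) * (93201/93200) := by norm_num
          rw [he, div_mul_eq_div_div, div_eq_mul_one_div ((C (u i):ℝ)/(u i : ℝ)) ((93201:ℝ)/93200)]
          norm_num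
  have hlim : L ≤ L * (93200 / 93201) := by
    apply le_of_tendsto_of_tendsto hCv (hCu.mul_const _) hcomp
  nlinarith

end FactorialBenfordAux

/-- The factorials are not locally Benford distributed of order 2 and do not have
Benford distributed waiting times. -/
theorem factorial_not_locallyBenford :
    ¬ LocallyBenfordDistributed (fun n : ℕ => (n.factorial : ℝ)) 2 ∧
      ¬ BenfordWaitingTimes (fun n : ℕ => (n.factorial : ℝ)) :=
  ⟨part1, part2⟩
end

section
/- The sequence {n^n} is not locally Benford distributed of order 2 and does not have Benford distributed waiting times. -/
open Filter

section Aux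
open Real

noncomputable def cB : ℝ := Real.logb 10 2

lemma log10_ge : (2.3:ℝ) ≤ Real.log 10 := by
  have h1 : Real.exp 23 ≤ 10 ^ (10:ℕ) := by
    have : Real.exp 23 = Real.exp 1 ^ (23:ℕ) := by
      rw [← Real.exp_nat_mul]; norm_num
    rw [this]
    calc Real.exp 1 ^ (23:ℕ) ≤ 2.7182818286 ^ (23:ℕ) := by
          apply pow_le_pow_left₀ (le_of_lt (Real.exp_pos 1)) (le_of_lt Real.exp_one_lt_d9)
      _ ≤ 10 ^ (10:ℕ) := by norm_num
  have h2 : (23:ℝ) ≤ Real.log (10 ^ (10:ℕ)) := by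
    rw [Real.le_log_iff_exp_le (by positivity)]; exact h1
  rw [Real.log_pow] at h2
  push_cast at h2; linarith

lemma log10_le : Real.log 10 ≤ 7/3 := by
  have h1 : (10:ℝ) ^ (3:ℕ) ≤ Real.exp 7 := by
    have : Real.exp 7 = Real.exp 1 ^ (7:ℕ) := by
      rw [← Real.exp_nat_mul]; norm_num
    rw [this]
    calc (10:ℝ)^(3:ℕ) ≤ 2.7182818283 ^ (7:ℕ) := by norm_num
      _ ≤ Real.exp 1 ^ (7:ℕ) := by
          apply pow_le_pow_left₀ (by norm_num) (le_of_lt Real.exp_one_gt_d9)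
  have h2 : Real.log (10 ^ (3:ℕ)) ≤ 7 := by
    rw [Real.log_le_iff_le_exp (by positivity)]; exact h1
  rw [Real.log_pow] at h2
  push_cast at h2; linarith

lemma log10_pos : (0:ℝ) < Real.log 10 := by linarith [log10_ge]

lemma cB_eq : cB = Real.log 2 / Real.log 10 := by simp [cB, Real.logb]

lemma cB_gt : 3/10 < cB := by
  rw [cB_eq, lt_div_iff₀ log10_pos]
  have h : Real.log 1000 < Real.log 1024 := Real.log_lt_log (by norm_num) (by norm_num)
  have e1 : Real.log 1000 = 3 * Real.log 10 := by
    rw [show (1000:ℝ) = 10 ^ (3:ℕ) by norm_num, Real.log_pow]; push_cast; ring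
  have e2 : Real.log 1024 = 10 * Real.log 2 := by
    rw [show (1024:ℝ) = 2 ^ (10:ℕ) by norm_num, Real.log_pow]; push_cast; ring
  nlinarith [h, e1, e2]

lemma cB_lt : cB < 1/3 := by
  rw [cB_eq, div_lt_iff₀ log10_pos]
  have h : Real.log 8 < Real.log 10 := Real.log_lt_log (by norm_num) (by norm_num)
  have e1 : Real.log 8 = 3 * Real.log 2 := by
    rw [show (8:ℝ) = 2 ^ (3:ℕ) by norm_num, Real.log_pow]; push_cast; ring
  nlinarith [h, e1]

lemma cB_pos : 0 < cB := by linarith [cB_gt]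

noncomputable def Lf (n : ℕ) : ℝ := (n : ℝ) * Real.logb 10 n

lemma logb_pow_self (n : ℕ) : Real.logb 10 ((n:ℝ) ^ n) = Lf n := by
  rw [Real.logb_pow, Lf]

lemma logb_ten_zpow (k : ℤ) : Real.logb 10 ((10:ℝ) ^ k) = k := by
  rw [← Real.rpow_intCast]
  exact Real.logb_rpow (by norm_num) (by norm_num)

lemma digit1_iff {n : ℕ} (hn : 1 ≤ n) :
    HasLeadingDigit ((n:ℝ) ^ n) 1 ↔ Int.fract (Lf n) < cB := by
  have hnp : (0:ℝ) < n := by exact_mod_cast hn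
  have hx : (0:ℝ) < (n:ℝ) ^ n := pow_pos hnp n
  have hzp : ∀ k : ℤ, (0:ℝ) < (10:ℝ) ^ k := fun k => zpow_pos (by norm_num) k
  constructor
  · rintro ⟨k, h1, h2⟩
    push_cast at h1 h2
    have hlb1 : (k:ℝ) ≤ Lf n := by
      rw [← logb_pow_self, ← logb_ten_zpow k]
      apply Real.logb_le_logb_of_le (by norm_num) (hzp k)
      linarith
    have hlb2 : Lf n < (k:ℝ) + cB := by
      rw [← logb_pow_self]
      have h3 : Real.logb 10 ((n:ℝ)^n) < Real.logb 10 (2 * (10:ℝ)^k) :=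
        Real.logb_lt_logb (by norm_num) hx (by linarith)
      rw [Real.logb_mul (by norm_num) (ne_of_gt (hzp k)), logb_ten_zpow k] at h3
      calc Real.logb 10 ((n:ℝ)^n) < Real.logb 10 2 + k := h3
        _ = (k:ℝ) + cB := by rw [cB]; ring
    have hfl : ⌊Lf n⌋ = k := by
      apply Int.floor_eq_iff.mpr
      exact ⟨hlb1, by have := cB_lt; linarith⟩
    rw [Int.fract, hfl]; linarith
  · intro h
    have hfr : Lf n = ⌊Lf n⌋ + Int.fract (Lf n) := by rw [Int.fract]; ring
    have hf0 : 0 ≤ Int.fract (Lf n) := Int.fract_nonneg _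
    refine ⟨⌊Lf n⌋, ?_, ?_⟩
    · push_cast
      rw [one_mul, ← Real.rpow_intCast]
      calc (10:ℝ) ^ ((⌊Lf n⌋:ℤ):ℝ) ≤ (10:ℝ) ^ (Lf n) := by
            exact (Real.rpow_le_rpow_left_iff (by norm_num)).mpr (by push_cast; exact Int.floor_le _)
        _ = (n:ℝ)^n := by
            rw [← logb_pow_self]; exact Real.rpow_logb (by norm_num) (by norm_num) hx
    · push_cast
      have h10c : (10:ℝ) ^ (cB:ℝ) = 2 := by
        rw [cB]; exact Real.rpow_logb (by norm_num) (by norm_num) (by norm_num)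
      calc (n:ℝ)^n = (10:ℝ) ^ (Lf n) := by
            rw [← logb_pow_self]; exact (Real.rpow_logb (by norm_num) (by norm_num) hx).symm
        _ < (10:ℝ) ^ (((⌊Lf n⌋:ℤ):ℝ) + cB) := by
            apply (Real.rpow_lt_rpow_left_iff (by norm_num)).mpr
            have h' : Lf n - ⌊Lf n⌋ < cB := by rw [Int.fract] at h; exact h
            push_cast; linarith
        _ = (1+1) * 10 ^ ⌊Lf n⌋ := by
            rw [Real.rpow_add (by norm_num), h10c, Real.rpow_intCast]; ring

-- log((n+j)/n) bounds
lemma log_ratio_le {x y : ℝ} (hx : 0 < x) (hxy : x ≤ y) : Real.log y - Real.log x ≤ (y - x) / x := by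
  have hy : 0 < y := lt_of_lt_of_le hx hxy
  have h : Real.log (y / x) ≤ y / x - 1 := Real.log_le_sub_one_of_pos (by positivity)
  rw [Real.log_div (by positivity) (by positivity)] at h
  have : y / x - 1 = (y - x) / x := by field_simp
  linarith [this ▸ h]

lemma log_ratio_ge {x y : ℝ} (hx : 0 < x) (hxy : x ≤ y) : (y - x) / y ≤ Real.log y - Real.log x := by
  have hy : 0 < y := lt_of_lt_of_le hx hxy
  have h : Real.log (x / y) ≤ x / y - 1 := Real.log_le_sub_one_of_pos (by positivity)
  rw [Real.log_div (by positivity) (by positivity)] at h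
  have : x / y - 1 = -((y - x)/y) := by field_simp; ring
  linarith [this ▸ h]

lemma log_pow10 (m : ℕ) : Real.log ((10:ℝ)^m) = m * Real.log 10 := Real.log_pow 10 m

-- Lf difference formula: Lf (n+j) - Lf n expressed via logs
lemma Lf_eq (n : ℕ) (hn : 1 ≤ n) : Lf n = (n:ℝ) * Real.log n / Real.log 10 := by
  rw [Lf, Real.logb]; ring

lemma gapA {m n : ℕ} (hm : 7 ≤ m) (h1 : 102 * 10^m < n) (h2 : n + 2 ≤ 113 * 10^m) :
    ∃ g : ℝ, Lf (n+1) = Lf n + ((m:ℝ)+2) + g ∧ cB < g ∧ g + cB < 1 := by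
  have h10m : (1:ℝ) ≤ (10:ℝ)^m := one_le_pow₀ (by norm_num)
  have hn0 : (10:ℝ)^9 ≤ (n:ℝ) := by
    have h9 : (10:ℕ)^9 ≤ 102 * 10^m := by
      calc (10:ℕ)^9 = 100 * 10^7 := by norm_num
        _ ≤ 102 * 10^m := Nat.mul_le_mul (by norm_num) (Nat.pow_le_pow_right (by norm_num) hm)
    have h9n : (10:ℕ)^9 ≤ n := le_trans h9 (le_of_lt h1)
    exact_mod_cast h9n
  have hnp : (0:ℝ) < n := by positivity
  have hn' : 1 ≤ n := by
    by_contra h; push_neg at h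
    interval_cases n <;> simp_all
  have hn1 : (0:ℝ) < (n:ℝ)+1 := by linarith
  set g : ℝ := Lf (n+1) - Lf n - ((m:ℝ)+2) with hg
  have h1r : (102:ℝ) * 10^m < (n:ℝ) := by exact_mod_cast h1
  have h2r : (n:ℝ) + 2 ≤ 113 * 10^m := by exact_mod_cast h2
  have hd1u : Real.log ((n:ℝ)+1) - Real.log n ≤ 1/(n:ℝ) := by
    have := log_ratio_le hnp (by linarith : (n:ℝ) ≤ (n:ℝ)+1)
    simpa using this
  have hd1l : (1:ℝ)/((n:ℝ)+1) ≤ Real.log ((n:ℝ)+1) - Real.log n := by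
    have := log_ratio_ge hnp (by linarith : (n:ℝ) ≤ (n:ℝ)+1)
    simpa using this
  have hP : (0:ℝ) < 100 * 10^m := by positivity
  have hlogP : Real.log ((100:ℝ) * 10^m) = ((m:ℝ)+2) * Real.log 10 := by
    have : (100:ℝ) * 10^m = 10^(m+2) := by rw [pow_add]; ring
    rw [this, Real.log_pow]; push_cast; ring
  have hd2l : ((m:ℝ)+2) * Real.log 10 ≤ Real.log ((n:ℝ)+1) := by
    rw [← hlogP]
    apply Real.log_le_log hP
    linarith
  have hd2u : Real.log ((n:ℝ)+1) - ((m:ℝ)+2) * Real.log 10 ≤ 13/100 := by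
    rw [← hlogP]
    have := log_ratio_le hP (by linarith : (100:ℝ)*10^m ≤ (n:ℝ)+1)
    have hq : ((n:ℝ)+1 - 100*10^m) / (100*10^m) ≤ 13/100 := by
      rw [div_le_iff₀ hP]; linarith
    linarith
  have hgl : g * Real.log 10
      = (n:ℝ)*(Real.log ((n:ℝ)+1) - Real.log n) + (Real.log ((n:ℝ)+1) - ((m:ℝ)+2) * Real.log 10) := by
    rw [hg, Lf_eq n hn', Lf_eq (n+1) (by omega)]
    push_cast
    field_simp
    ring
  have hnd1l : (99:ℝ)/100 ≤ (n:ℝ)*(Real.log ((n:ℝ)+1) - Real.log n) := by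
    have hbig : (99:ℝ) ≤ n := by nlinarith
    have h' : (n:ℝ)/((n:ℝ)+1) ≤ (n:ℝ)*(Real.log ((n:ℝ)+1) - Real.log n) := by
      have := mul_le_mul_of_nonneg_left hd1l (le_of_lt hnp)
      calc (n:ℝ)/((n:ℝ)+1) = (n:ℝ) * (1/((n:ℝ)+1)) := by ring
        _ ≤ _ := this
    have h'' : (99:ℝ)/100 ≤ (n:ℝ)/((n:ℝ)+1) := by
      rw [div_le_div_iff₀ (by norm_num) hn1]; nlinarith
    linarith
  have hnd1u : (n:ℝ)*(Real.log ((n:ℝ)+1) - Real.log n) ≤ 1 := by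
    have := mul_le_mul_of_nonneg_left hd1u (le_of_lt hnp)
    have h' : (n:ℝ) * (1/(n:ℝ)) = 1 := by field_simp
    nlinarith
  have hglow : Real.log 2 < g * Real.log 10 := by
    rw [hgl]
    have := Real.log_two_lt_d9
    linarith
  have hghigh : g * Real.log 10 + Real.log 2 < Real.log 10 := by
    rw [hgl]
    have := Real.log_two_lt_d9
    have := log10_ge
    linarith
  have hcb : cB * Real.log 10 = Real.log 2 := by
    rw [cB, Real.logb]; field_simp
  refine ⟨g, by ring, ?_, ?_⟩
  · have : cB * Real.log 10 < g * Real.log 10 := by rw [hcb]; exact hglow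
    exact lt_of_mul_lt_mul_right this (le_of_lt log10_pos)
  · have h' : (g + cB) * Real.log 10 < 1 * Real.log 10 := by
      rw [add_mul, hcb, one_mul]; exact hghigh
    exact lt_of_mul_lt_mul_right h' (le_of_lt log10_pos)

lemma gapB {m n : ℕ} (hm : 7 ≤ m) (h1 : 102 * 10^m < n) (h2 : n + 2 ≤ 112 * 10^m + 2) :
    ∃ b : ℝ, Lf (n+2) = Lf n + (2*(m:ℝ)+5) - b ∧ 1/500 ≤ b ∧ b ≤ 3/20 := by
  have h10m : (1:ℝ) ≤ (10:ℝ)^m := one_le_pow₀ (by norm_num)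
  have hn0 : (10:ℝ)^9 ≤ (n:ℝ) := by
    have h9 : (10:ℕ)^9 ≤ 102 * 10^m := by
      calc (10:ℕ)^9 = 100 * 10^7 := by norm_num
        _ ≤ 102 * 10^m := Nat.mul_le_mul (by norm_num) (Nat.pow_le_pow_right (by norm_num) hm)
    have h9n : (10:ℕ)^9 ≤ n := le_trans h9 (le_of_lt h1)
    exact_mod_cast h9n
  have hnp : (0:ℝ) < n := by positivity
  have hn' : 1 ≤ n := by
    by_contra h; push_neg at h
    interval_cases n <;> simp_all
  have h1r : (102:ℝ) * 10^m < (n:ℝ) := by exact_mod_cast h1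
  have h2r : (n:ℝ) + 2 ≤ 112 * 10^m + 2 := by exact_mod_cast h2
  set b : ℝ := Lf n + (2*(m:ℝ)+5) - Lf (n+2) with hb
  have hd1u : Real.log ((n:ℝ)+2) - Real.log n ≤ 2/(n:ℝ) := by
    have := log_ratio_le hnp (by linarith : (n:ℝ) ≤ (n:ℝ)+2)
    simpa using this
  have hd1l : (2:ℝ)/((n:ℝ)+2) ≤ Real.log ((n:ℝ)+2) - Real.log n := by
    have := log_ratio_ge hnp (by linarith : (n:ℝ) ≤ (n:ℝ)+2)
    simpa using this
  have hP : (0:ℝ) < 100 * 10^m := by positivity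
  have hlogP : Real.log ((100:ℝ) * 10^m) = ((m:ℝ)+2) * Real.log 10 := by
    have : (100:ℝ) * 10^m = 10^(m+2) := by rw [pow_add]; ring
    rw [this, Real.log_pow]; push_cast; ring
  have hd2l : ((m:ℝ)+2) * Real.log 10 ≤ Real.log ((n:ℝ)+2) := by
    rw [← hlogP]
    apply Real.log_le_log hP
    linarith
  have hd2u : Real.log ((n:ℝ)+2) - ((m:ℝ)+2) * Real.log 10 ≤ 13/100 := by
    rw [← hlogP]
    have := log_ratio_le hP (by linarith : (100:ℝ)*10^m ≤ (n:ℝ)+2)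
    have hq : ((n:ℝ)+2 - 100*10^m) / (100*10^m) ≤ 13/100 := by
      rw [div_le_iff₀ hP]; linarith
    linarith
  have hgl : b * Real.log 10
      = Real.log 10 - (n:ℝ)*(Real.log ((n:ℝ)+2) - Real.log n)
        - 2*(Real.log ((n:ℝ)+2) - ((m:ℝ)+2) * Real.log 10) := by
    rw [hb, Lf_eq n hn', Lf_eq (n+2) (by omega)]
    push_cast
    field_simp
    ring
  have hsmall : (4:ℝ)/((n:ℝ)+2) ≤ 1/10000 := by
    rw [div_le_div_iff₀ (by linarith) (by norm_num)]
    nlinarith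
  have hnd1l : (2:ℝ) - 1/10000 ≤ (n:ℝ)*(Real.log ((n:ℝ)+2) - Real.log n) := by
    have h' : (n:ℝ) * (2/((n:ℝ)+2)) ≤ (n:ℝ)*(Real.log ((n:ℝ)+2) - Real.log n) :=
      mul_le_mul_of_nonneg_left hd1l (le_of_lt hnp)
    have h'' : (2:ℝ) - 4/((n:ℝ)+2) = (n:ℝ) * (2/((n:ℝ)+2)) := by field_simp; ring
    linarith
  have hnd1u : (n:ℝ)*(Real.log ((n:ℝ)+2) - Real.log n) ≤ 2 := by
    have := mul_le_mul_of_nonneg_left hd1u (le_of_lt hnp)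
    have h' : (n:ℝ) * (2/(n:ℝ)) = 2 := by field_simp
    nlinarith
  have hblow : (1:ℝ)/500 * Real.log 10 ≤ b * Real.log 10 := by
    rw [hgl]
    have := log10_ge; have := log10_le
    linarith
  have hbhigh : b * Real.log 10 ≤ 3/20 * Real.log 10 := by
    rw [hgl]
    have := log10_ge; have := log10_le
    linarith
  refine ⟨b, by rw [hb]; ring, ?_, ?_⟩
  · exact le_of_mul_le_mul_right hblow log10_pos
  · exact le_of_mul_le_mul_right hbhigh log10_pos

lemma dead {m n : ℕ} (hm : 7 ≤ m) (h1 : 102 * 10^m < n) (h2 : n + 2 ≤ 113 * 10^m) :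
    ¬(Int.fract (Lf n) < cB ∧ Int.fract (Lf (n+1)) < cB) := by
  rintro ⟨ha, hb⟩
  obtain ⟨g, hgeq, hg1, hg2⟩ := gapA hm h1 h2
  have hu0 : 0 ≤ Int.fract (Lf n) := Int.fract_nonneg _
  have hkey : Lf (n+1) = (Int.fract (Lf n) + g) + ((⌊Lf n⌋ + (m:ℤ) + 2 : ℤ):ℝ) := by
    have hfl : Lf n = ⌊Lf n⌋ + Int.fract (Lf n) := (Int.floor_add_fract _).symm
    rw [hgeq]; push_cast; linarith
  have hfr : Int.fract (Lf (n+1)) = Int.fract (Lf n) + g := by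
    rw [hkey, Int.fract_add_intCast]
    apply Int.fract_eq_self.mpr
    constructor
    · have := cB_pos; linarith
    · linarith
  have : cB < Int.fract (Lf (n+1)) := by rw [hfr]; linarith [cB_pos]
  linarith

lemma hit {m n0 : ℕ} (hm : 7 ≤ m) (h1 : 102 * 10^m < n0) (h2 : n0 + 1700 ≤ 112 * 10^m) :
    ∃ j : ℕ, j ≤ 1700 ∧ Int.fract (Lf (n0+j)) < cB := by
  by_contra hcon
  push_neg at hcon
  have key : ∀ t : ℕ, t ≤ 850 →
      Int.fract (Lf (n0 + 2*t)) ≤ Int.fract (Lf n0) - t * (1/500) := by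
    intro t
    induction t with
    | zero => intro _; simp
    | succ t ih =>
      intro ht
      have ht' : t ≤ 850 := by omega
      have hprev := ih ht'
      set n : ℕ := n0 + 2*t with hn
      have hwait : cB ≤ Int.fract (Lf n) := hcon (2*t) (by omega)
      obtain ⟨b, hbeq, hb1, hb2⟩ := gapB (n := n) hm (by omega) (by omega)
      have hu1 : Int.fract (Lf n) < 1 := Int.fract_lt_one _
      have hkey : Lf (n+2) = (Int.fract (Lf n) - b) + ((⌊Lf n⌋ + 2*(m:ℤ) + 5 : ℤ):ℝ) := by
        have hfl : Lf n = ⌊Lf n⌋ + Int.fract (Lf n) := (Int.floor_add_fract _).symm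
        rw [hbeq]; push_cast; linarith
      have hfr : Int.fract (Lf (n+2)) = Int.fract (Lf n) - b := by
        rw [hkey, Int.fract_add_intCast]
        apply Int.fract_eq_self.mpr
        constructor
        · have := cB_gt; linarith
        · linarith
      have hstep : n0 + 2*(t+1) = n + 2 := by omega
      rw [hstep, hfr]
      push_cast
      linarith
  have h850 := key 850 le_rfl
  have h0 : (0:ℝ) ≤ Int.fract (Lf (n0 + 2*850)) := Int.fract_nonneg _
  have h1' : Int.fract (Lf n0) < 1 := Int.fract_lt_one _
  norm_num at h850
  linarith

def pp : ℕ → Prop := fun n => 1 ≤ n ∧ HasLeadingDigit ((n:ℝ)^n) 1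

noncomputable instance : DecidablePred pp := Classical.decPred _

lemma pp_iff {n : ℕ} (hn : 1 ≤ n) : pp n ↔ Int.fract (Lf n) < cB := by
  rw [pp]
  constructor
  · rintro ⟨_, h⟩; exact (digit1_iff hn).mp h
  · intro h; exact ⟨hn, (digit1_iff hn).mpr h⟩

lemma count_zone {m : ℕ} (hm : 7 ≤ m) :
    Nat.count pp (102*10^m + 1) + 10^(m+1)/1701 ≤ Nat.count pp (112*10^m + 1) := by
  classical
  set A := 102*10^m with hA
  set B := 112*10^m with hB
  set s := 10^(m+1)/1701 with hs
  have hsle : 1701 * s ≤ 10^(m+1) := by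
    rw [hs, mul_comm]; exact Nat.div_mul_le_self _ _
  have hw : ∀ j : Fin s, ∃ x : ℕ, A + 1 + 1701*(j:ℕ) ≤ x ∧ x ≤ A + 1 + 1701*(j:ℕ) + 1700 ∧
      Int.fract (Lf x) < cB := by
    intro j
    have hj : (j:ℕ) < s := j.2
    have h1 : A < A + 1 + 1701*(j:ℕ) := by omega
    have h2 : (A + 1 + 1701*(j:ℕ)) + 1700 ≤ B := by
      have : 1701 * ((j:ℕ)+1) ≤ 1701 * s := Nat.mul_le_mul_left _ (by omega)
      have h10 : A + 10^(m+1) = B := by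
        rw [hA, hB, pow_succ]; ring
      omega
    obtain ⟨j', hj1, hj2⟩ := hit hm h1 h2
    exact ⟨A + 1 + 1701*(j:ℕ) + j', by omega, by omega, hj2⟩
  choose F hF1 hF2 hF3 using hw
  have hFmono : ∀ j1 j2 : Fin s, j1 < j2 → F j1 < F j2 := by
    intro j1 j2 h
    have h' : (j1:ℕ) + 1 ≤ (j2:ℕ) := h
    have t1 := hF2 j1
    have t2 := hF1 j2
    have : 1701 * ((j1:ℕ) + 1) ≤ 1701 * (j2:ℕ) := Nat.mul_le_mul_left _ h'
    omega
  have hFinj : Function.Injective F := by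
    intro j1 j2 hne
    rcases lt_trichotomy j1 j2 with h | h | h
    · exact absurd hne (Nat.ne_of_lt (hFmono _ _ h))
    · exact h
    · exact absurd hne.symm (Nat.ne_of_lt (hFmono _ _ h))
  have hpF : ∀ j, pp (F j) := by
    intro j
    have h1 : 1 ≤ F j := le_trans (by omega) (hF1 j)
    exact (pp_iff h1).mpr (hF3 j)
  have hX : Nat.count pp (A + 1) = ((Finset.range (A+1)).filter pp).card :=
    Nat.count_eq_card_filter_range _ _
  have hY : Nat.count pp (B + 1) = ((Finset.range (B+1)).filter pp).card :=
    Nat.count_eq_card_filter_range _ _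
  set X := (Finset.range (A+1)).filter pp with hXd
  set H := Finset.image F Finset.univ with hHd
  have hcardH : H.card = s := by
    rw [hHd, Finset.card_image_of_injective _ hFinj, Finset.card_univ, Fintype.card_fin]
  have hdisj : Disjoint X H := by
    rw [Finset.disjoint_left]
    intro x hx hxH
    rw [hXd, Finset.mem_filter, Finset.mem_range] at hx
    rw [hHd, Finset.mem_image] at hxH
    obtain ⟨j, _, rfl⟩ := hxH
    have := hF1 j
    omega
  have hsub : X ∪ H ⊆ (Finset.range (B+1)).filter pp := by
    intro x hx
    rw [Finset.mem_union] at hx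
    rw [Finset.mem_filter, Finset.mem_range]
    rcases hx with hx | hx
    · rw [hXd, Finset.mem_filter, Finset.mem_range] at hx
      have : A + 1 ≤ B + 1 := by rw [hA, hB]; omega
      exact ⟨by omega, hx.2⟩
    · rw [hHd, Finset.mem_image] at hx
      obtain ⟨j, _, rfl⟩ := hx
      have hle := hF2 j
      have h2 : (A + 1 + 1701*(j:ℕ)) + 1700 ≤ B := by
        have hj : (j:ℕ) < s := j.2
        have : 1701 * ((j:ℕ)+1) ≤ 1701 * s := Nat.mul_le_mul_left _ (by omega)
        have h10 : A + 10^(m+1) = B := by rw [hA, hB, pow_succ]; ring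
        omega
      exact ⟨by omega, hpF j⟩
  calc Nat.count pp (A+1) + s = X.card + H.card := by rw [hX, hcardH]
    _ = (X ∪ H).card := (Finset.card_union_of_disjoint hdisj).symm
    _ ≤ ((Finset.range (B+1)).filter pp).card := Finset.card_le_card hsub
    _ = Nat.count pp (B+1) := hY.symm

lemma pp_infinite : (setOf pp).Infinite := by
  apply Set.infinite_of_forall_exists_gt
  intro a
  set m := 7 + a with hmdef
  have hm1 : 7 ≤ m := by omega
  have hm2 : a < 10^m :=
    lt_of_lt_of_le (Nat.lt_pow_self (n := a) (a := 10) (by norm_num)) (Nat.pow_le_pow_right (by norm_num) (by omega))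
  have hbig : 1701 ≤ 10^m :=
    le_trans (by norm_num) (Nat.pow_le_pow_right (by norm_num) hm1)
  obtain ⟨j, hj1, hj2⟩ := hit (n0 := 102*10^m + 1) hm1 (by omega) (by omega)
  refine ⟨102*10^m + 1 + j, ?_, by omega⟩
  exact (pp_iff (by omega)).mpr hj2

end Aux

-- nth facts
lemma nth_ge_of_count_le {A i : ℕ} (h : Nat.count pp A ≤ i) : A ≤ Nat.nth pp i := by
  by_contra hlt
  push_neg at hlt
  have h1 : Nat.count pp (Nat.nth pp i + 1) ≤ Nat.count pp A :=
    Nat.count_monotone pp (by omega)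
  have h2 : Nat.count pp (Nat.nth pp i + 1) = i + 1 := by
    rw [Nat.count_succ, if_pos (Nat.nth_mem_of_infinite pp_infinite i),
      Nat.count_nth_of_infinite pp_infinite]
  omega

lemma nth_lt_of_lt_count {B i : ℕ} (h : i < Nat.count pp B) : Nat.nth pp i < B := by
  by_contra hle
  push_neg at hle
  have h1 : Nat.count pp B ≤ Nat.count pp (Nat.nth pp i) := Nat.count_monotone pp hle
  rw [Nat.count_nth_of_infinite pp_infinite] at h1
  omega

/-- The sequence `{n^n}` is not locally Benford distributed of order 2 and does not
have Benford distributed waiting times. -/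
theorem pow_self_not_locallyBenford :
    ¬ LocallyBenfordDistributed (fun n : ℕ => (n : ℝ) ^ n) 2 ∧
      ¬ BenfordWaitingTimes (fun n : ℕ => (n : ℝ) ^ n) := by
  have hten : ∀ m : ℕ, 7 ≤ m → (2:ℕ) ≤ 10^m := fun m hm =>
    le_trans (by norm_num : (2:ℕ) ≤ 10^1) (Nat.pow_le_pow_right (by norm_num) (by omega))
  constructor
  · -- not locally Benford of order 2
    intro hL
    have hd : ∀ i : Fin 2, 1 ≤ (![1,1] : Fin 2 → ℕ) i ∧ (![1,1] : Fin 2 → ℕ) i ≤ 9 := by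
      intro i; fin_cases i <;> norm_num
    have hL' := hL ![1,1] hd
    have hprod : (∏ i : Fin 2, benfordP ((![1,1] : Fin 2 → ℕ) i)) = cB * cB := by
      rw [Fin.prod_univ_two]
      norm_num [benfordP, cB]
    rw [hprod] at hL'
    set C : ℕ → ℕ := fun N => Nat.card {n : ℕ | 1 ≤ n ∧ n ≤ N ∧
        ∀ i : Fin 2, HasLeadingDigit ((fun n : ℕ => (n : ℝ) ^ n) (n + (i : ℕ)))
          ((![1,1] : Fin 2 → ℕ) i)} with hC
    have hCeq : ∀ m : ℕ, 7 ≤ m → C (112*10^m) = C (102*10^m) := by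
      intro m hm
      have hset : {n : ℕ | 1 ≤ n ∧ n ≤ 112*10^m ∧
          ∀ i : Fin 2, HasLeadingDigit ((fun n : ℕ => (n : ℝ) ^ n) (n + (i : ℕ)))
            ((![1,1] : Fin 2 → ℕ) i)}
          = {n : ℕ | 1 ≤ n ∧ n ≤ 102*10^m ∧
          ∀ i : Fin 2, HasLeadingDigit ((fun n : ℕ => (n : ℝ) ^ n) (n + (i : ℕ)))
            ((![1,1] : Fin 2 → ℕ) i)} := by
        ext n
        constructor
        · rintro ⟨h1, h2, h3⟩
          refine ⟨h1, ?_, h3⟩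
          by_contra hgt
          push_neg at hgt
          have hf0 := h3 0
          have hf1 := h3 1
          simp only [Matrix.cons_val_zero, Matrix.cons_val_one, Matrix.head_cons] at hf0 hf1
          have e0 : n + ((0 : Fin 2) : ℕ) = n := by norm_num
          have e1 : n + ((1 : Fin 2) : ℕ) = n + 1 := by norm_num
          rw [e0] at hf0
          rw [e1] at hf1
          exact dead hm hgt (by have := hten m hm; omega)
            ⟨(digit1_iff h1).mp hf0, (digit1_iff (by omega)).mp hf1⟩
        · rintro ⟨h1, h2, h3⟩
          have h10 : (10:ℕ)^m ≤ 102*10^m := Nat.le_mul_of_pos_left _ (by norm_num)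
          refine ⟨h1, by omega, h3⟩
      exact congrArg (fun s : Set ℕ => Nat.card s) hset
    have hpow : Tendsto (fun m : ℕ => 10^m) atTop atTop :=
      tendsto_pow_atTop_atTop_of_one_lt (by norm_num)
    have t1 : Tendsto (fun m : ℕ => 102*10^m) atTop atTop :=
      tendsto_atTop_mono (fun m => Nat.le_mul_of_pos_left _ (by norm_num)) hpow
    have t2 : Tendsto (fun m : ℕ => 112*10^m) atTop atTop :=
      tendsto_atTop_mono (fun m => Nat.le_mul_of_pos_left _ (by norm_num)) hpow
    have hA1 : Tendsto (fun m => (C (102*10^m) : ℝ) / (102*10^m : ℕ)) atTop (nhds (cB*cB)) :=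
      hL'.comp t1
    have hA2 : Tendsto (fun m => (C (112*10^m) : ℝ) / (112*10^m : ℕ)) atTop (nhds (cB*cB)) :=
      hL'.comp t2
    have heq : ∀ᶠ m in atTop, (C (112*10^m) : ℝ) / ((112*10^m : ℕ) : ℝ)
        = ((C (102*10^m) : ℝ) / ((102*10^m : ℕ) : ℝ)) * (102/112) := by
      filter_upwards [eventually_ge_atTop 7] with m hm
      rw [hCeq m hm]
      have h10 : (0:ℝ) < (10:ℝ)^m := by positivity
      push_cast
      field_simp
    have hA2' : Tendsto (fun m => ((C (102*10^m) : ℝ) / ((102*10^m : ℕ) : ℝ)) * (102/112))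
        atTop (nhds (cB*cB)) := hA2.congr' heq
    have hA1' : Tendsto (fun m => ((C (102*10^m) : ℝ) / ((102*10^m : ℕ) : ℝ)) * (102/112))
        atTop (nhds ((cB*cB) * (102/112))) := hA1.mul_const _
    have := tendsto_nhds_unique hA2' hA1'
    nlinarith [cB_pos]
  · -- not Benford waiting times
    intro hW
    have hW' := hW 1 le_rfl (by norm_num) 1 le_rfl
    have hbp : benfordP 1 * (1 - benfordP 1) ^ (1-1) = cB := by
      norm_num [benfordP, cB]
    rw [hbp] at hW'
    set J : ℕ → ℕ := fun N => Nat.card {i : ℕ | 1 ≤ i ∧ i ≤ N ∧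
        waitingTime (fun n : ℕ => (n : ℝ) ^ n) 1 i = 1} with hJ
    set N1 : ℕ → ℕ := fun m => Nat.count pp (102*10^m + 1) with hN1
    set N2 : ℕ → ℕ := fun m => Nat.count pp (112*10^m + 1) with hN2
    have bN1 : ∀ m, N1 m = Nat.count pp (102*10^m + 1) := fun m => by rw [hN1]
    have bN2 : ∀ m, N2 m = Nat.count pp (112*10^m + 1) := fun m => by rw [hN2]
    have hwt : ∀ i : ℕ, waitingTime (fun n : ℕ => (n : ℝ) ^ n) 1 i
        = Nat.nth pp i - Nat.nth pp (i-1) := fun i => rfl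
    have hdeadJ : ∀ m : ℕ, 7 ≤ m → ∀ i : ℕ, N1 m < i → i ≤ N2 m →
        waitingTime (fun n : ℕ => (n : ℝ) ^ n) 1 i ≠ 1 := by
      intro m hm i hi1 hi2 hw1
      rw [hwt] at hw1
      rw [bN1] at hi1
      rw [bN2] at hi2
      set n := Nat.nth pp (i-1) with hn
      have hnge : 102*10^m + 1 ≤ n := nth_ge_of_count_le (by omega)
      have hnlt : n < 112*10^m + 1 := nth_lt_of_lt_count (by omega)
      have hmono : Nat.nth pp (i-1) < Nat.nth pp i :=
        Nat.nth_strictMono pp_infinite (by omega)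
      have hsucc : Nat.nth pp i = n + 1 := by omega
      have hp1 : pp n := Nat.nth_mem_of_infinite pp_infinite _
      have hp2 : pp (n+1) := by rw [← hsucc]; exact Nat.nth_mem_of_infinite pp_infinite _
      exact dead hm (by omega) (by have := hten m hm; omega)
        ⟨(pp_iff (by omega)).mp hp1, (pp_iff (by omega)).mp hp2⟩
    have hN1N2 : ∀ m, N1 m ≤ N2 m := by
      intro m
      rw [bN1, bN2]
      apply Nat.count_monotone pp
      have h10 : (102:ℕ)*10^m ≤ 112*10^m := Nat.mul_le_mul_right _ (by norm_num)
      omega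
    have hJeq : ∀ m : ℕ, 7 ≤ m → J (N2 m) = J (N1 m) := by
      intro m hm
      rw [hJ]
      have hset : {i : ℕ | 1 ≤ i ∧ i ≤ N2 m ∧ waitingTime (fun n : ℕ => (n : ℝ) ^ n) 1 i = 1}
          = {i : ℕ | 1 ≤ i ∧ i ≤ N1 m ∧ waitingTime (fun n : ℕ => (n : ℝ) ^ n) 1 i = 1} := by
        ext i
        constructor
        · rintro ⟨h1, h2, h3⟩
          refine ⟨h1, ?_, h3⟩
          by_contra hgt
          push_neg at hgt
          exact hdeadJ m hm i hgt h2 h3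
        · rintro ⟨h1, h2, h3⟩
          exact ⟨h1, le_trans h2 (hN1N2 m), h3⟩
      exact congrArg (fun s : Set ℕ => Nat.card s) hset
    have hzone : ∀ m : ℕ, 7 ≤ m → N1 m + 10^(m+1)/1701 ≤ N2 m := by
      intro m hm
      rw [bN1, bN2]
      exact count_zone hm
    have hN1mono : Monotone N1 := by
      intro m m' hmm
      rw [bN1, bN1]
      exact Nat.count_monotone pp (by
        have : (10:ℕ)^m ≤ 10^m' := Nat.pow_le_pow_right (by norm_num) hmm
        omega)
    have hN1unbdd : ∀ b : ℕ, ∃ m, b ≤ N1 m := by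
      intro b
      set m := max 7 (1701*b) with hm
      have hm7 : 7 ≤ m := le_max_left _ _
      have hsb : b * 1701 ≤ 10^(m+1) := by
        have h1 : 1701*b ≤ m := le_max_right _ _
        have h2 : m < 10^m := Nat.lt_pow_self (n := m) (a := 10) (by norm_num)
        have h3 : (10:ℕ)^m ≤ 10^(m+1) := Nat.pow_le_pow_right (by norm_num) (by omega)
        omega
      have hsge : b ≤ 10^(m+1)/1701 := (Nat.le_div_iff_mul_le (by norm_num)).mpr hsb
      refine ⟨m+1, ?_⟩
      have step1 : N2 m ≤ N1 (m+1) := by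
        rw [bN2, bN1]
        apply Nat.count_monotone pp
        have e1 : (102:ℕ)*10^(m+1) = 1020*10^m := by rw [pow_succ]; ring
        have e2 : (112:ℕ)*10^m ≤ 1020*10^m := Nat.mul_le_mul_right _ (by norm_num)
        omega
      have step2 := hzone m hm7
      omega
    have hN1top : Tendsto N1 atTop atTop := tendsto_atTop_atTop_of_monotone hN1mono hN1unbdd
    have hN2top : Tendsto N2 atTop atTop := tendsto_atTop_mono hN1N2 hN1top
    have hA := hW'.comp hN1top
    have hB := hW'.comp hN2top
    have hratio : ∀ᶠ m in atTop, ((J (N2 m) : ℝ)) / (N2 m)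
        ≤ ((J (N1 m) : ℝ) / (N1 m)) / (1 + 1/30900) := by
      filter_upwards [eventually_ge_atTop 7, hN1top.eventually_ge_atTop 1] with m hm hpos
      have hJeq' := hJeq m hm
      have hKcount : N1 m + 10^m/250 ≤ N2 m := by
        have hKle : 10^m/250 ≤ 10^(m+1)/1701 := by
          have h1 : 10^m/250 * 250 ≤ 10^m := Nat.div_mul_le_self _ _
          apply (Nat.le_div_iff_mul_le (by norm_num)).mpr
          have e1 : (10:ℕ)^(m+1) = 10*10^m := by rw [pow_succ]; ring
          rw [e1]; generalize (10:ℕ)^m = t at h1 ⊢; have h1' := Nat.mul_le_mul_left 10 h1; linarith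
        have := hzone m hm
        omega
      have hN1le : (N1 m : ℝ) ≤ 103 * 10^m := by
        have h1 : N1 m ≤ 102*10^m + 1 := by rw [bN1]; exact Nat.count_le pp
        have h2 : (1:ℕ) ≤ 10^m := Nat.one_le_pow _ _ (by norm_num)
        have h3 : N1 m ≤ 103*10^m := by omega
        calc (N1 m : ℝ) ≤ ((103*10^m : ℕ) : ℝ) := by exact_mod_cast h3
          _ = 103 * 10^m := by push_cast; ring
      have hKreal : (10:ℝ)^m / 300 ≤ ((10^m/250 : ℕ) : ℝ) := by
        have h1 : 10^m ≤ 250 * (10^m/250) + 249 := by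
          have := Nat.div_mul_le_self (10^m) 250
          omega
        have h2 : (10^7:ℕ) ≤ 10^m := Nat.pow_le_pow_right (by norm_num) hm
        have h1r : ((10:ℝ))^m ≤ 250 * ((10^m/250 : ℕ):ℝ) + 249 := by exact_mod_cast h1
        have h2r : (10^7:ℝ) ≤ (10:ℝ)^m := by exact_mod_cast h2
        nlinarith
      have hN2ge : (1 + 1/30900) * (N1 m : ℝ) ≤ (N2 m : ℝ) := by
        have hc : (N1 m : ℝ) + ((10^m/250 : ℕ):ℝ) ≤ (N2 m : ℝ) := by
          exact_mod_cast hKcount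
        nlinarith
      have hN1pos : (0:ℝ) < N1 m := by exact_mod_cast hpos
      have hden : (0:ℝ) < (1 + 1/30900) * (N1 m : ℝ) := by positivity
      rw [hJeq']
      calc (J (N1 m) : ℝ) / (N2 m) ≤ (J (N1 m) : ℝ) / ((1 + 1/30900) * (N1 m : ℝ)) :=
            div_le_div_of_nonneg_left (by positivity) hden hN2ge
        _ = ((J (N1 m) : ℝ) / (N1 m)) / (1 + 1/30900) := by
            rw [div_div]; ring_nf
    have hlim2 : Tendsto (fun m => ((J (N1 m) : ℝ) / (N1 m)) / (1 + 1/30900)) atTop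
        (nhds (cB / (1 + 1/30900))) := hA.div_const _
    have hle := le_of_tendsto_of_tendsto hB hlim2 hratio
    rw [le_div_iff₀ (by norm_num : (0:ℝ) < 1 + 1/30900)] at hle
    nlinarith [cB_pos]
end

section
/- The sequence {2^{n log n}} (with n ≥ 2) is not locally Benford distributed of order 2 and does not have Benford distributed waiting times. -/
open Filter

section SmoothMersenneAux
open Real
set_option maxHeartbeats 2000000


noncomputable def lg (x : ℝ) : ℝ := Real.logb 10 x

lemma lg_lt_of_pow (x : ℝ) (hx : 0 < x) (p q : ℕ) (hq : 0 < q) (h : x ^ q < 10 ^ p) :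
    lg x < (p : ℝ) / q := by
  rw [lg, Real.logb_lt_iff_lt_rpow (by norm_num) hx]
  have h10 : (0:ℝ) < 10 := by norm_num
  have := Real.rpow_natCast (10:ℝ) p
  have hxq : x < (10:ℝ) ^ ((p:ℝ)/q) := by
    have h1 : ((10:ℝ) ^ ((p:ℝ)/q)) ^ (q:ℕ) = 10 ^ (p:ℕ) := by
      rw [← Real.rpow_natCast ((10:ℝ) ^ ((p:ℝ)/q)) q, ← Real.rpow_mul (by norm_num)]
      rw [div_mul_cancel₀]
      · exact Real.rpow_natCast 10 p
      · exact_mod_cast hq.ne'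
    have h2 : x ^ (q:ℕ) < ((10:ℝ) ^ ((p:ℝ)/q)) ^ (q:ℕ) := by rw [h1]; exact h
    exact lt_of_pow_lt_pow_left₀ q (Real.rpow_nonneg (by norm_num) _) h2
  exact hxq

lemma lt_lg_of_pow (x : ℝ) (hx : 0 < x) (p q : ℕ) (hq : 0 < q) (h : 10 ^ p < x ^ q) :
    (p : ℝ) / q < lg x := by
  rw [lg, Real.lt_logb_iff_rpow_lt (by norm_num) hx]
  have h1 : ((10:ℝ) ^ ((p:ℝ)/q)) ^ (q:ℕ) = 10 ^ (p:ℕ) := by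
    rw [← Real.rpow_natCast ((10:ℝ) ^ ((p:ℝ)/q)) q, ← Real.rpow_mul (by norm_num)]
    rw [div_mul_cancel₀]
    · exact Real.rpow_natCast 10 p
    · exact_mod_cast hq.ne'
  by_contra hc
  push_neg at hc
  have := pow_le_pow_left₀ (hx.le) hc q
  rw [h1] at this
  exact absurd (h.trans_le this) (lt_irrefl _)

lemma lg2_gt : (0.25 : ℝ) < lg 2 := by
  have := lt_lg_of_pow 2 (by norm_num) 1 4 (by norm_num) (by norm_num)
  norm_num at this ⊢; linarith

lemma lg2_lt : lg 2 < (0.31 : ℝ) := by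
  have := lg_lt_of_pow 2 (by norm_num) 31 100 (by norm_num) (by norm_num)
  norm_num at this ⊢; linarith

lemma lg3_lt : lg 3 < (0.5 : ℝ) := by
  have := lg_lt_of_pow 3 (by norm_num) 1 2 (by norm_num) (by norm_num)
  norm_num at this ⊢; linarith

lemma lg6_gt : (0.75 : ℝ) < lg 6 := by
  have := lt_lg_of_pow 6 (by norm_num) 3 4 (by norm_num) (by norm_num)
  norm_num at this ⊢; linarith


noncomputable def cc : ℝ := Real.logb 10 2

/-- δ_n / c : the increment of n log n -/
noncomputable def del (n : ℕ) : ℝ := ((n:ℝ)+1) * Real.log ((n:ℝ)+1) - (n:ℝ) * Real.log n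

lemma log_succ_bounds {n : ℕ} (hn : 1 ≤ n) :
    1/((n:ℝ)+1) ≤ Real.log (((n:ℝ)+1)/n) ∧ Real.log (((n:ℝ)+1)/n) ≤ 1/n := by
  have hn0 : (0:ℝ) < n := by exact_mod_cast hn
  have hn1 : (0:ℝ) < (n:ℝ)+1 := by linarith
  constructor
  · have h := Real.log_le_sub_one_of_pos (show (0:ℝ) < (n:ℝ)/((n:ℝ)+1) by positivity)
    have hlog : Real.log ((n:ℝ)/((n:ℝ)+1)) = - Real.log (((n:ℝ)+1)/n) := by
      rw [← Real.log_inv]; congr 1; field_simp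
    rw [hlog] at h
    have : (n:ℝ)/((n:ℝ)+1) - 1 = -(1/((n:ℝ)+1)) := by field_simp; ring
    rw [this] at h; linarith
  · have h := Real.log_le_sub_one_of_pos (show (0:ℝ) < ((n:ℝ)+1)/n by positivity)
    have : ((n:ℝ)+1)/n - 1 = 1/n := by field_simp; ring
    linarith [h, this ▸ h]

lemma del_bounds {n : ℕ} (hn : 1 ≤ n) :
    Real.log n + 1 ≤ del n ∧ del n ≤ Real.log n + 1 + 1/n := by
  have hn0 : (0:ℝ) < n := by exact_mod_cast hn
  have hn1 : (0:ℝ) < (n:ℝ)+1 := by linarith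
  have hsplit : del n = Real.log n + ((n:ℝ)+1) * Real.log (((n:ℝ)+1)/n) := by
    rw [del, Real.log_div (by positivity) (by positivity)]; ring
  obtain ⟨hlo, hhi⟩ := log_succ_bounds hn
  constructor
  · rw [hsplit]
    have : ((n:ℝ)+1) * (1/((n:ℝ)+1)) ≤ ((n:ℝ)+1) * Real.log (((n:ℝ)+1)/n) :=
      mul_le_mul_of_nonneg_left hlo (by linarith)
    rw [mul_one_div, div_self (ne_of_gt hn1)] at this
    linarith
  · rw [hsplit]
    have : ((n:ℝ)+1) * Real.log (((n:ℝ)+1)/n) ≤ ((n:ℝ)+1) * (1/n) :=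
      mul_le_mul_of_nonneg_left hhi (by linarith)
    have h2 : ((n:ℝ)+1) * (1/n) = 1 + 1/n := by field_simp
    nlinarith [this]

lemma cc_pos : (0:ℝ) < cc := Real.logb_pos (by norm_num) (by norm_num)
lemma cc_lt_one : cc < 1 := by
  rw [cc]
  calc Real.logb 10 2 < Real.logb 10 10 := Real.logb_lt_logb (by norm_num) (by norm_num) (by norm_num)
  _ = 1 := Real.logb_self_eq_one (by norm_num)

noncomputable def gfun (n : ℕ) : ℝ := cc * (Real.log n + 1)

lemma gfun_mono {m n : ℕ} (hm : 1 ≤ m) (hmn : m ≤ n) : gfun m ≤ gfun n := by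
  have hlog : Real.log m ≤ Real.log n :=
    Real.log_le_log (by exact_mod_cast hm) (by exact_mod_cast hmn)
  exact mul_le_mul_of_nonneg_left (by linarith) cc_pos.le

lemma block_exists (j : ℕ) : ∃ A : ℕ, j ≤ A ∧ 10^6 ≤ A ∧
    ∀ n : ℕ, A ≤ n → n ≤ A + A/32 →
      (0.4 : ℝ) ≤ Int.fract (cc * del n) ∧ Int.fract (cc * del n) ≤ 0.41 := by
  have hc0 := cc_pos
  have hc1 := cc_lt_one
  obtain ⟨N0, hN0j, hN0big⟩ : ∃ N0 : ℕ, j ≤ N0 ∧ 10^6 ≤ N0 :=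
    ⟨max j (10^6), le_max_left _ _, le_max_right _ _⟩
  obtain ⟨K, hKdef⟩ : ∃ K : ℤ, K = ⌊gfun N0⌋ + 1 := ⟨_, rfl⟩
  have hqex : ∃ n : ℕ, N0 ≤ n ∧ (K:ℝ) + 0.4 ≤ gfun n := by
    set m : ℕ := max N0 ⌈Real.exp (((K:ℝ) + 0.4)/cc)⌉₊ with hm
    refine ⟨m, le_max_left _ _, ?_⟩
    have h1 : Real.exp (((K:ℝ) + 0.4)/cc) ≤ (m:ℝ) := by
      have ha := Nat.le_ceil (Real.exp (((K:ℝ) + 0.4)/cc))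
      have hb : ((⌈Real.exp (((K:ℝ) + 0.4)/cc)⌉₊ : ℕ) : ℝ) ≤ (m:ℝ) := by
        exact_mod_cast le_max_right N0 _
      linarith
    have hpos : (0:ℝ) < (m:ℝ) := by
      have h2 : 1 ≤ N0 := le_trans (by norm_num) hN0big
      have : (1:ℕ) ≤ m := le_trans h2 (le_max_left _ _)
      exact_mod_cast lt_of_lt_of_le Nat.zero_lt_one this
    have h2 : ((K:ℝ) + 0.4)/cc ≤ Real.log (m:ℝ) := by
      rw [Real.le_log_iff_exp_le hpos]; exact h1
    have h3 : (K:ℝ) + 0.4 ≤ cc * Real.log (m:ℝ) := by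
      rw [← div_le_iff₀' hc0]; exact h2
    have h4 : cc * Real.log (m:ℝ) ≤ gfun m := by
      rw [gfun]; nlinarith
    linarith
  classical
  obtain ⟨A, ⟨hAN0, hAT⟩, hAmin⟩ :
      ∃ A : ℕ, (N0 ≤ A ∧ (K:ℝ) + 0.4 ≤ gfun A) ∧
        ∀ m : ℕ, m < A → ¬(N0 ≤ m ∧ (K:ℝ) + 0.4 ≤ gfun m) :=
    ⟨Nat.find hqex, Nat.find_spec hqex, fun m hm => Nat.find_min hqex hm⟩
  have hgN0lt : gfun N0 < (K:ℝ) + 0.4 := by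
    have := Int.lt_floor_add_one (gfun N0)
    rw [hKdef]; push_cast; linarith
  have hAgt : N0 < A := by
    rcases lt_or_eq_of_le hAN0 with h | h
    · exact h
    · exfalso; rw [← h] at hAT; linarith
  have hprev : gfun (A-1) < (K:ℝ) + 0.4 := by
    by_contra hcon
    push_neg at hcon
    exact hAmin (A-1) (by omega) ⟨by omega, hcon⟩
  have hA1 : 1 ≤ A - 1 := by omega
  have hA1R : (1:ℝ) ≤ ((A-1:ℕ):ℝ) := by exact_mod_cast hA1
  have hAbig : 10^6 ≤ A := le_trans hN0big hAN0
  have hApos : (0:ℝ) < (A:ℝ) := by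
    have : (0:ℕ) < A := by omega
    exact_mod_cast this
  have hA1big : (999999 : ℝ) ≤ ((A-1:ℕ):ℝ) := by
    have : (999999:ℕ) ≤ A - 1 := by omega
    exact_mod_cast this
  have hstep : gfun A ≤ gfun (A-1) + cc * (1/((A-1:ℕ):ℝ)) := by
    have hcast : ((A:ℕ):ℝ) = ((A-1:ℕ):ℝ) + 1 := by
      have : A = (A-1) + 1 := by omega
      rw [this]; push_cast; ring
    have hlog : Real.log (A:ℝ) ≤ Real.log ((A-1:ℕ):ℝ) + 1/((A-1:ℕ):ℝ) := by
      have h := (log_succ_bounds hA1).2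
      have hd : Real.log ((((A-1:ℕ):ℝ)+1)/((A-1:ℕ):ℝ)) =
          Real.log (((A-1:ℕ):ℝ)+1) - Real.log ((A-1:ℕ):ℝ) :=
        Real.log_div (by linarith) (by linarith)
      rw [hd] at h
      rw [hcast]
      linarith
    calc gfun A = cc * (Real.log (A:ℝ) + 1) := rfl
    _ ≤ cc * (Real.log ((A-1:ℕ):ℝ) + 1/((A-1:ℕ):ℝ) + 1) :=
        mul_le_mul_of_nonneg_left (by linarith) hc0.le
    _ = gfun (A-1) + cc * (1/((A-1:ℕ):ℝ)) := by rw [gfun]; ring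
  have hgAup : gfun A ≤ (K:ℝ) + 0.4 + 1/999999 := by
    have h1 : (1:ℝ)/((A-1:ℕ):ℝ) ≤ 1/999999 := by
      rw [div_le_div_iff₀ (by linarith) (by norm_num)]; linarith
    have h2 : cc * (1/((A-1:ℕ):ℝ)) ≤ 1/999999 := by
      have := mul_le_mul hc1.le h1 (by positivity) (by norm_num : (0:ℝ) ≤ 1)
      linarith
    linarith
  refine ⟨A, le_trans hN0j hAN0, hAbig, ?_⟩
  intro n hnA hnub
  have hn1 : 1 ≤ n := le_trans (by omega) hnA
  have hn0 : (0:ℝ) < n := by exact_mod_cast hn1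
  obtain ⟨hdlo, hdhi⟩ := del_bounds hn1
  have hlow : (K:ℝ) + 0.4 ≤ cc * del n := by
    have h1 : gfun n ≤ cc * del n := mul_le_mul_of_nonneg_left hdlo hc0.le
    linarith [gfun_mono (show 1 ≤ A by omega) hnA]
  have hnAR : (n:ℝ) ≤ (A:ℝ) * (1 + 1/32) := by
    have h1 : (n:ℕ) ≤ A + A/32 := hnub
    have h2 : ((A/32:ℕ):ℝ) ≤ (A:ℝ)/32 := by
      have := Nat.div_mul_le_self A 32
      have h3 : ((A/32:ℕ):ℝ) * 32 ≤ (A:ℝ) := by exact_mod_cast this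
      linarith
    have : ((n:ℕ):ℝ) ≤ (A:ℝ) + ((A/32:ℕ):ℝ) := by exact_mod_cast h1
    linarith
  have hlogn : Real.log n ≤ Real.log A + 1/32 := by
    have h1 : Real.log n ≤ Real.log ((A:ℝ) * (1+1/32)) := Real.log_le_log hn0 hnAR
    rw [Real.log_mul (ne_of_gt hApos) (by norm_num)] at h1
    have h2 : Real.log (1+1/32:ℝ) ≤ 1/32 := by
      have := Real.log_le_sub_one_of_pos (show (0:ℝ) < 1+1/32 by norm_num)
      linarith
    linarith
  have hcc31 : cc < 0.31 := lg2_lt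
  have hup : cc * del n ≤ (K:ℝ) + 0.4 + 0.0097 := by
    have h1 : cc * del n ≤ cc * (Real.log n + 1) + cc * (1/(n:ℝ)) := by
      calc cc * del n ≤ cc * (Real.log n + 1 + 1/(n:ℝ)) :=
            mul_le_mul_of_nonneg_left hdhi hc0.le
      _ = cc * (Real.log n + 1) + cc * (1/(n:ℝ)) := by ring
    have h2 : cc * (Real.log n + 1) ≤ gfun A + cc * (1/32) := by
      calc cc * (Real.log n + 1) ≤ cc * (Real.log A + 1/32 + 1) :=
            mul_le_mul_of_nonneg_left (by linarith) hc0.le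
      _ = cc * (Real.log (A:ℝ) + 1) + cc * (1/32) := by ring
      _ = gfun A + cc * (1/32) := rfl
    have hn6 : (1000000:ℝ) ≤ (n:ℝ) := by
      have : (1000000:ℕ) ≤ n := by
        calc (1000000:ℕ) = 10^6 := by norm_num
        _ ≤ A := hAbig
        _ ≤ n := hnA
      exact_mod_cast this
    have h3 : cc * (1/(n:ℝ)) ≤ 1/1000000 := by
      have h : (1:ℝ)/(n:ℝ) ≤ 1/1000000 := by
        rw [div_le_div_iff₀ hn0 (by norm_num)]; linarith
      have := mul_le_mul hc1.le h (by positivity) (by norm_num : (0:ℝ) ≤ 1)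
      linarith
    have h4 : cc * (1/32) ≤ 0.31/32 := by linarith
    have h5 : (1:ℝ)/999999 + 0.31/32 + 1/1000000 ≤ 0.0097 := by norm_num
    linarith
  have hfloor : ⌊cc * del n⌋ = K := by
    rw [Int.floor_eq_iff]
    constructor
    · linarith
    · norm_num at hup ⊢; linarith
  rw [Int.fract, hfloor]
  constructor
  · linarith
  · norm_num at hup ⊢; linarith


lemma hld_iff {x : ℝ} (hx : 0 < x) {d : ℕ} (hd1 : 1 ≤ d) (hd9 : d ≤ 9) :
    HasLeadingDigit x d ↔
      Real.logb 10 d ≤ Int.fract (Real.logb 10 x) ∧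
        Int.fract (Real.logb 10 x) < Real.logb 10 (d + 1) := by
  have h10 : (1:ℝ) < 10 := by norm_num
  have hd0 : (0:ℝ) < d := by exact_mod_cast hd1
  have hd10 : ((d:ℝ) + 1) ≤ 10 := by
    have : (d:ℝ) ≤ 9 := by exact_mod_cast hd9
    linarith
  have hlogd0 : 0 ≤ Real.logb 10 d := Real.logb_nonneg h10 (by exact_mod_cast hd1)
  have hlogd1 : Real.logb 10 ((d:ℝ)+1) ≤ 1 := by
    calc Real.logb 10 ((d:ℝ)+1) ≤ Real.logb 10 10 :=
          Real.logb_le_logb_of_le h10 (by positivity) hd10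
    _ = 1 := Real.logb_self_eq_one h10
  have key : ∀ k : ℤ, ((d : ℝ) * 10 ^ k ≤ x ∧ x < ((d : ℝ) + 1) * 10 ^ k) ↔
      (Real.logb 10 d + k ≤ Real.logb 10 x ∧ Real.logb 10 x < Real.logb 10 ((d:ℝ)+1) + k) := by
    intro k
    have hpk : (0:ℝ) < (10:ℝ) ^ k := zpow_pos (by norm_num) k
    have hlogzpow : Real.logb 10 ((10:ℝ) ^ k) = k := by
      rw [← Real.rpow_intCast (10:ℝ) k, Real.logb_rpow (by norm_num) (by norm_num)]
    constructor
    · rintro ⟨h1, h2⟩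
      constructor
      · have := Real.logb_le_logb_of_le h10 (by positivity) h1
        rwa [Real.logb_mul (ne_of_gt hd0) (ne_of_gt hpk), hlogzpow] at this
      · have := Real.logb_lt_logb h10 hx h2
        rwa [Real.logb_mul (by positivity) (ne_of_gt hpk), hlogzpow] at this
    · rintro ⟨h1, h2⟩
      constructor
      · have h1' : Real.logb 10 ((d:ℝ) * 10 ^ k) ≤ Real.logb 10 x := by
          rwa [Real.logb_mul (ne_of_gt hd0) (ne_of_gt hpk), hlogzpow]
        have := (Real.logb_le_logb h10 (by positivity) hx).mp h1'
        exact this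
      · have h2' : Real.logb 10 x < Real.logb 10 (((d:ℝ)+1) * 10 ^ k) := by
          rwa [Real.logb_mul (by positivity) (ne_of_gt hpk), hlogzpow]
        exact (Real.logb_lt_logb_iff h10 hx (by positivity)).mp h2'
  constructor
  · rintro ⟨k, hk⟩
    rw [key k] at hk
    obtain ⟨h1, h2⟩ := hk
    have hfl : ⌊Real.logb 10 x⌋ = k := by
      rw [Int.floor_eq_iff]
      constructor
      · push_cast; linarith
      · push_cast; linarith
    rw [Int.fract, hfl]
    constructor <;> [linarith; linarith]
  · rintro ⟨h1, h2⟩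
    refine ⟨⌊Real.logb 10 x⌋, ?_⟩
    rw [key]
    have := Int.fract_nonneg (Real.logb 10 x)
    rw [Int.fract] at h1 h2
    constructor <;> linarith

noncomputable def aseq (n : ℕ) : ℝ := (2:ℝ) ^ ((n:ℝ) * Real.log n)

noncomputable def xs (n : ℕ) : ℝ := cc * ((n:ℝ) * Real.log n)

noncomputable def Fr (n : ℕ) : ℝ := Int.fract (xs n)

lemma aseq_pos (n : ℕ) : 0 < aseq n := Real.rpow_pos_of_pos (by norm_num) _

lemma logb_aseq (n : ℕ) : Real.logb 10 (aseq n) = xs n := by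
  rw [aseq, xs, cc, Real.logb, Real.logb, Real.log_rpow (by norm_num)]
  ring

lemma xs_succ (n : ℕ) : xs (n+1) = xs n + cc * del n := by
  rw [xs, xs, del]
  push_cast
  ring

lemma fract_add_fract (x y : ℝ) :
    Int.fract (x + y) = Int.fract (Int.fract x + Int.fract y) := by
  have h1 : Int.fract x + Int.fract y = (x + y) - ((⌊x⌋ + ⌊y⌋ : ℤ) : ℝ) := by
    rw [Int.fract, Int.fract]; push_cast; ring
  rw [h1, Int.fract_sub_intCast]

lemma fract_bounds (n : ℕ) : 0 ≤ Fr n ∧ Fr n < 1 :=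
  ⟨Int.fract_nonneg _, Int.fract_lt_one _⟩

lemma Fr_succ (n : ℕ) : Fr (n+1) = Int.fract (Fr n + Int.fract (cc * del n)) := by
  rw [Fr, xs_succ, fract_add_fract]; rfl

lemma hld1_iff (n : ℕ) : HasLeadingDigit (aseq n) 1 ↔ Fr n < cc := by
  rw [hld_iff (aseq_pos n) le_rfl (by norm_num), logb_aseq]
  have h0 : Real.logb 10 (1:ℕ) = 0 := by norm_num
  have h2 : Real.logb 10 ((1:ℕ) + 1) = cc := by norm_num [cc]
  rw [h0, h2]
  simp [Fr, Int.fract_nonneg]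

lemma not_hld1 {n : ℕ} (h : 0.4 ≤ Fr n) : ¬ HasLeadingDigit (aseq n) 1 := by
  rw [hld1_iff]
  push_neg
  have := lg2_lt
  have hcc : cc < 0.31 := this
  linarith

lemma exists_digit25 {n : ℕ} (h1 : 0.4 ≤ Fr n) (h2 : Fr n ≤ 0.72) :
    ∃ d1 : ℕ, 2 ≤ d1 ∧ d1 ≤ 5 ∧ HasLeadingDigit (aseq n) d1 := by
  have hcc : cc < 0.31 := lg2_lt
  have hl6 : (0.75:ℝ) < Real.logb 10 6 := lg6_gt
  have key : ∀ d : ℕ, 2 ≤ d → d ≤ 5 →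
      Real.logb 10 d ≤ Fr n → Fr n < Real.logb 10 (d+1) →
      HasLeadingDigit (aseq n) d := by
    intro d hd2 hd5 hlo hhi
    rw [hld_iff (aseq_pos n) (by omega) (by omega), logb_aseq]
    constructor
    · exact hlo
    · exact_mod_cast hhi
  rcases lt_or_ge (Fr n) (Real.logb 10 3) with h3 | h3
  · refine ⟨2, le_rfl, by norm_num, key 2 le_rfl (by norm_num) ?_ (by exact_mod_cast h3)⟩
    calc Real.logb 10 (2:ℕ) = cc := by norm_num [cc]
    _ ≤ 0.4 := by linarith
    _ ≤ Fr n := h1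
  rcases lt_or_ge (Fr n) (Real.logb 10 4) with h4 | h4
  · exact ⟨3, by norm_num, by norm_num, key 3 (by norm_num) (by norm_num)
      (by exact_mod_cast h3) (by exact_mod_cast h4)⟩
  rcases lt_or_ge (Fr n) (Real.logb 10 5) with h5 | h5
  · exact ⟨4, by norm_num, by norm_num, key 4 (by norm_num) (by norm_num)
      (by exact_mod_cast h4) (by exact_mod_cast h5)⟩
  · refine ⟨5, by norm_num, le_rfl, key 5 (by norm_num) le_rfl (by exact_mod_cast h5) ?_⟩
    calc Fr n ≤ 0.72 := h2
    _ < Real.logb 10 6 := by linarith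
    _ = Real.logb 10 ((5:ℕ)+1) := by norm_num

lemma grid {f : ℝ} (hf0 : 0 ≤ f) (hf1 : f < 1) :
    ∃ k : ℕ, 1 ≤ k ∧ k ≤ 5 ∧ Int.fract (f + 0.4 * k) < 0.2 := by
  have base : ∀ (k : ℕ) (r : ℝ) (m : ℤ), 0 ≤ f - r → f - r < 1 → 0.4 * (k:ℝ) = (m:ℝ) - r →
      Int.fract (f + 0.4 * k) = f - r := by
    intro k r m hr0 hr1 hm
    have : f + 0.4 * (k:ℝ) = (f - r) + (m:ℤ) := by rw [hm]; push_cast; ring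
    rw [this, Int.fract_add_intCast, Int.fract_eq_self.mpr ⟨hr0, hr1⟩]
  rcases lt_or_ge f 0.2 with h | h
  · exact ⟨5, by norm_num, by norm_num, by
      rw [base 5 0 2 (by linarith) (by linarith) (by norm_num)]; linarith⟩
  rcases lt_or_ge f 0.4 with h2 | h2
  · exact ⟨2, by norm_num, by norm_num, by
      rw [base 2 0.2 1 (by linarith) (by linarith) (by norm_num)]; linarith⟩
  rcases lt_or_ge f 0.6 with h3 | h3
  · exact ⟨4, by norm_num, by norm_num, by
      rw [base 4 0.4 2 (by linarith) (by linarith) (by norm_num)]; linarith⟩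
  rcases lt_or_ge f 0.8 with h4 | h4
  · exact ⟨1, by norm_num, by norm_num, by
      rw [base 1 0.6 1 (by linarith) (by linarith) (by norm_num)]; linarith⟩
  · exact ⟨3, by norm_num, by norm_num, by
      rw [base 3 0.8 2 (by linarith) (by linarith) (by norm_num)]; linarith⟩

/-- inside a block: a digit-1 index is followed by a digit in 2..5 -/
lemma pair_step {n : ℕ}
    (hδ1 : 0.4 ≤ Int.fract (cc * del n)) (hδ2 : Int.fract (cc * del n) ≤ 0.41)
    (h1 : HasLeadingDigit (aseq n) 1) :
    0.4 ≤ Fr (n+1) ∧ Fr (n+1) ≤ 0.72 := by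
  have hF1 : Fr n < cc := (hld1_iff n).mp h1
  have hF0 : 0 ≤ Fr n := (fract_bounds n).1
  have hcc : cc < 0.31 := lg2_lt
  have hsum0 : (0:ℝ) ≤ Fr n + Int.fract (cc * del n) := by linarith
  have hsum1 : Fr n + Int.fract (cc * del n) < 1 := by linarith
  rw [Fr_succ, Int.fract_eq_self.mpr ⟨hsum0, hsum1⟩]
  constructor <;> linarith

lemma fract_fract_add (x y : ℝ) : Int.fract (Int.fract x + y) = Int.fract (x + y) := by
  have h1 : Int.fract x + y = (x + y) - ((⌊x⌋ : ℤ) : ℝ) := by rw [Int.fract]; ring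
  rw [h1, Int.fract_sub_intCast]

/-- inside a block: from any point, digit 1 occurs within the next 5 indices -/
lemma visit {n : ℕ}
    (hδ : ∀ t : ℕ, t ≤ 4 →
      0.4 ≤ Int.fract (cc * del (n+t)) ∧ Int.fract (cc * del (n+t)) ≤ 0.41) :
    ∃ k : ℕ, 1 ≤ k ∧ k ≤ 5 ∧ HasLeadingDigit (aseq (n+k)) 1 := by
  set β : ℕ → ℝ := fun t => Int.fract (cc * del (n+t)) with hβ
  have hFr : ∀ k : ℕ, Fr (n+k) = Int.fract (Fr n + ∑ t ∈ Finset.range k, β t) := by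
    intro k
    induction k with
    | zero => simp [Int.fract_fract, Fr]
    | succ k ih =>
      calc Fr (n+(k+1)) = Int.fract (Fr (n+k) + Int.fract (cc * del (n+k))) := by
            rw [show n+(k+1) = (n+k)+1 by omega, Fr_succ]
      _ = Int.fract (Int.fract (Fr n + ∑ t ∈ Finset.range k, β t) + β k) := by rw [ih]
      _ = Int.fract ((Fr n + ∑ t ∈ Finset.range k, β t) + β k) := fract_fract_add _ _
      _ = Int.fract (Fr n + ∑ t ∈ Finset.range (k+1), β t) := by
            rw [Finset.sum_range_succ, add_assoc]
  obtain ⟨k, hk1, hk5, hgrid⟩ := grid (fract_bounds n).1 (fract_bounds n).2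
  refine ⟨k, hk1, hk5, ?_⟩
  rw [hld1_iff]
  have hcc25 : (0.25:ℝ) < cc := lg2_gt
  have hsum : ∀ t ∈ Finset.range k, (0.4:ℝ) ≤ β t ∧ β t ≤ 0.41 := by
    intro t ht
    exact hδ t (by simp at ht; omega)
  have hk5R : (k:ℝ) ≤ 5 := by exact_mod_cast hk5
  have hkpos : (0:ℝ) ≤ k := by positivity
  have hslo : 0.4 * (k:ℝ) ≤ ∑ t ∈ Finset.range k, β t := by
    calc 0.4 * (k:ℝ) = ∑ _t ∈ Finset.range k, (0.4:ℝ) := by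
          rw [Finset.sum_const, Finset.card_range, nsmul_eq_mul]; ring
    _ ≤ _ := Finset.sum_le_sum (fun t ht => (hsum t ht).1)
  have hshi : ∑ t ∈ Finset.range k, β t ≤ 0.4 * (k:ℝ) + 0.05 := by
    have h1 : ∑ t ∈ Finset.range k, β t ≤ ∑ _t ∈ Finset.range k, (0.41:ℝ) :=
      Finset.sum_le_sum (fun t ht => (hsum t ht).2)
    rw [Finset.sum_const, Finset.card_range, nsmul_eq_mul] at h1
    linarith
  obtain ⟨e, he⟩ : ∃ e : ℝ, e = (∑ t ∈ Finset.range k, β t) - 0.4 * (k:ℝ) := ⟨_, rfl⟩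
  have he0 : 0 ≤ e := by rw [he]; linarith
  have he5 : e ≤ 0.05 := by rw [he]; linarith
  have hy0 : 0 ≤ Int.fract (Fr n + 0.4 * k) := Int.fract_nonneg _
  have hsplit : Fr n + ∑ t ∈ Finset.range k, β t = (Fr n + 0.4 * (k:ℝ)) + e := by
    rw [he]; ring
  have hrw : Fr (n+k) = Int.fract (Int.fract (Fr n + 0.4 * (k:ℝ)) + e) := by
    rw [hFr k, hsplit, fract_add_fract (Fr n + 0.4*(k:ℝ)) e,
      Int.fract_eq_self.mpr ⟨he0, by linarith⟩]
  rw [hrw, Int.fract_eq_self.mpr ⟨by linarith, by linarith⟩]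
  linarith

open Finset in
lemma card_eq_filter (P : ℕ → Prop) [DecidablePred P] (N : ℕ) :
    Nat.card {n : ℕ | 1 ≤ n ∧ n ≤ N ∧ P n} = ((Finset.Icc 1 N).filter P).card := by
  have h : {n : ℕ | 1 ≤ n ∧ n ≤ N ∧ P n} = ↑((Finset.Icc 1 N).filter P) := by
    ext n
    simp only [Finset.coe_filter, Finset.mem_Icc, Set.mem_setOf_eq]
    tauto
  rw [h, Nat.card_coe_set_eq, Set.ncard_coe_finset]

lemma Icc_split (a b : ℕ) (h : a ≤ b) :
    Finset.Icc 1 b = Finset.Icc 1 a ∪ Finset.Ioc a b := by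
  ext n; simp only [Finset.mem_Icc, Finset.mem_Ioc, Finset.mem_union]; omega

lemma filter_Icc_diff (P : ℕ → Prop) [DecidablePred P] {a b : ℕ} (h : a ≤ b) :
    ((Finset.Icc 1 b).filter P).card
      = ((Finset.Icc 1 a).filter P).card + ((Finset.Ioc a b).filter P).card := by
  rw [Icc_split a b h, Finset.filter_union, Finset.card_union_of_disjoint]
  apply Finset.disjoint_filter_filter
  rw [Finset.disjoint_left]
  intro n h1 h2
  simp only [Finset.mem_Icc] at h1
  simp only [Finset.mem_Ioc] at h2
  omega

lemma count_diff (P : ℕ → Prop) [DecidablePred P] {a b : ℕ} (h : a ≤ b) :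
    Nat.count P b = Nat.count P a + ((Finset.Ico a b).filter P).card := by
  rw [Nat.count_eq_card_filter_range, Nat.count_eq_card_filter_range]
  have hsplit : Finset.range b = Finset.range a ∪ Finset.Ico a b := by
    ext n; simp only [Finset.mem_range, Finset.mem_Ico, Finset.mem_union]; omega
  rw [hsplit, Finset.filter_union, Finset.card_union_of_disjoint]
  exact Finset.disjoint_filter_filter (Finset.disjoint_left.mpr
    (by intro n h1 h2; simp [Finset.mem_range] at h1; simp [Finset.mem_Ico] at h2; omega))

lemma natdiv_le (x k : ℕ) (hk : 0 < k) : ((x/k : ℕ):ℝ) ≤ (x:ℝ)/(k:ℝ) := by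
  have hkR : (0:ℝ) < (k:ℝ) := by exact_mod_cast hk
  rw [le_div_iff₀ hkR]
  exact_mod_cast Nat.div_mul_le_self x k

lemma natdiv_ge (x k : ℕ) (hk : 0 < k) : ((x:ℝ) - (k:ℝ) + 1)/(k:ℝ) ≤ ((x/k : ℕ):ℝ) := by
  have hkR : (0:ℝ) < (k:ℝ) := by exact_mod_cast hk
  rw [div_le_iff₀ hkR]
  have h2 : k * (x/k) + x % k = x := Nat.div_add_mod x k
  have h3 : x % k < k := Nat.mod_lt x hk
  have h2R : (k:ℝ) * ((x/k:ℕ):ℝ) + ((x%k:ℕ):ℝ) = (x:ℝ) := by exact_mod_cast h2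
  have h3R : ((x%k:ℕ):ℝ) ≤ (k:ℝ) - 1 := by
    have h4 : ((x%k:ℕ):ℝ) + 1 ≤ (k:ℝ) := by exact_mod_cast Nat.succ_le_of_lt h3
    linarith
  nlinarith [h2R, h3R]

open Classical in
lemma occ_lower {A m : ℕ}
    (hblock : ∀ n, A ≤ n → n ≤ A + m →
      (0.4:ℝ) ≤ Int.fract (cc * del n) ∧ Int.fract (cc * del n) ≤ 0.41) :
    m / 6 ≤ ((Finset.Ioc A (A+m)).filter (fun n => HasLeadingDigit (aseq n) 1)).card := by
  classical
  have hex : ∀ t : ℕ, ∃ q : ℕ, t < m/6 →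
      (q ∈ (Finset.Ioc A (A+m)).filter (fun n => HasLeadingDigit (aseq n) 1) ∧
        A + 6*t < q ∧ q ≤ A + 6*t + 5) := by
    intro t
    by_cases ht : t < m/6
    · have h6t : 6*t + 5 ≤ m := by
        have h1 : m/6 * 6 ≤ m := Nat.div_mul_le_self m 6
        have h2 : t + 1 ≤ m/6 := ht
        have h3 : (t+1) * 6 ≤ (m/6) * 6 := Nat.mul_le_mul_right 6 h2
        omega
      have hδ : ∀ t' : ℕ, t' ≤ 4 →
          (0.4:ℝ) ≤ Int.fract (cc * del (A + 6*t + t')) ∧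
            Int.fract (cc * del (A + 6*t + t')) ≤ 0.41 := by
        intro t' ht'
        exact hblock _ (by omega) (by omega)
      obtain ⟨k, hk1, hk5, hocc⟩ := visit hδ
      refine ⟨A + 6*t + k, fun _ => ⟨?_, by omega, by omega⟩⟩
      simp only [Finset.mem_filter, Finset.mem_Ioc]
      exact ⟨⟨by omega, by omega⟩, hocc⟩
    · exact ⟨0, fun h => absurd h ht⟩
  choose f hf using hex
  have := Finset.card_le_card_of_injOn f
    (fun t ht => (hf t (Finset.mem_range.mp ht)).1)
    (by
      intro t1 ht1 t2 ht2 heq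
      simp only [Finset.coe_range, Set.mem_Iio] at ht1 ht2
      obtain ⟨_, hb1, hb2⟩ := hf t1 ht1
      obtain ⟨_, hb3, hb4⟩ := hf t2 ht2
      by_contra hne
      rcases Nat.lt_or_ge t1 t2 with h | h
      · omega
      · have : t2 < t1 := by omega
        omega)
  rwa [Finset.card_range] at this

lemma p_infinite : {n : ℕ | 1 ≤ n ∧ HasLeadingDigit (aseq n) 1}.Infinite := by
  apply Set.infinite_of_not_bddAbove
  rintro ⟨B, hB⟩
  obtain ⟨A, hAj, hAbig, hblock⟩ := block_exists (B+1)
  have hδ : ∀ t' : ℕ, t' ≤ 4 →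
      (0.4:ℝ) ≤ Int.fract (cc * del (A + t')) ∧ Int.fract (cc * del (A + t')) ≤ 0.41 := by
    intro t' ht'
    have h32 : 4 ≤ A/32 := by
      have : 10^6 / 32 ≤ A / 32 := Nat.div_le_div_right hAbig
      norm_num at this
      omega
    exact hblock _ (by omega) (by omega)
  obtain ⟨k, hk1, hk5, hocc⟩ := visit hδ
  have hmem : A + k ∈ {n : ℕ | 1 ≤ n ∧ HasLeadingDigit (aseq n) 1} := ⟨by omega, hocc⟩
  have := hB hmem
  omega



lemma benfordP_one : benfordP 1 = cc := by norm_num [benfordP, cc]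

lemma benfordP_eq (d : ℕ) (hd : 1 ≤ d) :
    benfordP d = Real.logb 10 ((d:ℝ)+1) - Real.logb 10 d := by
  have hd0 : (0:ℝ) < d := by exact_mod_cast hd
  rw [benfordP, show (1 + 1/(d:ℝ)) = ((d:ℝ)+1)/d by field_simp,
    Real.logb_div (by linarith) (by linarith)]

lemma benfordP_nonneg (d : ℕ) (hd : 1 ≤ d) : 0 ≤ benfordP d := by
  apply Real.logb_nonneg (by norm_num)
  have hd0 : (0:ℝ) < d := by exact_mod_cast hd
  have : 0 ≤ 1/(d:ℝ) := by positivity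
  linarith

lemma benford_sum :
    benfordP 2 + benfordP 3 + benfordP 4 + benfordP 5 = Real.logb 10 3 := by
  rw [benfordP_eq 2 (by norm_num), benfordP_eq 3 (by norm_num),
    benfordP_eq 4 (by norm_num), benfordP_eq 5 (by norm_num)]
  have h62 : Real.logb 10 6 - Real.logb 10 2 = Real.logb 10 3 := by
    rw [← Real.logb_div (by norm_num) (by norm_num)]; norm_num
  push_cast
  norm_num
  linarith

lemma not_lbd : ¬ LocallyBenfordDistributed aseq 2 := by
  intro hL
  classical
  have hcc31 : cc < 0.31 := lg2_lt
  have hcc25 : (0.25:ℝ) < cc := lg2_gt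
  have hl3 : Real.logb 10 3 < 0.5 := lg3_lt
  have hl3n : (0:ℝ) ≤ Real.logb 10 3 := Real.logb_nonneg (by norm_num) (by norm_num)
  -- the four pair sequences converge
  have htend : ∀ d1 : ℕ, 2 ≤ d1 → d1 ≤ 5 →
      Tendsto (fun N : ℕ =>
          ((((Finset.Icc 1 N).filter
            (fun n => HasLeadingDigit (aseq n) 1 ∧ HasLeadingDigit (aseq (n+1)) d1)).card : ℝ))/N)
        atTop (nhds (benfordP 1 * benfordP d1)) := by
    intro d1 h2 h5
    have h := hL ![1, d1] (by
      intro i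
      fin_cases i
      · simp
      · simp; omega)
    have hprod : (∏ i : Fin 2, benfordP (![1, d1] i)) = benfordP 1 * benfordP d1 := by
      rw [Fin.prod_univ_two]
      simp
    rw [hprod] at h
    have hcardeq : ∀ N : ℕ, Nat.card {n : ℕ | 1 ≤ n ∧ n ≤ N ∧
        ∀ i : Fin 2, HasLeadingDigit (aseq (n + (i:ℕ))) (![1, d1] i)}
        = ((Finset.Icc 1 N).filter
            (fun n => HasLeadingDigit (aseq n) 1 ∧ HasLeadingDigit (aseq (n+1)) d1)).card := by
      intro N
      have hsets : {n : ℕ | 1 ≤ n ∧ n ≤ N ∧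
          ∀ i : Fin 2, HasLeadingDigit (aseq (n + (i:ℕ))) (![1, d1] i)}
          = {n : ℕ | 1 ≤ n ∧ n ≤ N ∧
            (HasLeadingDigit (aseq n) 1 ∧ HasLeadingDigit (aseq (n+1)) d1)} := by
        ext n
        simp only [Set.mem_setOf_eq, Fin.forall_fin_two, Matrix.cons_val_zero,
          Matrix.cons_val_one, Matrix.head_cons, Fin.val_zero, Fin.val_one, add_zero,
          Nat.cast_ofNat, Fin.isValue]
      rw [hsets, card_eq_filter]
    simp only [hcardeq] at h
    exact h
  -- key total bound
  have hkey : benfordP 1 * benfordP 2 + benfordP 1 * benfordP 3 +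
      benfordP 1 * benfordP 4 + benfordP 1 * benfordP 5 ≤ 0.155 := by
    have h1 : benfordP 1 * benfordP 2 + benfordP 1 * benfordP 3 +
        benfordP 1 * benfordP 4 + benfordP 1 * benfordP 5
        = benfordP 1 * (benfordP 2 + benfordP 3 + benfordP 4 + benfordP 5) := by ring
    rw [h1, benford_sum, benfordP_one]
    nlinarith
  -- ε-bounds
  have heps : ∀ d1 : ℕ, 2 ≤ d1 → d1 ≤ 5 → ∃ N0 : ℕ, ∀ N : ℕ, N0 ≤ N →
      |((((Finset.Icc 1 N).filter
          (fun n => HasLeadingDigit (aseq n) 1 ∧ HasLeadingDigit (aseq (n+1)) d1)).card : ℝ))/N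
        - benfordP 1 * benfordP d1| < 1/100000 := by
    intro d1 h2 h5
    obtain ⟨N0, hN0⟩ := Metric.tendsto_atTop.mp (htend d1 h2 h5) (1/100000) (by norm_num)
    exact ⟨N0, fun N hN => by have := hN0 N hN; rwa [Real.dist_eq] at this⟩
  obtain ⟨N2, hN2⟩ := heps 2 (by norm_num) (by norm_num)
  obtain ⟨N3, hN3⟩ := heps 3 (by norm_num) (by norm_num)
  obtain ⟨N4, hN4⟩ := heps 4 (by norm_num) (by norm_num)
  obtain ⟨N5, hN5⟩ := heps 5 (by norm_num) (by norm_num)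
  -- get a block
  obtain ⟨A, hAj, hAbig, hblock⟩ := block_exists (max (max N2 N3) (max N4 N5))
  set m : ℕ := A/32 with hm
  -- occurrence lower bound
  have hocc := occ_lower (A := A) (m := m) (fun n h1 h2 => hblock n h1 h2)
  -- covering
  have hcover : ((Finset.Ioc A (A+m)).filter (fun n => HasLeadingDigit (aseq n) 1)).card ≤
      ((Finset.Ioc A (A+m)).filter (fun n => HasLeadingDigit (aseq n) 1 ∧ HasLeadingDigit (aseq (n+1)) 2)).card +
      ((Finset.Ioc A (A+m)).filter (fun n => HasLeadingDigit (aseq n) 1 ∧ HasLeadingDigit (aseq (n+1)) 3)).card +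
      ((Finset.Ioc A (A+m)).filter (fun n => HasLeadingDigit (aseq n) 1 ∧ HasLeadingDigit (aseq (n+1)) 4)).card +
      ((Finset.Ioc A (A+m)).filter (fun n => HasLeadingDigit (aseq n) 1 ∧ HasLeadingDigit (aseq (n+1)) 5)).card := by
    have hsub : (Finset.Ioc A (A+m)).filter (fun n => HasLeadingDigit (aseq n) 1) ⊆
        ((Finset.Ioc A (A+m)).filter (fun n => HasLeadingDigit (aseq n) 1 ∧ HasLeadingDigit (aseq (n+1)) 2)) ∪
        ((Finset.Ioc A (A+m)).filter (fun n => HasLeadingDigit (aseq n) 1 ∧ HasLeadingDigit (aseq (n+1)) 3)) ∪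
        ((Finset.Ioc A (A+m)).filter (fun n => HasLeadingDigit (aseq n) 1 ∧ HasLeadingDigit (aseq (n+1)) 4)) ∪
        ((Finset.Ioc A (A+m)).filter (fun n => HasLeadingDigit (aseq n) 1 ∧ HasLeadingDigit (aseq (n+1)) 5)) := by
      intro n hn
      simp only [Finset.mem_filter, Finset.mem_Ioc] at hn
      obtain ⟨⟨hn1, hn2⟩, hn3⟩ := hn
      obtain ⟨hδ1, hδ2⟩ := hblock n (by omega) hn2
      obtain ⟨hF1, hF2⟩ := pair_step hδ1 hδ2 hn3
      obtain ⟨d1, hd2, hd5, hd⟩ := exists_digit25 hF1 hF2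
      simp only [Finset.mem_union, Finset.mem_filter, Finset.mem_Ioc]
      interval_cases d1
      · exact Or.inl (Or.inl (Or.inl ⟨⟨hn1, hn2⟩, hn3, hd⟩))
      · exact Or.inl (Or.inl (Or.inr ⟨⟨hn1, hn2⟩, hn3, hd⟩))
      · exact Or.inl (Or.inr ⟨⟨hn1, hn2⟩, hn3, hd⟩)
      · exact Or.inr ⟨⟨hn1, hn2⟩, hn3, hd⟩
    calc ((Finset.Ioc A (A+m)).filter (fun n => HasLeadingDigit (aseq n) 1)).card
        ≤ _ := Finset.card_le_card hsub
    _ ≤ _ := by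
        apply le_trans (Finset.card_union_le _ _)
        have := Finset.card_union_le
          (((Finset.Ioc A (A+m)).filter (fun n => HasLeadingDigit (aseq n) 1 ∧ HasLeadingDigit (aseq (n+1)) 2)) ∪
           ((Finset.Ioc A (A+m)).filter (fun n => HasLeadingDigit (aseq n) 1 ∧ HasLeadingDigit (aseq (n+1)) 3)))
          ((Finset.Ioc A (A+m)).filter (fun n => HasLeadingDigit (aseq n) 1 ∧ HasLeadingDigit (aseq (n+1)) 4))
        have h2 := Finset.card_union_le
          ((Finset.Ioc A (A+m)).filter (fun n => HasLeadingDigit (aseq n) 1 ∧ HasLeadingDigit (aseq (n+1)) 2))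
          ((Finset.Ioc A (A+m)).filter (fun n => HasLeadingDigit (aseq n) 1 ∧ HasLeadingDigit (aseq (n+1)) 3))
        omega
  -- per-digit real bound on the increment
  have hdiff : ∀ d1 : ℕ, 2 ≤ d1 → d1 ≤ 5 →
      (∀ N : ℕ, (max (max N2 N3) (max N4 N5)) ≤ N →
        |((((Finset.Icc 1 N).filter
          (fun n => HasLeadingDigit (aseq n) 1 ∧ HasLeadingDigit (aseq (n+1)) d1)).card : ℝ))/N
          - benfordP 1 * benfordP d1| < 1/100000) →
      (((Finset.Ioc A (A+m)).filter
          (fun n => HasLeadingDigit (aseq n) 1 ∧ HasLeadingDigit (aseq (n+1)) d1)).card : ℝ)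
        ≤ (benfordP 1 * benfordP d1) * m + (1/100000) * (2*(A:ℝ) + m) := by
    intro d1 h2 h5 hbound
    have hAm : A ≤ A + m := by omega
    have hsplit := filter_Icc_diff
      (fun n => HasLeadingDigit (aseq n) 1 ∧ HasLeadingDigit (aseq (n+1)) d1) hAm
    have hA0 : (0:ℝ) < A := by
      have : (0:ℕ) < A := by omega
      exact_mod_cast this
    have hAm0 : (0:ℝ) < (A:ℝ) + (m:ℝ) := by
      have : (0:ℝ) ≤ (m:ℝ) := by positivity
      linarith
    have hb1 := hbound A hAj
    have hb2 := hbound (A+m) (by omega)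
    rw [abs_lt] at hb1 hb2
    have hc1 : (((Finset.Icc 1 A).filter
        (fun n => HasLeadingDigit (aseq n) 1 ∧ HasLeadingDigit (aseq (n+1)) d1)).card : ℝ)
        ≥ (benfordP 1 * benfordP d1) * A - (1/100000) * A := by
      have h := hb1.1
      have h' : benfordP 1 * benfordP d1 - 1/100000 < (((Finset.Icc 1 A).filter
          (fun n => HasLeadingDigit (aseq n) 1 ∧ HasLeadingDigit (aseq (n+1)) d1)).card : ℝ)/A := by
        linarith
      rw [lt_div_iff₀ hA0] at h'
      nlinarith [h']
    have hc2 : (((Finset.Icc 1 (A+m)).filter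
        (fun n => HasLeadingDigit (aseq n) 1 ∧ HasLeadingDigit (aseq (n+1)) d1)).card : ℝ)
        ≤ (benfordP 1 * benfordP d1) * ((A:ℝ)+m) + (1/100000) * ((A:ℝ)+m) := by
      have h := hb2.2
      have hcast : (((A+m:ℕ)):ℝ) = (A:ℝ) + m := by push_cast; ring
      rw [hcast] at h
      have h' : (((Finset.Icc 1 (A+m)).filter
          (fun n => HasLeadingDigit (aseq n) 1 ∧ HasLeadingDigit (aseq (n+1)) d1)).card : ℝ)/((A:ℝ)+(m:ℝ))
          < benfordP 1 * benfordP d1 + 1/100000 := by linarith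
      rw [div_lt_iff₀ hAm0] at h'
      nlinarith [h']
    have hcast2 : (((Finset.Icc 1 (A+m)).filter
        (fun n => HasLeadingDigit (aseq n) 1 ∧ HasLeadingDigit (aseq (n+1)) d1)).card : ℝ)
        = (((Finset.Icc 1 A).filter
          (fun n => HasLeadingDigit (aseq n) 1 ∧ HasLeadingDigit (aseq (n+1)) d1)).card : ℝ)
          + (((Finset.Ioc A (A+m)).filter
          (fun n => HasLeadingDigit (aseq n) 1 ∧ HasLeadingDigit (aseq (n+1)) d1)).card : ℝ) := by
      exact_mod_cast hsplit
    nlinarith [hc1, hc2, hcast2]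
  have hd2 := hdiff 2 (by norm_num) (by norm_num) (fun N hN => hN2 N (by omega))
  have hd3 := hdiff 3 (by norm_num) (by norm_num) (fun N hN => hN3 N (by omega))
  have hd4 := hdiff 4 (by norm_num) (by norm_num) (fun N hN => hN4 N (by omega))
  have hd5 := hdiff 5 (by norm_num) (by norm_num) (fun N hN => hN5 N (by omega))
  -- final arithmetic
  have hoccR : ((m/6 : ℕ):ℝ) ≤ ((((Finset.Ioc A (A+m)).filter
      (fun n => HasLeadingDigit (aseq n) 1)).card : ℝ)) := by exact_mod_cast hocc
  have hcoverR : ((((Finset.Ioc A (A+m)).filter (fun n => HasLeadingDigit (aseq n) 1)).card : ℝ)) ≤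
      (((Finset.Ioc A (A+m)).filter (fun n => HasLeadingDigit (aseq n) 1 ∧ HasLeadingDigit (aseq (n+1)) 2)).card : ℝ) +
      (((Finset.Ioc A (A+m)).filter (fun n => HasLeadingDigit (aseq n) 1 ∧ HasLeadingDigit (aseq (n+1)) 3)).card : ℝ) +
      (((Finset.Ioc A (A+m)).filter (fun n => HasLeadingDigit (aseq n) 1 ∧ HasLeadingDigit (aseq (n+1)) 4)).card : ℝ) +
      (((Finset.Ioc A (A+m)).filter (fun n => HasLeadingDigit (aseq n) 1 ∧ HasLeadingDigit (aseq (n+1)) 5)).card : ℝ) := by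
    exact_mod_cast hcover
  have hm6 : ((m:ℝ) - 6 + 1)/6 ≤ ((m/6 : ℕ):ℝ) := natdiv_ge m 6 (by norm_num)
  have hm32lo : ((A:ℝ) - 32 + 1)/32 ≤ (m:ℝ) := natdiv_ge A 32 (by norm_num)
  have hm32hi : (m:ℝ) ≤ (A:ℝ)/32 := natdiv_le A 32 (by norm_num)
  have hA6 : (1000000:ℝ) ≤ (A:ℝ) := by exact_mod_cast hAbig
  have hm0 : (0:ℝ) ≤ (m:ℝ) := by positivity
  -- product bound
  have hprodm : (benfordP 1 * benfordP 2) * (m:ℝ) + (benfordP 1 * benfordP 3) * m +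
      (benfordP 1 * benfordP 4) * m + (benfordP 1 * benfordP 5) * m ≤ 0.155 * m := by
    nlinarith [hkey, hm0, mul_le_mul_of_nonneg_right hkey hm0]
  linarith [hoccR, hcoverR, hd2, hd3, hd4, hd5, hm6, hm32lo, hm32hi, hA6, hprodm]



def pOcc (n : ℕ) : Prop := 1 ≤ n ∧ HasLeadingDigit (aseq n) 1

noncomputable instance : DecidablePred pOcc := fun _ => Classical.dec _

lemma pOcc_infinite : (setOf pOcc).Infinite := p_infinite

lemma wt_in_block {A m : ℕ} (hAbig : 10^6 ≤ A)
    (hblock : ∀ n, A ≤ n → n ≤ A + m →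
      (0.4:ℝ) ≤ Int.fract (cc * del n) ∧ Int.fract (cc * del n) ≤ 0.41)
    {t : ℕ} (hlo : A ≤ Nat.nth pOcc t) (hhi : Nat.nth pOcc t + 5 ≤ A + m) :
    2 ≤ Nat.nth pOcc (t+1) - Nat.nth pOcc t ∧
      Nat.nth pOcc (t+1) - Nat.nth pOcc t ≤ 5 := by
  have hinf := pOcc_infinite
  have hpn : pOcc (Nat.nth pOcc t) := Nat.nth_mem_of_infinite hinf t
  obtain ⟨n, hn⟩ : ∃ n, n = Nat.nth pOcc t := ⟨_, rfl⟩
  rw [← hn] at hlo hhi hpn ⊢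
  have hδ : ∀ t' : ℕ, t' ≤ 4 →
      (0.4:ℝ) ≤ Int.fract (cc * del (n + t')) ∧ Int.fract (cc * del (n + t')) ≤ 0.41 :=
    fun t' ht' => hblock _ (by omega) (by omega)
  obtain ⟨k, hk1, hk5, hocc⟩ := visit hδ
  have hq : pOcc (n+k) := ⟨by omega, hocc⟩
  have hnext_le : Nat.nth pOcc (t+1) ≤ n + k := by
    have h1 : Nat.nth pOcc t < n + k := by omega
    have h2 : t < Nat.count pOcc (n+k) := (Nat.lt_nth_iff_count_lt hinf).mpr h1
    calc Nat.nth pOcc (t+1) ≤ Nat.nth pOcc (Nat.count pOcc (n+k)) :=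
          Nat.nth_monotone hinf h2
    _ = n + k := Nat.nth_count hq
  have hno : ¬ pOcc (n+1) := by
    intro hp1
    have hδn := hblock n (by omega) (by omega)
    have hF := pair_step hδn.1 hδn.2 hpn.2
    exact not_hld1 hF.1 hp1.2
  have hgt : n < Nat.nth pOcc (t+1) := by
    rw [hn]
    exact (Nat.nth_lt_nth hinf).mpr (by omega)
  have hne : Nat.nth pOcc (t+1) ≠ n+1 := by
    intro he
    exact hno (he ▸ Nat.nth_mem_of_infinite hinf (t+1))
  omega

lemma not_bwt : ¬ BenfordWaitingTimes aseq := by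
  intro hB
  classical
  have hinf := pOcc_infinite
  have hcc31 : cc < 0.31 := lg2_lt
  have hcc25 : (0.25:ℝ) < cc := lg2_gt
  have hb1 : benfordP 1 = cc := benfordP_one
  have htk : ∀ k : ℕ, 1 ≤ k →
      Tendsto (fun N : ℕ => (((Finset.Icc 1 N).filter
        (fun i => waitingTime aseq 1 i = k)).card : ℝ)/N) atTop
        (nhds (benfordP 1 * (1 - benfordP 1)^(k-1))) := by
    intro k hk
    have h := hB 1 le_rfl (by norm_num) k hk
    have hcardeq : ∀ N : ℕ, Nat.card {i : ℕ | 1 ≤ i ∧ i ≤ N ∧ waitingTime aseq 1 i = k}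
        = ((Finset.Icc 1 N).filter (fun i => waitingTime aseq 1 i = k)).card :=
      fun N => card_eq_filter _ N
    simp only [hcardeq] at h
    exact h
  have heps : ∀ k : ℕ, 1 ≤ k → ∃ K : ℕ, ∀ N : ℕ, K ≤ N →
      |(((Finset.Icc 1 N).filter (fun i => waitingTime aseq 1 i = k)).card : ℝ)/N
        - benfordP 1 * (1 - benfordP 1)^(k-1)| < 1/10000 := by
    intro k hk
    obtain ⟨K, hK⟩ := Metric.tendsto_atTop.mp (htk k hk) (1/10000) (by norm_num)
    exact ⟨K, fun N hN => by have := hK N hN; rwa [Real.dist_eq] at this⟩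
  obtain ⟨K2, hK2⟩ := heps 2 (by norm_num)
  obtain ⟨K3, hK3⟩ := heps 3 (by norm_num)
  obtain ⟨K4, hK4⟩ := heps 4 (by norm_num)
  obtain ⟨K5, hK5⟩ := heps 5 (by norm_num)
  obtain ⟨KK, hKKdef⟩ : ∃ KK : ℕ, KK = max (max K2 K3) (max K4 K5) + 1 := ⟨_, rfl⟩
  obtain ⟨A, hAj, hAbig, hblock⟩ := block_exists (Nat.nth pOcc KK)
  obtain ⟨m, hmdef⟩ : ∃ m : ℕ, m = A/32 := ⟨_, rfl⟩
  have hm10 : 10 ≤ m := by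
    have : 10^6/32 ≤ A/32 := Nat.div_le_div_right hAbig
    norm_num at this; omega
  obtain ⟨M1, hM1⟩ : ∃ M1, M1 = Nat.count pOcc A := ⟨_, rfl⟩
  obtain ⟨M2, hM2⟩ : ∃ M2, M2 = Nat.count pOcc (A + (m-5) + 1) := ⟨_, rfl⟩
  have hM12 : M1 ≤ M2 := by
    rw [hM1, hM2]; exact Nat.count_monotone _ (by omega)
  have hM1KK : KK ≤ M1 := by
    rw [hM1]
    calc KK = Nat.count pOcc (Nat.nth pOcc KK) := (Nat.count_nth_of_infinite hinf KK).symm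
    _ ≤ Nat.count pOcc A := Nat.count_monotone _ hAj
  have hM2le : M2 ≤ A + m := by
    rw [hM2]
    have := Nat.count_le (p := pOcc) (n := A + (m-5) + 1)
    omega
  have hsplitc : M2 = M1 + ((Finset.Ico A (A+(m-5)+1)).filter pOcc).card := by
    rw [hM1, hM2]; exact count_diff pOcc (by omega)
  have hocc : (m-5)/6 ≤ ((Finset.Ico A (A+(m-5)+1)).filter pOcc).card := by
    have h1 := occ_lower (A := A) (m := m-5) (fun n hn1 hn2 => hblock n hn1 (by omega))
    refine le_trans h1 (Finset.card_le_card ?_)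
    intro n hn
    simp only [Finset.mem_filter, Finset.mem_Ioc] at hn
    simp only [Finset.mem_filter, Finset.mem_Ico]
    exact ⟨⟨by omega, by omega⟩, ⟨by omega, hn.2⟩⟩
  -- waiting times of indices in the block are in [2,5]
  have hwt : ∀ i, M1 < i → i ≤ M2 → 2 ≤ waitingTime aseq 1 i ∧ waitingTime aseq 1 i ≤ 5 := by
    intro i hi1 hi2
    obtain ⟨t, rfl⟩ : ∃ t, i = t + 1 := ⟨i-1, by omega⟩
    have hlo : A ≤ Nat.nth pOcc t := by
      apply (Nat.count_le_iff_le_nth hinf).mp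
      rw [← hM1]; omega
    have hhi : Nat.nth pOcc t < A + (m-5) + 1 := by
      apply (Nat.lt_nth_iff_count_lt hinf).mp
      rw [← hM2]; omega
    have hw := wt_in_block hAbig hblock hlo (by omega)
    have heq : waitingTime aseq 1 (t+1) = Nat.nth pOcc (t+1) - Nat.nth pOcc t := by
      show Nat.nth pOcc (t+1) - Nat.nth pOcc ((t+1)-1) = _
      norm_num
    rw [heq]
    exact hw
  -- covering
  have hcover : M2 - M1 ≤
      ((Finset.Ioc M1 M2).filter (fun i => waitingTime aseq 1 i = 2)).card +
      ((Finset.Ioc M1 M2).filter (fun i => waitingTime aseq 1 i = 3)).card +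
      ((Finset.Ioc M1 M2).filter (fun i => waitingTime aseq 1 i = 4)).card +
      ((Finset.Ioc M1 M2).filter (fun i => waitingTime aseq 1 i = 5)).card := by
    have hsub : Finset.Ioc M1 M2 ⊆
        ((Finset.Ioc M1 M2).filter (fun i => waitingTime aseq 1 i = 2)) ∪
        ((Finset.Ioc M1 M2).filter (fun i => waitingTime aseq 1 i = 3)) ∪
        ((Finset.Ioc M1 M2).filter (fun i => waitingTime aseq 1 i = 4)) ∪
        ((Finset.Ioc M1 M2).filter (fun i => waitingTime aseq 1 i = 5)) := by
      intro i hi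
      have him := hi
      simp only [Finset.mem_Ioc] at him
      have h25 := hwt i him.1 him.2
      have hcase : waitingTime aseq 1 i = 2 ∨ waitingTime aseq 1 i = 3 ∨
          waitingTime aseq 1 i = 4 ∨ waitingTime aseq 1 i = 5 := by omega
      simp only [Finset.mem_union, Finset.mem_filter]
      rcases hcase with h|h|h|h
      · exact Or.inl (Or.inl (Or.inl ⟨hi, h⟩))
      · exact Or.inl (Or.inl (Or.inr ⟨hi, h⟩))
      · exact Or.inl (Or.inr ⟨hi, h⟩)
      · exact Or.inr ⟨hi, h⟩
    have hc := Finset.card_le_card hsub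
    rw [Nat.card_Ioc] at hc
    have hu1 := Finset.card_union_le
      (((Finset.Ioc M1 M2).filter (fun i => waitingTime aseq 1 i = 2)) ∪
       ((Finset.Ioc M1 M2).filter (fun i => waitingTime aseq 1 i = 3)) ∪
       ((Finset.Ioc M1 M2).filter (fun i => waitingTime aseq 1 i = 4)))
      ((Finset.Ioc M1 M2).filter (fun i => waitingTime aseq 1 i = 5))
    have hu2 := Finset.card_union_le
      (((Finset.Ioc M1 M2).filter (fun i => waitingTime aseq 1 i = 2)) ∪
       ((Finset.Ioc M1 M2).filter (fun i => waitingTime aseq 1 i = 3)))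
      ((Finset.Ioc M1 M2).filter (fun i => waitingTime aseq 1 i = 4))
    have hu3 := Finset.card_union_le
      ((Finset.Ioc M1 M2).filter (fun i => waitingTime aseq 1 i = 2))
      ((Finset.Ioc M1 M2).filter (fun i => waitingTime aseq 1 i = 3))
    omega
  -- per-k real bound on the increment
  have hM1pos : (0:ℝ) < M1 := by
    have : 1 ≤ M1 := by omega
    exact_mod_cast this
  have hM2pos : (0:ℝ) < M2 := by
    have : 1 ≤ M2 := by omega
    exact_mod_cast this
  have hdiffs : ∀ (k : ℕ) (K : ℕ),
      (∀ N : ℕ, K ≤ N →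
        |(((Finset.Icc 1 N).filter (fun i => waitingTime aseq 1 i = k)).card : ℝ)/N
          - benfordP 1 * (1 - benfordP 1)^(k-1)| < 1/10000) → K ≤ M1 →
      (((Finset.Ioc M1 M2).filter (fun i => waitingTime aseq 1 i = k)).card : ℝ)
        ≤ (benfordP 1 * (1 - benfordP 1)^(k-1)) * ((M2:ℝ) - M1)
          + (1/10000) * ((M1:ℝ) + M2) := by
    intro k K hbound hKM1
    have hsplit := filter_Icc_diff (fun i => waitingTime aseq 1 i = k) hM12
    have hb1' := hbound M1 hKM1
    have hb2' := hbound M2 (le_trans hKM1 hM12)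
    rw [abs_lt] at hb1' hb2'
    have hc1 : (((Finset.Icc 1 M1).filter (fun i => waitingTime aseq 1 i = k)).card : ℝ)
        ≥ (benfordP 1 * (1 - benfordP 1)^(k-1)) * M1 - (1/10000) * M1 := by
      have h' : benfordP 1 * (1 - benfordP 1)^(k-1) - 1/10000 <
          (((Finset.Icc 1 M1).filter (fun i => waitingTime aseq 1 i = k)).card : ℝ)/M1 := by
        linarith [hb1'.1]
      rw [lt_div_iff₀ hM1pos] at h'
      nlinarith [h']
    have hc2 : (((Finset.Icc 1 M2).filter (fun i => waitingTime aseq 1 i = k)).card : ℝ)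
        ≤ (benfordP 1 * (1 - benfordP 1)^(k-1)) * M2 + (1/10000) * M2 := by
      have h' : (((Finset.Icc 1 M2).filter (fun i => waitingTime aseq 1 i = k)).card : ℝ)/M2
          < benfordP 1 * (1 - benfordP 1)^(k-1) + 1/10000 := by
        linarith [hb2'.2]
      rw [div_lt_iff₀ hM2pos] at h'
      nlinarith [h']
    have hcast2 : (((Finset.Icc 1 M2).filter (fun i => waitingTime aseq 1 i = k)).card : ℝ)
        = (((Finset.Icc 1 M1).filter (fun i => waitingTime aseq 1 i = k)).card : ℝ)
          + (((Finset.Ioc M1 M2).filter (fun i => waitingTime aseq 1 i = k)).card : ℝ) := by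
      exact_mod_cast hsplit
    nlinarith [hc1, hc2, hcast2]
  have hd2 := hdiffs 2 K2 hK2 (by omega)
  have hd3 := hdiffs 3 K3 hK3 (by omega)
  have hd4 := hdiffs 4 K4 hK4 (by omega)
  have hd5 := hdiffs 5 K5 hK5 (by omega)
  -- geometric sum bound
  have h75 : 1 - cc ≤ 0.75 := by linarith
  have hnn : (0:ℝ) ≤ 1 - cc := by linarith
  have hp2 : (1-cc)^2 ≤ 0.5625 := by nlinarith
  have hp3 : (1-cc)^3 ≤ 0.421875 := by nlinarith
  have hp4 : (1-cc)^4 ≤ 0.31640625 := by nlinarith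
  have hm1b : cc*(1-cc)^1 ≤ 0.2325 := by nlinarith
  have hm2b : cc*(1-cc)^2 ≤ 0.174375 := by
    have := mul_le_mul hcc31.le hp2 (pow_nonneg hnn 2) (by norm_num)
    linarith
  have hm3b : cc*(1-cc)^3 ≤ 0.13078125 := by
    have := mul_le_mul hcc31.le hp3 (pow_nonneg hnn 3) (by norm_num)
    linarith
  have hm4b : cc*(1-cc)^4 ≤ 0.0980859375 := by
    have := mul_le_mul hcc31.le hp4 (pow_nonneg hnn 4) (by norm_num)
    linarith
  have hqsum : benfordP 1 * (1 - benfordP 1)^(2-1) + benfordP 1 * (1 - benfordP 1)^(3-1)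
      + benfordP 1 * (1 - benfordP 1)^(4-1) + benfordP 1 * (1 - benfordP 1)^(5-1) ≤ 0.64 := by
    rw [hb1]
    norm_num
    nlinarith [hm1b, hm2b, hm3b, hm4b]
  -- cast facts
  have hcoverR : (M2:ℝ) - M1 ≤
      (((Finset.Ioc M1 M2).filter (fun i => waitingTime aseq 1 i = 2)).card : ℝ) +
      (((Finset.Ioc M1 M2).filter (fun i => waitingTime aseq 1 i = 3)).card : ℝ) +
      (((Finset.Ioc M1 M2).filter (fun i => waitingTime aseq 1 i = 4)).card : ℝ) +
      (((Finset.Ioc M1 M2).filter (fun i => waitingTime aseq 1 i = 5)).card : ℝ) := by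
    have h1 : ((M2 - M1 : ℕ):ℝ) = (M2:ℝ) - M1 := by
      have : M1 ≤ M2 := hM12
      push_cast [Nat.cast_sub this]
      ring
    rw [← h1]
    exact_mod_cast hcover
  have hoccR : ((m:ℝ) - 10)/6 ≤ (M2:ℝ) - M1 := by
    have h0 : ((M2 - M1:ℕ):ℝ) = (M2:ℝ) - M1 := by
      push_cast [Nat.cast_sub hM12]; ring
    have h1 : (m-5)/6 ≤ M2 - M1 := by omega
    have h2 : (((m-5)/6 : ℕ):ℝ) ≤ ((M2 - M1:ℕ):ℝ) := by exact_mod_cast h1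
    have h3 := natdiv_ge (m-5) 6 (by norm_num)
    have h4 : ((m-5:ℕ):ℝ) = (m:ℝ) - 5 := by
      push_cast [Nat.cast_sub (show 5 ≤ m by omega)]; ring
    rw [h4] at h3
    rw [h0] at h2
    linarith
  have hmlo : ((A:ℝ) - 32 + 1)/32 ≤ (m:ℝ) := by rw [hmdef]; exact natdiv_ge A 32 (by norm_num)
  have hmhi : (m:ℝ) ≤ (A:ℝ)/32 := by rw [hmdef]; exact natdiv_le A 32 (by norm_num)
  have hA6 : (1000000:ℝ) ≤ (A:ℝ) := by exact_mod_cast hAbig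
  have hM2R : (M2:ℝ) ≤ (A:ℝ) + m := by exact_mod_cast hM2le
  have hM1M2R : (M1:ℝ) ≤ (M2:ℝ) := by exact_mod_cast hM12
  -- product bound
  have hocc0 : (0:ℝ) ≤ (M2:ℝ) - M1 := by linarith
  have hprodq : (benfordP 1 * (1 - benfordP 1)^(2-1)) * ((M2:ℝ) - M1)
      + (benfordP 1 * (1 - benfordP 1)^(3-1)) * ((M2:ℝ) - M1)
      + (benfordP 1 * (1 - benfordP 1)^(4-1)) * ((M2:ℝ) - M1)
      + (benfordP 1 * (1 - benfordP 1)^(5-1)) * ((M2:ℝ) - M1)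
      ≤ 0.64 * ((M2:ℝ) - M1) := by
    nlinarith [mul_le_mul_of_nonneg_right hqsum hocc0]
  linarith [hcoverR, hd2, hd3, hd4, hd5, hoccR, hmlo, hmhi, hA6, hM2R, hM1M2R, hprodq]

end SmoothMersenneAux

/-- The sequence `{2^{n log n}}` is not locally Benford distributed of order 2 and does
not have Benford distributed waiting times. -/
theorem smooth_mersenne_not_locallyBenford :
    ¬ LocallyBenfordDistributed (fun n : ℕ => (2 : ℝ) ^ ((n : ℝ) * Real.log n)) 2 ∧
      ¬ BenfordWaitingTimes (fun n : ℕ => (2 : ℝ) ^ ((n : ℝ) * Real.log n)) := by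
  constructor
  · exact not_lbd
  · exact not_bwt
end
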